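/- arXiv:1709.10505 — 8 statements merged into one kernel-verified Lean document; each statement's English description precedes it below -/
import Mathlib

section
/- Fix x ∈ ℝ. Assume f is bounded on ℝ and continuous at x, and ∫ K(u)² du < ∞. If (h_n) is a sequence of bandwidths with h_n → 0 and n h_n → ∞, then Var(f̂_{n,h_n}(x)) = (1/(n h_n)) f(x) ∫ K(u)² du + o(1/(n h_n)) as n → ∞. -/
open MeasureTheory ProbabilityTheory Filter Asymptotics Topology
open scoped ENNReal NNReal

/-- The kernel density estimator `f̂_{n,h}(x) = (1/(nh)) Σ_{i<n} K((x - X_i)/h)`. -/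
noncomputable def kde {Ω : Type*} (K : ℝ → ℝ) (X : ℕ → Ω → ℝ)
    (n : ℕ) (h x : ℝ) (ω : Ω) : ℝ :=
  (1 / (n * h)) * ∑ i ∈ Finset.range n, K ((x - X i ω) / h)

lemma moment_aux {Ω : Type*} [MeasurableSpace Ω] (P : Measure Ω) [IsProbabilityMeasure P]
    (Z : Ω → ℝ) (hZ : Measurable Z) (f : ℝ → ℝ) (hfmeas : Measurable f)
    (hfnonneg : ∀ y, 0 ≤ f y)
    (hlaw : Measure.map Z P = volume.withDensity fun y => ENNReal.ofReal (f y))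
    (g : ℝ → ℝ) (hg : Measurable g) (x : ℝ) {h : ℝ} (hh : 0 < h) :
    ∫ ω, g ((x - Z ω) / h) ∂P = h * ∫ u, g u * f (x - h * u) := by
  have hmeas : Measurable fun y : ℝ => g ((x - y) / h) :=
    hg.comp ((measurable_const.sub measurable_id).div_const h)
  have h1 : ∫ ω, g ((x - Z ω) / h) ∂P = ∫ y, g ((x - y) / h) ∂(Measure.map Z P) :=
    (integral_map hZ.aemeasurable hmeas.aestronglyMeasurable).symm
  rw [h1, hlaw]
  have h2 : (volume.withDensity fun y => ENNReal.ofReal (f y))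
      = volume.withDensity fun y => ((f y).toNNReal : ℝ≥0∞) := rfl
  have hfm : Measurable fun y : ℝ => (f y).toNNReal :=
    continuous_real_toNNReal.measurable.comp hfmeas
  rw [h2, integral_withDensity_eq_integral_smul hfm (fun y => g ((x - y) / h))]
  have h3 : ∀ y : ℝ, (f y).toNNReal • g ((x - y) / h) = f y * g ((x - y) / h) := by
    intro y
    simp [NNReal.smul_def, smul_eq_mul, Real.coe_toNNReal _ (hfnonneg y)]
  simp_rw [h3]
  have h4 : ∫ y, f y * g ((x - y) / h)
      = ∫ z, f (x - z) * g ((x - (x - z)) / h) :=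
    (integral_sub_left_eq_self (fun y => f y * g ((x - y) / h)) volume x).symm
  rw [h4]
  have h5 : ∀ z : ℝ, f (x - z) * g ((x - (x - z)) / h)
      = (fun u => g u * f (x - h * u)) (h⁻¹ * z) := by
    intro z
    have hne : h ≠ 0 := hh.ne'
    simp only []
    rw [mul_comm]
    congr 1
    · congr 1
      field_simp
      ring
    · congr 1
      field_simp
  simp_rw [h5]
  rw [MeasureTheory.Measure.integral_comp_mul_left (fun u => g u * f (x - h * u)) h⁻¹]
  rw [inv_inv, abs_of_pos hh, smul_eq_mul]

/-- if `h_n → 0` and `n h_n → ∞` then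
`Var(f̂_{n,h_n}(x)) = (1/(n h_n)) f(x) ∫ K(u)² du + o(1/(n h_n))` as `n → ∞`. -/
theorem variance_kde {Ω : Type*} [MeasurableSpace Ω] (P : Measure Ω) [IsProbabilityMeasure P]
    -- the i.i.d. sample with common density f
    (X : ℕ → Ω → ℝ) (hXmeas : ∀ i, Measurable (X i))
    (hXindep : iIndepFun X P)
    (f : ℝ → ℝ) (hfmeas : Measurable f) (hfnonneg : ∀ y, 0 ≤ f y)
    (hXlaw : ∀ i, Measure.map (X i) P = volume.withDensity fun y => ENNReal.ofReal (f y))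
    -- the kernel: measurable, of bounded variation, right-continuous, bounded,
    -- with ∫ K = 1, ∫ u K(u) du = 0, ∫ u² |K(u)| du < ∞ and ∫ K(u)² du < ∞
    (K : ℝ → ℝ) (hKmeas : Measurable K)
    (hKbv : BoundedVariationOn K Set.univ)
    (hKrc : ∀ u, ContinuousWithinAt K (Set.Ici u) u)
    (hKbdd : ∃ M, ∀ u, |K u| ≤ M)
    (hKint : Integrable K volume) (hKone : (∫ u, K u) = 1)
    (hKuint : Integrable (fun u => u * K u) volume) (hKuzero : (∫ u, u * K u) = 0)
    (hKu2int : Integrable (fun u => u ^ 2 * |K u|) volume)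
    (hKsqint : Integrable (fun u => (K u) ^ 2) volume)
    -- the point x, f bounded and continuous at x
    (x : ℝ) (hfbdd : ∃ M, ∀ y, |f y| ≤ M) (hfcont : ContinuousAt f x)
    -- bandwidth sequence with h_n → 0 and n h_n → ∞
    (h : ℕ → ℝ) (hpos : ∀ n, 0 < h n)
    (hto0 : Tendsto h atTop (𝓝 0))
    (hnh : Tendsto (fun n : ℕ => (n : ℝ) * h n) atTop atTop) :
    (fun n : ℕ =>
        (∫ ω, (kde K X n (h n) x ω - ∫ ω', kde K X n (h n) x ω' ∂P) ^ 2 ∂P)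
          - 1 / ((n : ℝ) * h n) * f x * (∫ u, (K u) ^ 2))
      =o[atTop] (fun n : ℕ => 1 / ((n : ℝ) * h n)) := by
  obtain ⟨MK, hMK⟩ := hKbdd
  obtain ⟨Mf, hMf⟩ := hfbdd
  set C : ℝ := ∫ u, (K u) ^ 2 with hC
  set A : ℝ → ℝ := fun t => ∫ u, (K u) ^ 2 * f (x - t * u) with hA
  set B : ℝ → ℝ := fun t => ∫ u, K u * f (x - t * u) with hB
  -- moments
  have hE1 : ∀ (n : ℕ) (i : ℕ), ∫ ω, K ((x - X i ω) / h n) ∂P = h n * B (h n) := by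
    intro n i
    exact moment_aux P (X i) (hXmeas i) f hfmeas hfnonneg (hXlaw i) K hKmeas x (hpos n)
  have hE2 : ∀ (n : ℕ) (i : ℕ),
      ∫ ω, (K ((x - X i ω) / h n)) ^ 2 ∂P = h n * A (h n) := by
    intro n i
    exact moment_aux P (X i) (hXmeas i) f hfmeas hfnonneg (hXlaw i)
      (fun u => (K u) ^ 2) (hKmeas.pow_const 2) x (hpos n)
  -- measurability and Memℒp of the summands
  have hYmeas : ∀ (n : ℕ) (i : ℕ), Measurable fun ω => K ((x - X i ω) / h n) := by
    intro n i
    exact hKmeas.comp ((measurable_const.sub (hXmeas i)).div_const (h n))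
  have hYmem : ∀ (n : ℕ) (i : ℕ), MemLp (fun ω => K ((x - X i ω) / h n)) 2 P := by
    intro n i
    exact MemLp.of_bound (hYmeas n i).aestronglyMeasurable MK
      (Filter.Eventually.of_forall fun ω => by
        simpa [Real.norm_eq_abs] using hMK ((x - X i ω) / h n))
  -- variance of each summand
  have hvar : ∀ (n : ℕ) (i : ℕ),
      variance (fun ω => K ((x - X i ω) / h n)) P
        = h n * A (h n) - (h n * B (h n)) ^ 2 := by
    intro n i
    rw [variance_eq_sub (hYmem n i)]
    have : (P[(fun ω => K ((x - X i ω) / h n)) ^ 2])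
        = ∫ ω, (K ((x - X i ω) / h n)) ^ 2 ∂P := by
      congr 1
    rw [this, hE1 n i, hE2 n i]
  -- variance of the kde
  have hvar_kde : ∀ n : ℕ,
      variance (kde K X n (h n) x) P
        = (1 / ((n : ℝ) * h n)) ^ 2 * ((n : ℝ) * (h n * A (h n) - (h n * B (h n)) ^ 2)) := by
    intro n
    have hkde_eq : kde K X n (h n) x
        = (1 / ((n : ℝ) * h n)) • (∑ i ∈ Finset.range n, fun ω => K ((x - X i ω) / h n)) := by
      funext ω
      simp [kde, Finset.sum_apply]
    rw [hkde_eq, variance_smul]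
    congr 1
    have hindep : Set.Pairwise ↑(Finset.range n)
        fun i j => IndepFun (fun ω => K ((x - X i ω) / h n)) (fun ω => K ((x - X j ω) / h n)) P := by
      intro i _ j _ hij
      exact (hXindep.comp (fun _ y => K ((x - y) / h n))
        (fun _ => hKmeas.comp ((measurable_const.sub measurable_id).div_const (h n)))).indepFun hij
    rw [IndepFun.variance_sum (fun i _ => hYmem n i) hindep]
    simp_rw [hvar n]
    rw [Finset.sum_const, Finset.card_range, nsmul_eq_mul]
  -- the goal's integral equals the variance
  have hmem_kde : ∀ n : ℕ, MemLp (kde K X n (h n) x) 2 P := by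
    intro n
    have : kde K X n (h n) x = fun ω =>
        (1 / ((n : ℝ) * h n)) * (∑ i ∈ Finset.range n, fun ω => K ((x - X i ω) / h n)) ω := by
      funext ω
      simp [kde, Finset.sum_apply]
    rw [this]
    exact (memLp_finset_sum' _ fun i _ => hYmem n i).const_mul _
  have hint_eq : ∀ n : ℕ,
      (∫ ω, (kde K X n (h n) x ω - ∫ ω', kde K X n (h n) x ω' ∂P) ^ 2 ∂P)
        = variance (kde K X n (h n) x) P := by
    intro n
    rw [variance_eq_integral (hmem_kde n).aemeasurable]
  -- limits
  have hMf0 : 0 ≤ Mf := le_trans (abs_nonneg _) (hMf 0)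
  have htA : Tendsto (fun n => A (h n)) atTop (𝓝 (f x * C)) := by
    have hlim : ∫ u, (K u) ^ 2 * f x = f x * C := by
      rw [integral_mul_const, hC, mul_comm]
    rw [← hlim]
    apply tendsto_integral_of_dominated_convergence (fun u => (K u) ^ 2 * Mf)
    · intro n
      exact ((hKmeas.pow_const 2).mul
        (hfmeas.comp (measurable_const.sub (measurable_const_mul _)))).aestronglyMeasurable
    · exact hKsqint.mul_const Mf
    · intro n
      refine Filter.Eventually.of_forall fun u => ?_
      rw [Real.norm_eq_abs, abs_mul, abs_pow, sq_abs]
      exact mul_le_mul_of_nonneg_left (hMf _) (sq_nonneg _)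
    · refine Filter.Eventually.of_forall fun u => ?_
      apply Tendsto.const_mul
      apply hfcont.tendsto.comp
      have : Tendsto (fun n => x - h n * u) atTop (𝓝 (x - 0 * u)) :=
        tendsto_const_nhds.sub (hto0.mul_const u)
      simpa using this
  have hBbd : ∀ t : ℝ, |B t| ≤ Mf * ∫ u, |K u| := by
    intro t
    have : ‖∫ u, K u * f (x - t * u)‖ ≤ ∫ u, |K u| * Mf := by
      apply norm_integral_le_of_norm_le (hKint.abs.mul_const Mf)
      refine Filter.Eventually.of_forall fun u => ?_
      rw [Real.norm_eq_abs, abs_mul]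
      exact mul_le_mul_of_nonneg_left (hMf _) (abs_nonneg _)
    rw [Real.norm_eq_abs] at this
    calc |B t| ≤ ∫ u, |K u| * Mf := this
      _ = Mf * ∫ u, |K u| := by rw [integral_mul_const, mul_comm]
  have htB : Tendsto (fun n => h n * (B (h n)) ^ 2) atTop (𝓝 0) := by
    have hb : Tendsto (fun n => h n * (Mf * ∫ u, |K u|) ^ 2) atTop (𝓝 0) := by
      simpa using hto0.mul_const ((Mf * ∫ u, |K u|) ^ 2)
    refine squeeze_zero_norm (fun n => ?_) hb
    rw [Real.norm_eq_abs, abs_mul, abs_of_pos (hpos n), abs_pow]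
    exact mul_le_mul_of_nonneg_left
      (pow_le_pow_left₀ (abs_nonneg _) (hBbd (h n)) 2) (hpos n).le
  have hmain : Tendsto (fun n => (A (h n) - f x * C) - h n * (B (h n)) ^ 2) atTop (𝓝 0) := by
    have h1 : Tendsto (fun n => A (h n) - f x * C) atTop (𝓝 0) := by
      simpa using htA.sub (tendsto_const_nhds (x := f x * C))
    simpa using h1.sub htB
  -- eventually the quotient equals that expression
  have hev : ∀ᶠ n : ℕ in atTop, (n : ℝ) * h n ≥ 1 := hnh.eventually_ge_atTop 1
  rw [isLittleO_iff_tendsto']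
  · apply Tendsto.congr' _ hmain
    filter_upwards [hev, Filter.eventually_ge_atTop 1] with n hn1 hn2
    have hnpos : (0 : ℝ) < n := by exact_mod_cast hn2
    have hnhpos : (0 : ℝ) < (n : ℝ) * h n := lt_of_lt_of_le one_pos hn1
    have hne : ((n : ℝ) * h n) ≠ 0 := hnhpos.ne'
    have hh : h n ≠ 0 := (hpos n).ne'
    have hnne : (n : ℝ) ≠ 0 := hnpos.ne'
    rw [hint_eq n, hvar_kde n, eq_div_iff (one_div_ne_zero hne)]
    field_simp
    ring
  · filter_upwards [hev] with n hn1 habs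
    exfalso
    rw [div_eq_zero_iff] at habs
    rcases habs with h' | h'
    · exact one_ne_zero h'
    · exact (lt_of_lt_of_le one_pos hn1).ne' h'
end

section
/- Fix x ∈ ℝ. Assume f is bounded on ℝ and twice continuously differentiable in a neighborhood of x, and ∫ K(u)² du < ∞. If h_n = c n^{−1/5} for some constant c > 0, then the mean squared error satisfies E[(f̂_{n,h_n}(x) − f(x))²] = O(n^{−4/5}) as n → ∞. -/
open MeasureTheory ProbabilityTheory Filter Asymptotics Topology

lemma kde_scale (ψ : ℝ → ℝ) {H : ℝ} (hH : 0 < H) (x : ℝ) :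
    ∫ y, ψ ((x - y) / H) = H * ∫ u, ψ u := by
  calc ∫ y, ψ ((x - y) / H) = ∫ y, (fun z => ψ (z / H)) (x - y) := rfl
    _ = ∫ z, ψ (z / H) := integral_sub_left_eq_self (fun z => ψ (z / H)) volume x
    _ = |H| • ∫ u, ψ u := MeasureTheory.Measure.integral_comp_div _ H
    _ = H * ∫ u, ψ u := by rw [abs_of_pos hH, smul_eq_mul]

lemma kde_law_integral {Ω : Type*} [MeasurableSpace Ω] (P : Measure Ω)
    (X : Ω → ℝ) (hX : Measurable X) (f : ℝ → ℝ) (hf : Measurable f)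
    (hf0 : ∀ y, 0 ≤ f y)
    (hlaw : Measure.map X P = volume.withDensity fun y => ENNReal.ofReal (f y))
    (φ : ℝ → ℝ) (hφ : Measurable φ) :
    ∫ ω, φ (X ω) ∂P = ∫ y, f y * φ y := by
  rw [← integral_map hX.aemeasurable hφ.aestronglyMeasurable, hlaw,
    show (fun y => ENNReal.ofReal (f y)) = (fun y => ((f y).toNNReal : ENNReal)) from rfl,
    integral_withDensity_eq_integral_smul hf.real_toNNReal φ]
  congr 1
  funext y
  simp [NNReal.smul_def, Real.coe_toNNReal _ (hf0 y)]

lemma kde_mse_decomp {Ω : Type*} [MeasurableSpace Ω] (P : Measure Ω) [IsProbabilityMeasure P]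
    (Z : Ω → ℝ) (hZ : MemLp Z 2 P) (b : ℝ) :
    ∫ ω, (Z ω - b) ^ 2 ∂P ≤ 2 * variance Z P + 2 * ((∫ ω, Z ω ∂P) - b) ^ 2 := by
  set m := ∫ ω, Z ω ∂P with hm
  have hvar : variance Z P = ∫ ω, (Z ω - m) ^ 2 ∂P := by
    rw [variance_eq_integral hZ.aemeasurable]
  have hint1 : Integrable (fun ω => (Z ω - m) ^ 2) P := by
    have := (hZ.sub (memLp_const m)).integrable_sq
    simpa [sub_eq_add_neg] using this
  have hint2 : Integrable (fun ω => (Z ω - b) ^ 2) P := by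
    have := (hZ.sub (memLp_const b)).integrable_sq
    simpa [sub_eq_add_neg] using this
  calc ∫ ω, (Z ω - b) ^ 2 ∂P
      ≤ ∫ ω, (2 * (Z ω - m) ^ 2 + 2 * (m - b) ^ 2) ∂P := by
        apply integral_mono hint2 ((hint1.const_mul 2).add (integrable_const _))
        intro ω
        simp only [Pi.add_apply]
        nlinarith [sq_nonneg ((Z ω - m) - (m - b))]
    _ = 2 * ∫ ω, (Z ω - m) ^ 2 ∂P + 2 * (m - b) ^ 2 := by
        rw [integral_add (hint1.const_mul 2) (integrable_const _), integral_const_mul,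
          integral_const]
        simp
    _ = 2 * variance Z P + 2 * (m - b) ^ 2 := by rw [hvar]

lemma kde_taylor (f : ℝ → ℝ) (x : ℝ) (Mf : ℝ) (hMf : ∀ y, |f y| ≤ Mf)
    (s : Set ℝ) (hs : s ∈ nhds x) (hC2 : ContDiffOn ℝ 2 f s) :
    ∃ C₀ ≥ 0, ∀ t : ℝ, |f (x + t) - f x - t * deriv f x| ≤ C₀ * t ^ 2 := by
  have hxo : x ∈ interior s := mem_interior_iff_mem_nhds.2 hs
  have hopen : IsOpen (interior s) := isOpen_interior
  have h1 : ContDiffOn ℝ 2 f (interior s) := hC2.mono interior_subset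
  have hdf : ∀ y ∈ interior s, DifferentiableAt ℝ f y := fun y hy =>
    ((h1.differentiableOn (by norm_num)) y hy).differentiableAt (hopen.mem_nhds hy)
  have hd1 : ContDiffOn ℝ 1 (deriv f) (interior s) := h1.deriv_of_isOpen hopen (by norm_num)
  have hdf' : ∀ y ∈ interior s, DifferentiableAt ℝ (deriv f) y := fun y hy =>
    ((hd1.differentiableOn (by norm_num)) y hy).differentiableAt (hopen.mem_nhds hy)
  have hcont2 : ContinuousOn (deriv (deriv f)) (interior s) :=
    hd1.continuousOn_deriv_of_isOpen hopen le_rfl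
  obtain ⟨r, hr0, hrsub⟩ : ∃ r > 0, Metric.closedBall x r ⊆ interior s :=
    (Metric.nhds_basis_closedBall.mem_iff).1 (hopen.mem_nhds hxo)
  obtain ⟨L0, hL0⟩ := (isCompact_closedBall x r).exists_bound_of_continuousOn
    (hcont2.mono hrsub)
  set L := max L0 0 with hLdef
  have hLnn : 0 ≤ L := le_max_right _ _
  have hL' : ∀ y ∈ Metric.closedBall x r, ‖deriv (deriv f) y‖ ≤ L := fun y hy =>
    (hL0 y hy).trans (le_max_left _ _)
  have hlip : ∀ y ∈ Metric.closedBall x r, |deriv f y - deriv f x| ≤ L * |y - x| := by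
    intro y hy
    have := Convex.norm_image_sub_le_of_norm_deriv_le
      (fun z hz => hdf' z (hrsub hz)) hL' (convex_closedBall x r)
      (Metric.mem_closedBall_self hr0.le) hy
    simpa [Real.norm_eq_abs] using this
  set a := deriv f x with ha
  have hMf0 : 0 ≤ Mf := (abs_nonneg _).trans (hMf x)
  refine ⟨max L (2 * Mf / r ^ 2 + |a| / r),
    le_trans hLnn (le_max_left _ _), fun t => ?_⟩
  have habs : ∀ u ∈ Set.uIcc (0:ℝ) t, |u| ≤ |t| := by
    intro u hu
    rcases le_total 0 t with h0 | h0
    · rw [Set.uIcc_of_le h0] at hu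
      rw [abs_of_nonneg hu.1, abs_of_nonneg h0]; exact hu.2
    · rw [Set.uIcc_of_ge h0] at hu
      rw [abs_of_nonpos hu.2, abs_of_nonpos h0]; exact neg_le_neg hu.1
  rcases le_or_gt |t| r with htr | htr
  · -- small t : mean value bound
    set φ : ℝ → ℝ := fun u => f (x + u) - u * a with hφ
    have key : ∀ u ∈ Set.uIcc (0:ℝ) t, HasDerivAt φ (deriv f (x + u) - a) u := by
      intro u hu
      have hmem : x + u ∈ Metric.closedBall x r := by
        have := (habs u hu).trans htr
        simp only [Metric.mem_closedBall, Real.dist_eq, add_sub_cancel_left]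
        exact this
      have h1 : HasDerivAt (fun v => f (x + v)) (deriv f (x + u)) u :=
        (hdf _ (hrsub hmem)).hasDerivAt.comp_const_add x u
      exact h1.sub (hasDerivAt_mul_const a)
    have hbd : ∀ u ∈ Set.uIcc (0:ℝ) t, ‖deriv φ u‖ ≤ L * |t| := by
      intro u hu
      rw [(key u hu).deriv]
      have hmem : x + u ∈ Metric.closedBall x r := by
        have := (habs u hu).trans htr
        simp only [Metric.mem_closedBall, Real.dist_eq, add_sub_cancel_left]
        exact this
      have h2 : |deriv f (x + u) - a| ≤ L * |u| := by
        simpa using hlip (x + u) hmem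
      refine h2.trans ?_
      exact mul_le_mul_of_nonneg_left (habs u hu) hLnn
    have := Convex.norm_image_sub_le_of_norm_deriv_le
      (fun u hu => (key u hu).differentiableAt) hbd (convex_uIcc _ _)
      Set.left_mem_uIcc Set.right_mem_uIcc
    have heq : f (x + t) - f x - t * a = φ t - φ 0 := by
      simp only [hφ]; ring
    rw [heq]
    calc |φ t - φ 0| ≤ L * |t| * ‖t - 0‖ := this
      _ = L * t ^ 2 := by rw [sub_zero, Real.norm_eq_abs, mul_assoc, abs_mul_abs_self]; ring
      _ ≤ max L (2 * Mf / r ^ 2 + |a| / r) * t ^ 2 :=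
        mul_le_mul_of_nonneg_right (le_max_left _ _) (sq_nonneg t)
  · -- large t : trivial bound
    have h1 : |f (x + t) - f x - t * a| ≤ 2 * Mf + |t| * |a| := by
      have := abs_sub (f (x + t) - f x) (t * a)
      have h2 : |f (x + t) - f x| ≤ 2 * Mf := by
        calc |f (x + t) - f x| ≤ |f (x + t)| + |f x| := abs_sub _ _
          _ ≤ 2 * Mf := by linarith [hMf (x + t), hMf x]
      calc |f (x + t) - f x - t * a| ≤ |f (x + t) - f x| + |t * a| := abs_sub _ _
        _ ≤ 2 * Mf + |t| * |a| := by rw [abs_mul]; linarith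
    have hrt : r ≤ |t| := htr.le
    have e1 : 2 * Mf ≤ 2 * Mf / r ^ 2 * t ^ 2 := by
      rw [div_mul_eq_mul_div, le_div_iff₀ (by positivity)]
      nlinarith [sq_abs t, abs_nonneg t, mul_le_mul hrt hrt hr0.le (abs_nonneg t), hMf0]
    have e2 : |t| * |a| ≤ |a| / r * t ^ 2 := by
      rw [div_mul_eq_mul_div, le_div_iff₀ hr0]
      nlinarith [sq_abs t, abs_nonneg a, abs_nonneg t,
        mul_le_mul_of_nonneg_left hrt (abs_nonneg t)]
    have e3 : 2 * Mf / r ^ 2 * t ^ 2 + |a| / r * t ^ 2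
        ≤ max L (2 * Mf / r ^ 2 + |a| / r) * t ^ 2 := by
      have := mul_le_mul_of_nonneg_right (le_max_right L (2 * Mf / r ^ 2 + |a| / r)) (sq_nonneg t)
      nlinarith [this]
    linarith

/-- with `h_n = c n^{-1/5}`,
`E[(f̂_{n,h_n}(x) − f(x))²] = O(n^{-4/5})` as `n → ∞`. -/
theorem mse_kde {Ω : Type*} [MeasurableSpace Ω] (P : Measure Ω) [IsProbabilityMeasure P]
    -- the i.i.d. sample with common density f
    (X : ℕ → Ω → ℝ) (hXmeas : ∀ i, Measurable (X i))
    (hXindep : iIndepFun X P)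
    (f : ℝ → ℝ) (hfmeas : Measurable f) (hfnonneg : ∀ y, 0 ≤ f y)
    (hXlaw : ∀ i, Measure.map (X i) P = volume.withDensity fun y => ENNReal.ofReal (f y))
    -- the kernel: measurable, of bounded variation, right-continuous, bounded,
    -- with ∫ K = 1, ∫ u K(u) du = 0, ∫ u² |K(u)| du < ∞ and ∫ K(u)² du < ∞
    (K : ℝ → ℝ) (hKmeas : Measurable K)
    (hKbv : BoundedVariationOn K Set.univ)
    (hKrc : ∀ u, ContinuousWithinAt K (Set.Ici u) u)
    (hKbdd : ∃ M, ∀ u, |K u| ≤ M)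
    (hKint : Integrable K volume) (hKone : (∫ u, K u) = 1)
    (hKuint : Integrable (fun u => u * K u) volume) (hKuzero : (∫ u, u * K u) = 0)
    (hKu2int : Integrable (fun u => u ^ 2 * |K u|) volume)
    (hKsqint : Integrable (fun u => (K u) ^ 2) volume)
    -- the point x, f bounded and twice continuously differentiable near x
    (x : ℝ) (hfbdd : ∃ M, ∀ y, |f y| ≤ M)
    (hfC2 : ∃ s ∈ 𝓝 x, ContDiffOn ℝ 2 f s)
    -- bandwidth h_n = c n^{-1/5}
    (c : ℝ) (hc : 0 < c)
    (h : ℕ → ℝ) (hdef : ∀ n, h n = c * (n : ℝ) ^ (-(1 : ℝ) / 5)) :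
    (fun n : ℕ => ∫ ω, (kde K X n (h n) x ω - f x) ^ 2 ∂P)
      =O[atTop] (fun n : ℕ => (n : ℝ) ^ (-(4 : ℝ) / 5)) := by
  obtain ⟨MK, hMK⟩ := hKbdd
  have hMK0 : 0 ≤ MK := (abs_nonneg _).trans (hMK 0)
  obtain ⟨Mf, hMf⟩ := hfbdd
  have hMf0 : 0 ≤ Mf := (abs_nonneg _).trans (hMf 0)
  obtain ⟨s, hs, hC2⟩ := hfC2
  obtain ⟨C₀, hC₀, hTay⟩ := kde_taylor f x Mf hMf s hs hC2
  set CK2 := ∫ u, (K u) ^ 2 with hCK2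
  have hCK2nn : 0 ≤ CK2 := integral_nonneg fun u => sq_nonneg _
  set CU2 := ∫ u, u ^ 2 * |K u| with hCU2
  have hCU2nn : 0 ≤ CU2 := integral_nonneg fun u => mul_nonneg (sq_nonneg _) (abs_nonneg _)
  rw [isBigO_iff]
  refine ⟨2 * (Mf * CK2) / c + 2 * (C₀ * CU2 * c ^ 2) ^ 2, ?_⟩
  filter_upwards [eventually_ge_atTop 1] with n hn1
  have hn0 : (0:ℝ) < n := by exact_mod_cast Nat.lt_of_lt_of_le Nat.zero_lt_one hn1
  have hH : 0 < h n := by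
    rw [hdef]
    exact mul_pos hc (Real.rpow_pos_of_pos hn0 _)
  set H := h n with hHdef
  set g : ℝ → ℝ := fun y => K ((x - y) / H) with hg
  have hgmeas : Measurable g := hKmeas.comp ((measurable_const.sub measurable_id).div_const H)
  have hgbd : ∀ y, |g y| ≤ MK := fun y => hMK _
  -- expectations of a single summand
  have hEY : ∀ i, ∫ ω, g (X i ω) ∂P = ∫ y, f y * g y :=
    fun i => kde_law_integral P (X i) (hXmeas i) f hfmeas hfnonneg (hXlaw i) g hgmeas
  have hEY2 : ∀ i, ∫ ω, (g (X i ω)) ^ 2 ∂P = ∫ y, f y * (g y) ^ 2 := fun i =>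
    kde_law_integral P (X i) (hXmeas i) f hfmeas hfnonneg (hXlaw i)
      (fun y => (g y) ^ 2) (hgmeas.pow_const 2)
  -- substitution u = (x - y)/H
  have hsub1 : ∫ y, f y * g y = H * ∫ u, f (x - H * u) * K u := by
    have h1 : ∀ y : ℝ, f y * g y = f (x - H * ((x - y) / H)) * K ((x - y) / H) := by
      intro y
      have hy : x - H * ((x - y) / H) = y := by field_simp; ring
      rw [hy]
    calc ∫ y, f y * g y = ∫ y, (fun u => f (x - H * u) * K u) ((x - y) / H) := by
          simp only [h1]
      _ = H * ∫ u, f (x - H * u) * K u := kde_scale (fun u => f (x - H * u) * K u) hH x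
  have hsub2 : ∫ y, f y * (g y) ^ 2 = H * ∫ u, f (x - H * u) * (K u) ^ 2 := by
    have h1 : ∀ y : ℝ, f y * (g y) ^ 2
        = f (x - H * ((x - y) / H)) * (K ((x - y) / H)) ^ 2 := by
      intro y
      have hy : x - H * ((x - y) / H) = y := by field_simp; ring
      rw [hy]
    calc ∫ y, f y * (g y) ^ 2
        = ∫ y, (fun u => f (x - H * u) * (K u) ^ 2) ((x - y) / H) := by
          simp only [h1]
      _ = H * ∫ u, f (x - H * u) * (K u) ^ 2 :=
        kde_scale (fun u => f (x - H * u) * (K u) ^ 2) hH x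
  -- integrability
  have hmeas_shift : Measurable (fun u : ℝ => f (x - H * u)) :=
    hfmeas.comp (measurable_const.sub (measurable_id.const_mul H))
  have hint_fK : Integrable (fun u => f (x - H * u) * K u) :=
    hKint.bdd_mul hmeas_shift.aestronglyMeasurable (c := Mf)
      (ae_of_all _ fun u => by simpa [Real.norm_eq_abs] using hMf (x - H * u))
  have hint_fK2 : Integrable (fun u => f (x - H * u) * (K u) ^ 2) :=
    hKsqint.bdd_mul hmeas_shift.aestronglyMeasurable (c := Mf)
      (ae_of_all _ fun u => by simpa [Real.norm_eq_abs] using hMf (x - H * u))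
  -- bias bound
  set B := ∫ u, f (x - H * u) * K u with hB
  have hbias : |B - f x| ≤ C₀ * CU2 * H ^ 2 := by
    have hfx : (∫ u, f x * K u) = f x := by rw [integral_const_mul, hKone, mul_one]
    have hsplit : B - f x = ∫ u, (f (x - H * u) - f x) * K u := by
      have heq : (fun u => (f (x - H * u) - f x) * K u)
          = fun u => f (x - H * u) * K u - f x * K u := by
        funext u; ring
      rw [heq, integral_sub hint_fK (hKint.const_mul (f x)), hfx]
    have hint_d : Integrable (fun u => (f (x - H * u) - f x) * K u) := by
      have := hint_fK.sub (hKint.const_mul (f x))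
      exact this.congr (ae_of_all _ fun u => by simp only [Pi.sub_apply]; ring)
    have hRint : Integrable
        (fun u => f (x - H * u) - f x + H * u * deriv f x) → True := fun _ => trivial
    have hRKint : Integrable (fun u => (f (x - H * u) - f x + H * u * deriv f x) * K u) := by
      have h2 := hint_d.add (hKuint.const_mul (H * deriv f x))
      refine h2.congr (ae_of_all _ fun u => ?_)
      simp only [Pi.add_apply]
      ring
    have hzero : ∫ u, (H * deriv f x) * (u * K u) = 0 := by
      rw [integral_const_mul, hKuzero, mul_zero]
    have hsplit2 : ∫ u, (f (x - H * u) - f x) * K u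
        = (∫ u, (f (x - H * u) - f x + H * u * deriv f x) * K u)
          - ∫ u, (H * deriv f x) * (u * K u) := by
      rw [← integral_sub hRKint (hKuint.const_mul _)]
      congr 1
      funext u
      ring
    rw [hsplit, hsplit2, hzero, sub_zero]
    have hptb : ∀ u : ℝ, ‖(f (x - H * u) - f x + H * u * deriv f x) * K u‖
        ≤ C₀ * H ^ 2 * (u ^ 2 * |K u|) := by
      intro u
      have ht := hTay (-(H * u))
      have harg : x + -(H * u) = x - H * u := by ring
      rw [harg] at ht
      have he2 : f (x - H * u) - f x + H * u * deriv f x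
          = f (x - H * u) - f x - -(H * u) * deriv f x := by ring
      rw [Real.norm_eq_abs, abs_mul, he2]
      calc |f (x - H * u) - f x - -(H * u) * deriv f x| * |K u|
          ≤ (C₀ * (-(H * u)) ^ 2) * |K u| :=
            mul_le_mul_of_nonneg_right ht (abs_nonneg _)
        _ = C₀ * H ^ 2 * (u ^ 2 * |K u|) := by ring
    have hn := norm_integral_le_of_norm_le (hKu2int.const_mul (C₀ * H ^ 2)) (ae_of_all _ hptb)
    rw [integral_const_mul] at hn
    calc |(∫ u, (f (x - H * u) - f x + H * u * deriv f x) * K u)|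
        ≤ C₀ * H ^ 2 * CU2 := by simpa [Real.norm_eq_abs, hCU2] using hn
      _ = C₀ * CU2 * H ^ 2 := by ring
  -- second-moment / variance bounds
  have hYmem : ∀ i : ℕ, MemLp (fun ω => g (X i ω)) 2 P := fun i =>
    memLp_of_bounded (ae_of_all _ fun ω => Set.mem_Icc.2 (abs_le.1 (hgbd (X i ω))))
      ((hgmeas.comp (hXmeas i)).aestronglyMeasurable) 2
  have hYindep : iIndepFun (fun i ω => g (X i ω)) P := by
    have := hXindep.comp (fun _ => g) (fun _ => hgmeas)
    exact this
  have hvarsum : variance (∑ i ∈ Finset.range n, fun ω => g (X i ω)) P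
      = ∑ i ∈ Finset.range n, variance (fun ω => g (X i ω)) P :=
    IndepFun.variance_sum (fun i _ => hYmem i) (fun i _ j _ hij => hYindep.indepFun hij)
  have hvarY : ∀ i : ℕ, variance (fun ω => g (X i ω)) P ≤ H * (Mf * CK2) := by
    intro i
    have h1 := variance_le_expectation_sq (μ := P)
      (X := fun ω => g (X i ω)) ((hgmeas.comp (hXmeas i)).aestronglyMeasurable)
    have h2 : ∫ ω, ((fun ω => g (X i ω)) ^ 2) ω ∂P = ∫ y, f y * (g y) ^ 2 := by
      simp only [Pi.pow_apply]
      exact hEY2 i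
    rw [h2, hsub2] at h1
    refine h1.trans ?_
    have h3 : ∫ u, f (x - H * u) * (K u) ^ 2 ≤ Mf * CK2 := by
      calc ∫ u, f (x - H * u) * (K u) ^ 2 ≤ ∫ u, Mf * (K u) ^ 2 := by
            apply integral_mono hint_fK2 (hKsqint.const_mul Mf)
            intro u
            exact mul_le_mul_of_nonneg_right ((le_abs_self _).trans (hMf _)) (sq_nonneg _)
        _ = Mf * CK2 := by rw [integral_const_mul]
    exact mul_le_mul_of_nonneg_left h3 hH.le
  have hne1 : (n:ℝ) ≠ 0 := hn0.ne'
  have hne2 : H ≠ 0 := hH.ne'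
  have hkdefun : (fun ω => kde K X n H x ω)
      = (1 / ((n:ℝ) * H)) • (∑ i ∈ Finset.range n, fun ω => g (X i ω)) := by
    funext ω
    simp only [kde, Pi.smul_apply, Finset.sum_apply, smul_eq_mul, hg]
  have hkdemem : MemLp (fun ω => kde K X n H x ω) 2 P := by
    rw [hkdefun]
    exact (memLp_finset_sum' _ fun i _ => hYmem i).const_smul _
  have hvar_kde : variance (fun ω => kde K X n H x ω) P ≤ Mf * CK2 / ((n:ℝ) * H) := by
    rw [hkdefun, variance_smul, hvarsum]
    have hsumle : ∑ i ∈ Finset.range n, variance (fun ω => g (X i ω)) P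
        ≤ (n : ℝ) * (H * (Mf * CK2)) := by
      calc ∑ i ∈ Finset.range n, variance (fun ω => g (X i ω)) P
          ≤ ∑ _i ∈ Finset.range n, H * (Mf * CK2) :=
            Finset.sum_le_sum fun i _ => hvarY i
        _ = (n : ℝ) * (H * (Mf * CK2)) := by
            rw [Finset.sum_const, Finset.card_range, nsmul_eq_mul]
    calc (1 / ((n:ℝ) * H)) ^ 2 * ∑ i ∈ Finset.range n, variance (fun ω => g (X i ω)) P
        ≤ (1 / ((n:ℝ) * H)) ^ 2 * ((n : ℝ) * (H * (Mf * CK2))) :=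
          mul_le_mul_of_nonneg_left hsumle (sq_nonneg _)
      _ = Mf * CK2 / ((n:ℝ) * H) := by field_simp
  have hEY' : ∀ i : ℕ, ∫ ω, K ((x - X i ω) / H) ∂P = ∫ y, f y * g y := hEY
  have hmean : ∫ ω, kde K X n H x ω ∂P = B := by
    simp only [kde]
    rw [integral_const_mul, integral_finset_sum _ (fun i (_ : i ∈ Finset.range n) =>
      ((hYmem i).integrable (by norm_num) :
        Integrable (fun ω => K ((x - X i ω) / H)) P))]
    simp only [hEY, hEY', hsub1]
    rw [Finset.sum_const, Finset.card_range, nsmul_eq_mul]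
    field_simp
  have hmse := kde_mse_decomp P (fun ω => kde K X n H x ω) hkdemem (f x)
  rw [hmean] at hmse
  have hfinal : ∫ ω, (kde K X n H x ω - f x) ^ 2 ∂P
      ≤ 2 * (Mf * CK2 / ((n:ℝ) * H)) + 2 * (C₀ * CU2 * H ^ 2) ^ 2 := by
    refine hmse.trans ?_
    have h2 : (B - f x) ^ 2 ≤ (C₀ * CU2 * H ^ 2) ^ 2 := by
      rw [← sq_abs (B - f x)]
      exact pow_le_pow_left₀ (abs_nonneg _) hbias 2
    linarith [hvar_kde]
  -- numerics
  have hmse_nn : 0 ≤ ∫ ω, (kde K X n H x ω - f x) ^ 2 ∂P :=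
    integral_nonneg fun ω => sq_nonneg _
  rw [Real.norm_eq_abs, abs_of_nonneg hmse_nn, Real.norm_eq_abs,
    abs_of_nonneg (Real.rpow_nonneg hn0.le _)]
  refine hfinal.trans ?_
  set N4 := (n:ℝ) ^ (-(4:ℝ) / 5) with hN4
  set P4 := (n:ℝ) ^ ((4:ℝ) / 5) with hP4
  have hP4pos : 0 < P4 := Real.rpow_pos_of_pos hn0 _
  have hinv : N4 = P4⁻¹ := by
    rw [hN4, hP4, ← Real.rpow_neg hn0.le]
    norm_num
  have e1 : (n:ℝ) * H = c * P4 := by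
    rw [hHdef, hdef, hP4]
    have h1 : (n:ℝ) ^ (1:ℝ) * (n:ℝ) ^ (-(1:ℝ)/5) = (n:ℝ) ^ ((4:ℝ)/5) := by
      rw [← Real.rpow_add hn0]
      norm_num
    calc (n:ℝ) * (c * (n:ℝ) ^ (-(1:ℝ)/5))
        = c * ((n:ℝ) ^ (1:ℝ) * (n:ℝ) ^ (-(1:ℝ)/5)) := by rw [Real.rpow_one]; ring
      _ = c * (n:ℝ) ^ ((4:ℝ)/5) := by rw [h1]
  have e2 : H ^ 4 = c ^ 4 * N4 := by
    rw [hHdef, hdef, mul_pow, hN4]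
    congr 1
    rw [← Real.rpow_natCast ((n:ℝ) ^ (-(1:ℝ)/5)) 4, ← Real.rpow_mul hn0.le]
    norm_num
  have t1 : 2 * (Mf * CK2 / ((n:ℝ) * H)) = 2 * (Mf * CK2) / c * N4 := by
    rw [e1, hinv]
    field_simp
  have t2 : 2 * (C₀ * CU2 * H ^ 2) ^ 2 = 2 * (C₀ * CU2 * c ^ 2) ^ 2 * N4 := by
    have : (C₀ * CU2 * H ^ 2) ^ 2 = (C₀ * CU2) ^ 2 * H ^ 4 := by ring
    rw [this, e2]
    ring
  rw [t1, t2, ← add_mul]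
end

section
/- Fix x ∈ ℝ. Assume ∫ |u|³ |K(u)| du < ∞ and ∫ |u|³ |K''(u)| du < ∞; that u^j K(u) → 0 and u^j K'(u) → 0 as |u| → ∞ for j = 0, 1, 2, 3; and that f is bounded on ℝ and four times continuously differentiable in a neighborhood of x. Then for every fixed n ≥ 1, as h → 0⁺, the bias of the bias-reduced kernel estimator satisfies E[f̂ᵇ_{n,h}(x)] − f(x) = −(h³/6) f'''(x) ∫ u³ K(u) du + o(h³). -/
open MeasureTheory ProbabilityTheory Filter Asymptotics Topology Set
open scoped ENNReal NNReal

lemma bk_ftc_line {g g' : ℝ → ℝ} (hd : ∀ t, HasDerivAt g (g' t) t)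
    (hint : Integrable g') (hbot : Tendsto g atBot (𝓝 (0:ℝ)))
    (htop : Tendsto g atTop (𝓝 (0:ℝ))) : ∫ t, g' t = 0 := by
  have h1 := integral_Iic_of_hasDerivAt_of_tendsto' (a := 0) (fun t _ => hd t)
    hint.integrableOn hbot
  have h2 := integral_Ioi_of_hasDerivAt_of_tendsto' (a := 0) (fun t _ => hd t)
    hint.integrableOn htop
  rw [← intervalIntegral.integral_Iic_add_Ioi (b := 0) hint.integrableOn hint.integrableOn,
    h1, h2]
  ring

lemma bk_integrable_of_cube {g : ℝ → ℝ} (hc : Continuous g)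
    (h3 : Integrable (fun u => |u| ^ 3 * |g u|)) : Integrable g := by
  have h1 : IntegrableOn g (Icc (-1 : ℝ) 1) := hc.integrableOn_Icc
  have h2 : IntegrableOn g (Icc (-1 : ℝ) 1)ᶜ := by
    refine Integrable.mono' (h3.restrict) (hc.aestronglyMeasurable.restrict) ?_
    rw [ae_restrict_iff' (measurableSet_Icc.compl)]
    filter_upwards with u hu
    have h1u : (1:ℝ) ≤ |u| := by
      simp only [mem_compl_iff, mem_Icc, not_and_or, not_le] at hu
      rcases hu with h | h
      · rw [abs_of_nonpos (by linarith)]; linarith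
      · rw [abs_of_nonneg (by linarith)]; linarith
    have h3u : (1:ℝ) ≤ |u| ^ 3 := one_le_pow₀ h1u
    calc ‖g u‖ = 1 * |g u| := by rw [one_mul]; rfl
      _ ≤ |u| ^ 3 * |g u| := mul_le_mul_of_nonneg_right h3u (abs_nonneg _)
  have := h1.union h2
  rwa [union_compl_self, integrableOn_univ] at this

lemma bk_integrable_pow_mul {g : ℝ → ℝ} (hc : Continuous g)
    (h3 : Integrable (fun u => |u| ^ 3 * |g u|)) {j : ℕ} (hj : j ≤ 3) :
    Integrable (fun u => u ^ j * g u) := by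
  have hg : Integrable g := bk_integrable_of_cube hc h3
  refine Integrable.mono' (hg.abs.add h3)
    ((continuous_pow j |>.mul hc).aestronglyMeasurable) ?_
  filter_upwards with u
  have hb : |u| ^ j ≤ 1 + |u| ^ 3 := by
    rcases le_total (|u|) 1 with h | h
    · have := pow_le_one₀ (abs_nonneg u) h (n := j)
      nlinarith [pow_nonneg (abs_nonneg u) 3]
    · have := pow_le_pow_right₀ h hj
      nlinarith
  have : ‖u ^ j * g u‖ = |u| ^ j * |g u| := by
    rw [Real.norm_eq_abs, abs_mul, abs_pow]
  rw [this]
  calc |u| ^ j * |g u| ≤ (1 + |u| ^ 3) * |g u| :=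
        mul_le_mul_of_nonneg_right hb (abs_nonneg _)
    _ = |g u| + |u| ^ 3 * |g u| := by ring
section moments
variable {K K' K'' : ℝ → ℝ}
  (hd1 : ∀ u, HasDerivAt K (K' u) u) (hd2 : ∀ u, HasDerivAt K' (K'' u) u)

-- decompose cocompact tendsto
lemma bk_atBot {φ : ℝ → ℝ} (h : Tendsto φ (cocompact ℝ) (𝓝 0)) :
    Tendsto φ atBot (𝓝 (0:ℝ)) := by
  rw [cocompact_eq_atBot_atTop] at h; exact h.mono_left le_sup_left

lemma bk_atTop {φ : ℝ → ℝ} (h : Tendsto φ (cocompact ℝ) (𝓝 0)) :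
    Tendsto φ atTop (𝓝 (0:ℝ)) := by
  rw [cocompact_eq_atBot_atTop] at h; exact h.mono_left le_sup_right

include hd2 in
lemma bk_mom0 (hint : Integrable K'')
    (hbot : Tendsto K' atBot (𝓝 (0:ℝ))) (htop : Tendsto K' atTop (𝓝 (0:ℝ))) :
    ∫ u, K'' u = 0 :=
  bk_ftc_line hd2 hint hbot htop

include hd1 hd2 in
lemma bk_mom1 (hint : Integrable (fun u => u * K'' u))
    (hb1 : Tendsto (fun u => u * K' u) atBot (𝓝 (0:ℝ)))
    (ht1 : Tendsto (fun u => u * K' u) atTop (𝓝 (0:ℝ)))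
    (hb0 : Tendsto K atBot (𝓝 (0:ℝ))) (ht0 : Tendsto K atTop (𝓝 (0:ℝ))) :
    ∫ u, u * K'' u = 0 := by
  refine bk_ftc_line (g := fun u => u * K' u - K u) (fun u => ?_) hint
    (by simpa using hb1.sub hb0) (by simpa using ht1.sub ht0)
  have h := ((hasDerivAt_id u).mul (hd2 u)).sub (hd1 u)
  simp only [id_eq] at h
  exact h.congr_deriv (by ring)

include hd1 hd2 in
lemma bk_mom2 (hint : Integrable (fun u => u ^ 2 * K'' u)) (hK : Integrable K)
    (hb1 : Tendsto (fun u => u ^ 2 * K' u) atBot (𝓝 (0:ℝ)))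
    (ht1 : Tendsto (fun u => u ^ 2 * K' u) atTop (𝓝 (0:ℝ)))
    (hb0 : Tendsto (fun u => u * K u) atBot (𝓝 (0:ℝ)))
    (ht0 : Tendsto (fun u => u * K u) atTop (𝓝 (0:ℝ))) :
    ∫ u, u ^ 2 * K'' u = 2 * ∫ u, K u := by
  have key : ∫ u, (u ^ 2 * K'' u - 2 * K u) = 0 := by
    refine bk_ftc_line (g := fun u => u ^ 2 * K' u - 2 * (u * K u)) (fun u => ?_)
      (hint.sub (hK.const_mul 2))
      (by simpa using hb1.sub (hb0.const_mul 2)) (by simpa using ht1.sub (ht0.const_mul 2))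
    have h := ((hasDerivAt_pow 2 u).mul (hd2 u)).sub
      (((hasDerivAt_id u).mul (hd1 u)).const_mul 2)
    simp only [id_eq] at h
    exact h.congr_deriv (by push_cast; ring)
  rw [integral_sub hint (hK.const_mul 2), integral_const_mul] at key
  linarith

include hd1 hd2 in
lemma bk_mom3 (hint : Integrable (fun u => u ^ 3 * K'' u))
    (hK : Integrable (fun u => u * K u))
    (hb1 : Tendsto (fun u => u ^ 3 * K' u) atBot (𝓝 (0:ℝ)))
    (ht1 : Tendsto (fun u => u ^ 3 * K' u) atTop (𝓝 (0:ℝ)))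
    (hb0 : Tendsto (fun u => u ^ 2 * K u) atBot (𝓝 (0:ℝ)))
    (ht0 : Tendsto (fun u => u ^ 2 * K u) atTop (𝓝 (0:ℝ))) :
    ∫ u, u ^ 3 * K'' u = 6 * ∫ u, u * K u := by
  have key : ∫ u, (u ^ 3 * K'' u - 6 * (u * K u)) = 0 := by
    refine bk_ftc_line (g := fun u => u ^ 3 * K' u - 3 * (u ^ 2 * K u)) (fun u => ?_)
      (hint.sub (hK.const_mul 6))
      (by simpa using hb1.sub (hb0.const_mul 3)) (by simpa using ht1.sub (ht0.const_mul 3))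
    have h := ((hasDerivAt_pow 3 u).mul (hd2 u)).sub
      (((hasDerivAt_pow 2 u).mul (hd1 u)).const_mul 3)
    exact h.congr_deriv (by push_cast; ring)
  rw [integral_sub hint (hK.const_mul 6), integral_const_mul] at key
  linarith

end moments

lemma bk_taylor_bound {f : ℝ → ℝ} {x : ℝ} {s : Set ℝ} (hs : s ∈ 𝓝 x)
    (hf : ContDiffOn ℝ 4 f s) :
    ∀ ε > 0, ∃ δ > 0, ∀ t : ℝ, |t| ≤ δ →
      |f (x + t) - f x - t * deriv f x - t ^ 2 / 2 * deriv (deriv f) x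
        - t ^ 3 / 6 * deriv (deriv (deriv f)) x| ≤ ε * |t| ^ 3 := by
  obtain ⟨r, hr0, hball⟩ := Metric.mem_nhds_iff.1 hs
  set f₁ := deriv f with hf₁
  set f₂ := deriv f₁ with hf₂
  set f₃ := deriv f₂ with hf₃
  set B := Metric.ball x r with hB
  have hfB : ContDiffOn ℝ 4 f B := hf.mono hball
  have hOpen : IsOpen B := Metric.isOpen_ball
  have h1 : ContDiffOn ℝ 3 f₁ B := hfB.deriv_of_isOpen hOpen (by norm_num)
  have h2 : ContDiffOn ℝ 2 f₂ B := h1.deriv_of_isOpen hOpen (by norm_num)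
  have h3 : ContDiffOn ℝ 1 f₃ B := h2.deriv_of_isOpen hOpen (by norm_num)
  have hxB : x ∈ B := Metric.mem_ball_self hr0
  have hder : ∀ (g : ℝ → ℝ), ContDiffOn ℝ 1 g B → ∀ y ∈ B, HasDerivAt g (deriv g y) y :=
    fun g hg y hy =>
      ((hg.differentiableOn one_ne_zero).differentiableAt (hOpen.mem_nhds hy)).hasDerivAt
  have hD0 : ∀ y ∈ B, HasDerivAt f (f₁ y) y := hder f (hfB.of_le (by norm_num))
  have hD1 : ∀ y ∈ B, HasDerivAt f₁ (f₂ y) y := hder f₁ (h1.of_le (by norm_num))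
  have hD2 : ∀ y ∈ B, HasDerivAt f₂ (f₃ y) y := hder f₂ (h2.of_le (by norm_num))
  have hcont3 : ContinuousAt f₃ x := (h3.continuousOn.continuousAt (hOpen.mem_nhds hxB))
  intro ε hε
  obtain ⟨δ₀, hδ₀, H⟩ := Metric.continuousAt_iff.1 hcont3 ε hε
  refine ⟨min (δ₀ / 2) (r / 2), by positivity, fun t ht => ?_⟩
  set δ := min (δ₀ / 2) (r / 2) with hδdef
  have hδr : δ ≤ r / 2 := min_le_right _ _
  have hδ0 : δ ≤ δ₀ / 2 := min_le_left _ _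
  have hmem : ∀ u : ℝ, |u| ≤ δ → x + u ∈ B := by
    intro u hu
    rw [hB, Metric.mem_ball, Real.dist_eq, add_sub_cancel_left]
    linarith
  have hT3 : ∀ u : ℝ, |u| ≤ δ → |f₃ (x + u) - f₃ x| ≤ ε := by
    intro u hu
    have := H (show dist (x + u) x < δ₀ by
      rw [Real.dist_eq, add_sub_cancel_left]
      calc |u| ≤ δ := hu
        _ < δ₀ := by linarith)
    rw [Real.dist_eq] at this
    exact this.le
  -- derivative chain
  have hD2' : ∀ u : ℝ, |u| ≤ δ →
      HasDerivAt (fun v => f₂ (x + v) - f₂ x - v * f₃ x) (f₃ (x + u) - f₃ x) u := by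
    intro u hu
    have hc : HasDerivAt (fun v : ℝ => f₂ (x + v)) (f₃ (x + u) * 1) u :=
      (hD2 (x + u) (hmem u hu)).comp u ((hasDerivAt_id u).const_add x)
    have := (hc.sub_const (f₂ x)).sub (hasDerivAt_mul_const (f₃ x))
    exact this.congr_deriv (by ring)
  have hD1' : ∀ u : ℝ, |u| ≤ δ →
      HasDerivAt (fun v => f₁ (x + v) - f₁ x - v * f₂ x - v ^ 2 / 2 * f₃ x)
        (f₂ (x + u) - f₂ x - u * f₃ x) u := by
    intro u hu
    have hc : HasDerivAt (fun v : ℝ => f₁ (x + v)) (f₂ (x + u) * 1) u :=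
      (hD1 (x + u) (hmem u hu)).comp u ((hasDerivAt_id u).const_add x)
    have hp : HasDerivAt (fun v : ℝ => v ^ 2 / 2 * f₃ x)
        ((↑2 * u ^ (2 - 1)) / 2 * f₃ x) u := ((hasDerivAt_pow 2 u).div_const 2).mul_const _
    have := ((hc.sub_const (f₁ x)).sub (hasDerivAt_mul_const (f₂ x))).sub hp
    exact this.congr_deriv (by push_cast; ring)
  have hD0' : ∀ u : ℝ, |u| ≤ δ →
      HasDerivAt (fun v => f (x + v) - f x - v * f₁ x - v ^ 2 / 2 * f₂ x - v ^ 3 / 6 * f₃ x)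
        (f₁ (x + u) - f₁ x - u * f₂ x - u ^ 2 / 2 * f₃ x) u := by
    intro u hu
    have hc : HasDerivAt (fun v : ℝ => f (x + v)) (f₁ (x + u) * 1) u :=
      (hD0 (x + u) (hmem u hu)).comp u ((hasDerivAt_id u).const_add x)
    have hp2 : HasDerivAt (fun v : ℝ => v ^ 2 / 2 * f₂ x)
        ((↑2 * u ^ (2 - 1)) / 2 * f₂ x) u := ((hasDerivAt_pow 2 u).div_const 2).mul_const _
    have hp3 : HasDerivAt (fun v : ℝ => v ^ 3 / 6 * f₃ x)
        ((↑3 * u ^ (3 - 1)) / 6 * f₃ x) u := ((hasDerivAt_pow 3 u).div_const 6).mul_const _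
    have := (((hc.sub_const (f x)).sub (hasDerivAt_mul_const (f₁ x))).sub hp2).sub hp3
    exact this.congr_deriv (by push_cast; ring)
  -- MVT chain
  have habs : ∀ u : ℝ, ∀ v ∈ Icc (-|u|) (|u|), |v| ≤ |u| := fun u v hv => abs_le.2 ⟨hv.1, hv.2⟩
  have hT2 : ∀ u : ℝ, |u| ≤ δ → |f₂ (x + u) - f₂ x - u * f₃ x| ≤ ε * |u| := by
    intro u hu
    have key := (convex_Icc (-δ) δ).norm_image_sub_le_of_norm_hasDerivWithin_le
      (f := fun v => f₂ (x + v) - f₂ x - v * f₃ x) (f' := fun v => f₃ (x + v) - f₃ x)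
      (fun v hv => (hD2' v (abs_le.2 ⟨hv.1, hv.2⟩)).hasDerivWithinAt)
      (fun v hv => by
        rw [Real.norm_eq_abs]; exact hT3 v (abs_le.2 ⟨hv.1, hv.2⟩))
      (by constructor <;> [linarith [abs_nonneg u]; linarith [abs_nonneg u]] :
        (0:ℝ) ∈ Icc (-δ) δ)
      (by constructor <;> [linarith [neg_abs_le u]; linarith [le_abs_self u]] :
        u ∈ Icc (-δ) δ)
    simp only [Real.norm_eq_abs] at key
    calc |f₂ (x + u) - f₂ x - u * f₃ x|
        = |(f₂ (x + u) - f₂ x - u * f₃ x) - (f₂ (x + 0) - f₂ x - 0 * f₃ x)| := by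
          norm_num
      _ ≤ ε * |u - 0| := key
      _ = ε * |u| := by norm_num
  have hT1 : ∀ u : ℝ, |u| ≤ δ →
      |f₁ (x + u) - f₁ x - u * f₂ x - u ^ 2 / 2 * f₃ x| ≤ ε * |u| ^ 2 := by
    intro u hu
    have key := (convex_Icc (-|u|) (|u|)).norm_image_sub_le_of_norm_hasDerivWithin_le
      (f := fun v => f₁ (x + v) - f₁ x - v * f₂ x - v ^ 2 / 2 * f₃ x)
      (f' := fun v => f₂ (x + v) - f₂ x - v * f₃ x)
      (fun v hv => (hD1' v ((habs u v hv).trans hu)).hasDerivWithinAt)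
      (fun v hv => by
        rw [Real.norm_eq_abs]
        calc |f₂ (x + v) - f₂ x - v * f₃ x| ≤ ε * |v| := hT2 v ((habs u v hv).trans hu)
          _ ≤ ε * |u| := by
            have := habs u v hv
            nlinarith)
      (by constructor <;> [linarith [abs_nonneg u]; linarith [abs_nonneg u]] :
        (0:ℝ) ∈ Icc (-|u|) (|u|))
      (by constructor <;> [exact neg_abs_le u; exact le_abs_self u] : u ∈ Icc (-|u|) (|u|))
    simp only [Real.norm_eq_abs] at key
    calc |f₁ (x + u) - f₁ x - u * f₂ x - u ^ 2 / 2 * f₃ x|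
        = |(f₁ (x + u) - f₁ x - u * f₂ x - u ^ 2 / 2 * f₃ x)
            - (f₁ (x + 0) - f₁ x - 0 * f₂ x - 0 ^ 2 / 2 * f₃ x)| := by norm_num
      _ ≤ ε * |u| * |u - 0| := key
      _ = ε * |u| ^ 2 := by rw [sub_zero]; ring
  have hT0 : ∀ u : ℝ, |u| ≤ δ →
      |f (x + u) - f x - u * f₁ x - u ^ 2 / 2 * f₂ x - u ^ 3 / 6 * f₃ x| ≤ ε * |u| ^ 3 := by
    intro u hu
    have key := (convex_Icc (-|u|) (|u|)).norm_image_sub_le_of_norm_hasDerivWithin_le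
      (f := fun v => f (x + v) - f x - v * f₁ x - v ^ 2 / 2 * f₂ x - v ^ 3 / 6 * f₃ x)
      (f' := fun v => f₁ (x + v) - f₁ x - v * f₂ x - v ^ 2 / 2 * f₃ x)
      (fun v hv => (hD0' v ((habs u v hv).trans hu)).hasDerivWithinAt)
      (fun v hv => by
        rw [Real.norm_eq_abs]
        calc |f₁ (x + v) - f₁ x - v * f₂ x - v ^ 2 / 2 * f₃ x| ≤ ε * |v| ^ 2 :=
              hT1 v ((habs u v hv).trans hu)
          _ ≤ ε * |u| ^ 2 :=
            mul_le_mul_of_nonneg_left (pow_le_pow_left₀ (abs_nonneg v) (habs u v hv) 2) hε.le)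
      (by constructor <;> [linarith [abs_nonneg u]; linarith [abs_nonneg u]] :
        (0:ℝ) ∈ Icc (-|u|) (|u|))
      (by constructor <;> [exact neg_abs_le u; exact le_abs_self u] : u ∈ Icc (-|u|) (|u|))
    simp only [Real.norm_eq_abs] at key
    calc |f (x + u) - f x - u * f₁ x - u ^ 2 / 2 * f₂ x - u ^ 3 / 6 * f₃ x|
        = |(f (x + u) - f x - u * f₁ x - u ^ 2 / 2 * f₂ x - u ^ 3 / 6 * f₃ x)
            - (f (x + 0) - f x - 0 * f₁ x - 0 ^ 2 / 2 * f₂ x - 0 ^ 3 / 6 * f₃ x)| := by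
          norm_num
      _ ≤ ε * |u| ^ 2 * |u - 0| := key
      _ = ε * |u| ^ 3 := by rw [sub_zero]; ring
  exact hT0 t ht

lemma bk_taylor_global {f : ℝ → ℝ} {x a b c : ℝ} (hfbdd : ∃ M, ∀ y, |f y| ≤ M)
    (htb : ∃ δ > 0, ∀ t : ℝ, |t| ≤ δ →
      |f (x + t) - f x - t * a - t ^ 2 / 2 * b - t ^ 3 / 6 * c| ≤ 1 * |t| ^ 3) :
    ∃ C, 0 < C ∧ ∀ t : ℝ,
      |f (x + t) - f x - t * a - t ^ 2 / 2 * b - t ^ 3 / 6 * c| ≤ C * |t| ^ 3 := by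
  obtain ⟨M, hM⟩ := hfbdd
  obtain ⟨δ, hδ0, hT⟩ := htb
  set δ' := min δ 1 with hδ'def
  have hδ'0 : 0 < δ' := lt_min hδ0 one_pos
  have hδ'1 : δ' ≤ 1 := min_le_right _ _
  set A := M + |f x| + |a| + |b| + |c| + 1 with hA
  have hM0 : 0 ≤ M := (abs_nonneg _).trans (hM x)
  have hA0 : 0 < A := by positivity
  refine ⟨max 1 (5 * A / δ' ^ 3), lt_of_lt_of_le one_pos (le_max_left _ _), fun t => ?_⟩
  rcases le_total (|t|) δ' with h | h
  · calc |f (x + t) - f x - t * a - t ^ 2 / 2 * b - t ^ 3 / 6 * c|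
        ≤ 1 * |t| ^ 3 := hT t (h.trans (min_le_left _ _))
      _ ≤ max 1 (5 * A / δ' ^ 3) * |t| ^ 3 :=
        mul_le_mul_of_nonneg_right (le_max_left _ _) (by positivity)
  · have habs : |f (x + t) - f x - t * a - t ^ 2 / 2 * b - t ^ 3 / 6 * c|
        ≤ M + |f x| + |t| * |a| + |t| ^ 2 * |b| + |t| ^ 3 * |c| := by
      have h1 : |t * a| = |t| * |a| := abs_mul t a
      have h2 : |t ^ 2 / 2 * b| ≤ |t| ^ 2 * |b| := by
        rw [abs_mul, abs_div, abs_pow]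
        have : |t| ^ 2 / |(2:ℝ)| ≤ |t| ^ 2 := by
          rw [abs_two]; nlinarith [pow_nonneg (abs_nonneg t) 2]
        exact mul_le_mul_of_nonneg_right this (abs_nonneg b)
      have h3 : |t ^ 3 / 6 * c| ≤ |t| ^ 3 * |c| := by
        rw [abs_mul, abs_div, abs_pow]
        have : |t| ^ 3 / |(6:ℝ)| ≤ |t| ^ 3 := by
          have : |(6:ℝ)| = 6 := by norm_num
          rw [this]; nlinarith [pow_nonneg (abs_nonneg t) 3]
        exact mul_le_mul_of_nonneg_right this (abs_nonneg c)
      calc |f (x + t) - f x - t * a - t ^ 2 / 2 * b - t ^ 3 / 6 * c|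
          ≤ |f (x + t)| + |f x| + |t * a| + |t ^ 2 / 2 * b| + |t ^ 3 / 6 * c| := by
            have := abs_sub (f (x + t) - f x - t * a - t ^ 2 / 2 * b) (t ^ 3 / 6 * c)
            have h4 := abs_sub (f (x + t) - f x - t * a) (t ^ 2 / 2 * b)
            have h5 := abs_sub (f (x + t) - f x) (t * a)
            have h6 := abs_sub (f (x + t)) (f x)
            linarith
        _ ≤ M + |f x| + |t| * |a| + |t| ^ 2 * |b| + |t| ^ 3 * |c| := by
            rw [h1]; linarith [hM (x + t)]
    have hpow : δ' ^ 3 ≤ |t| ^ 3 := pow_le_pow_left₀ hδ'0.le h 3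
    have hle : M + |f x| + |t| * |a| + |t| ^ 2 * |b| + |t| ^ 3 * |c|
        ≤ 5 * A / δ' ^ 3 * |t| ^ 3 := by
      rw [div_mul_eq_mul_div, le_div_iff₀ (by positivity)]
      have e1 : |t| * δ' ^ 3 ≤ |t| ^ 3 := by
        calc |t| * δ' ^ 3 = δ' ^ 2 * δ' * |t| := by ring
          _ ≤ |t| ^ 2 * 1 * |t| := by
            apply mul_le_mul_of_nonneg_right _ (abs_nonneg t)
            exact mul_le_mul (by nlinarith [pow_le_pow_left₀ hδ'0.le h 2]) hδ'1 hδ'0.le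
              (by positivity)
          _ = |t| ^ 3 := by ring
      have e2 : |t| ^ 2 * δ' ^ 3 ≤ |t| ^ 3 := by
        calc |t| ^ 2 * δ' ^ 3 = δ' ^ 2 * (δ' * |t| ^ 2) := by ring
          _ ≤ 1 * (|t| * |t| ^ 2) := by
            apply mul_le_mul _ (mul_le_mul_of_nonneg_right h (by positivity)) (by positivity)
              one_pos.le
            nlinarith
          _ = |t| ^ 3 := by ring
      have e3 : δ' ^ 3 ≤ 1 := pow_le_one₀ hδ'0.le hδ'1
      have hn : 0 ≤ |f x| + |a| + |b| + |c| := by positivity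
      have hMA : M ≤ A := by simp only [hA]; linarith [abs_nonneg (f x), abs_nonneg a, abs_nonneg b, abs_nonneg c]
      have hfA : |f x| ≤ A := by simp only [hA]; linarith [abs_nonneg a, abs_nonneg b, abs_nonneg c]
      have haA : |a| ≤ A := by simp only [hA]; linarith [abs_nonneg (f x), abs_nonneg b, abs_nonneg c]
      have hbA : |b| ≤ A := by simp only [hA]; linarith [abs_nonneg (f x), abs_nonneg a, abs_nonneg c]
      have hcA : |c| ≤ A := by simp only [hA]; linarith [abs_nonneg (f x), abs_nonneg a, abs_nonneg b]
      have t3 : (0:ℝ) ≤ |t| ^ 3 := by positivity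
      have k1 : M * δ' ^ 3 ≤ A * |t| ^ 3 := mul_le_mul hMA hpow (by positivity) hA0.le
      have k2 : |f x| * δ' ^ 3 ≤ A * |t| ^ 3 := mul_le_mul hfA hpow (by positivity) hA0.le
      have k3 : |a| * (|t| * δ' ^ 3) ≤ A * |t| ^ 3 := mul_le_mul haA e1 (by positivity) hA0.le
      have k4 : |b| * (|t| ^ 2 * δ' ^ 3) ≤ A * |t| ^ 3 := mul_le_mul hbA e2 (by positivity) hA0.le
      have k5 : |c| * δ' ^ 3 * |t| ^ 3 ≤ A * 1 * |t| ^ 3 :=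
        mul_le_mul_of_nonneg_right (mul_le_mul hcA e3 (by positivity) hA0.le) t3
      nlinarith [k1, k2, k3, k4, k5]
    calc |f (x + t) - f x - t * a - t ^ 2 / 2 * b - t ^ 3 / 6 * c|
        ≤ 5 * A / δ' ^ 3 * |t| ^ 3 := habs.trans hle
      _ ≤ max 1 (5 * A / δ' ^ 3) * |t| ^ 3 :=
        mul_le_mul_of_nonneg_right (le_max_right _ _) (by positivity)
/-- The modified kernel `K̃(u) = K(u) − (1/2)(∫ v² K(v) dv) K''(u)`. -/
noncomputable def ktilde (K : ℝ → ℝ) (u : ℝ) : ℝ :=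
  K u - 1 / 2 * (∫ v, v ^ 2 * K v) * deriv (deriv K) u

/-- The bias-reduced kernel density estimator
`f̂ᵇ_{n,h}(x) = (1/(nh)) Σ_{i<n} K̃((x - X_i)/h)`. -/
noncomputable def kdeb {Ω : Type*} (K : ℝ → ℝ) (X : ℕ → Ω → ℝ)
    (n : ℕ) (h x : ℝ) (ω : Ω) : ℝ :=
  (1 / (n * h)) * ∑ i ∈ Finset.range n, ktilde K ((x - X i ω) / h)

set_option maxHeartbeats 1000000 in
/-- for fixed `n ≥ 1`, as `h → 0⁺`,
`E[f̂ᵇ_{n,h}(x)] − f(x) = −(h³/6) f'''(x) ∫ u³ K(u) du + o(h³)`. -/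
theorem bias_kdeb {Ω : Type*} [MeasurableSpace Ω] (P : Measure Ω) [IsProbabilityMeasure P]
    -- the i.i.d. sample with common density f
    (X : ℕ → Ω → ℝ) (hXmeas : ∀ i, Measurable (X i))
    (hXindep : iIndepFun X P)
    (f : ℝ → ℝ) (hfmeas : Measurable f) (hfnonneg : ∀ y, 0 ≤ f y)
    (hXlaw : ∀ i, Measure.map (X i) P = volume.withDensity fun y => ENNReal.ofReal (f y))
    -- the kernel: twice continuously differentiable, K and K'' bounded and of
    -- bounded variation, ∫ K = 1, ∫ u K(u) du = 0, ∫ u² |K(u)| du < ∞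
    (K : ℝ → ℝ) (hKC2 : ContDiff ℝ 2 K)
    (hKbdd : ∃ M, ∀ u, |K u| ≤ M) (hK''bdd : ∃ M, ∀ u, |deriv (deriv K) u| ≤ M)
    (hKbv : BoundedVariationOn K Set.univ)
    (hK''bv : BoundedVariationOn (deriv (deriv K)) Set.univ)
    (hKint : Integrable K volume) (hKone : (∫ u, K u) = 1)
    (hKuint : Integrable (fun u => u * K u) volume) (hKuzero : (∫ u, u * K u) = 0)
    (hKu2int : Integrable (fun u => u ^ 2 * |K u|) volume)
    -- extra moment conditions: ∫ |u|³ |K(u)| du < ∞ and ∫ |u|³ |K''(u)| du < ∞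
    (hKu3int : Integrable (fun u => |u| ^ 3 * |K u|) volume)
    (hK''u3int : Integrable (fun u => |u| ^ 3 * |deriv (deriv K) u|) volume)
    -- decay: uʲ K(u) → 0 and uʲ K'(u) → 0 as |u| → ∞ for j = 0,1,2,3
    (hKdecay : ∀ j : ℕ, j ≤ 3 → Tendsto (fun u => u ^ j * K u) (cocompact ℝ) (𝓝 0))
    (hK'decay : ∀ j : ℕ, j ≤ 3 →
      Tendsto (fun u => u ^ j * deriv K u) (cocompact ℝ) (𝓝 0))
    -- the point x, f bounded and four times continuously differentiable near x
    (x : ℝ) (hfbdd : ∃ M, ∀ y, |f y| ≤ M)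
    (hfC4 : ∃ s ∈ 𝓝 x, ContDiffOn ℝ 4 f s)
    -- fixed sample size n ≥ 1
    (n : ℕ) (hn : 1 ≤ n) :
    (fun h : ℝ =>
        (∫ ω, kdeb K X n h x ω ∂P) - f x
          + h ^ 3 / 6 * deriv (deriv (deriv f)) x * (∫ u, u ^ 3 * K u))
      =o[𝓝[>] (0 : ℝ)] (fun h : ℝ => h ^ 3) := by
  classical
  -- kernel smoothness facts
  have h2 : ContDiff ℝ (1 + 1 : ℕ) K := by exact_mod_cast hKC2
  rw [show ((1 + 1 : ℕ) : WithTop ℕ∞) = (1 : WithTop ℕ∞) + 1 by norm_cast,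
    contDiff_succ_iff_deriv] at h2
  obtain ⟨hdiffK, -, h1⟩ := h2
  rw [contDiff_one_iff_deriv] at h1
  obtain ⟨hdiffK', contK''⟩ := h1
  have hdK : ∀ u, HasDerivAt K (deriv K u) u := fun u => (hdiffK u).hasDerivAt
  have hdK' : ∀ u, HasDerivAt (deriv K) (deriv (deriv K) u) u := fun u => (hdiffK' u).hasDerivAt
  have contK : Continuous K := hKC2.continuous
  set c : ℝ := ∫ v, v ^ 2 * K v with hc
  set Kt : ℝ → ℝ := fun u => K u - 1 / 2 * c * deriv (deriv K) u with hKt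
  have hktilde : ∀ z, ktilde K z = Kt z := fun z => rfl
  have contKt : Continuous Kt := contK.sub (continuous_const.mul contK'')
  obtain ⟨MK, hMK⟩ := hKbdd
  obtain ⟨MK2, hMK2⟩ := hK''bdd
  have hKtbdd : ∀ u, |Kt u| ≤ MK + |1 / 2 * c| * MK2 := by
    intro u
    refine (abs_sub _ _).trans ?_
    rw [abs_mul]
    exact add_le_add (hMK u) (mul_le_mul_of_nonneg_left (hMK2 u) (abs_nonneg _))
  have hKtabs : ∀ u, |Kt u| ≤ |K u| + |1 / 2 * c| * |deriv (deriv K) u| := by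
    intro u
    refine (abs_sub _ _).trans ?_
    rw [abs_mul]
  -- integrability of monomials times K and K''
  have intK2 : Integrable (fun u => u ^ 2 * K u) :=
    bk_integrable_pow_mul contK hKu3int (by norm_num)
  have intK3 : Integrable (fun u => u ^ 3 * K u) :=
    bk_integrable_pow_mul contK hKu3int le_rfl
  have intD0 : Integrable (fun u => deriv (deriv K) u) :=
    bk_integrable_of_cube contK'' hK''u3int
  have intD1 : Integrable (fun u => u * deriv (deriv K) u) := by
    simpa using bk_integrable_pow_mul contK'' hK''u3int (show 1 ≤ 3 by norm_num)
  have intD2 : Integrable (fun u => u ^ 2 * deriv (deriv K) u) :=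
    bk_integrable_pow_mul contK'' hK''u3int (by norm_num)
  have intD3 : Integrable (fun u => u ^ 3 * deriv (deriv K) u) :=
    bk_integrable_pow_mul contK'' hK''u3int le_rfl
  -- integrability of monomials times Kt
  have intKt0 : Integrable Kt := by
    rw [hKt]; exact hKint.sub (intD0.const_mul (1 / 2 * c))
  have intKt1 : Integrable (fun u => u * Kt u) := by
    have heq : (fun u => u * Kt u)
        = fun u => u * K u - 1 / 2 * c * (u * deriv (deriv K) u) := by
      funext u; simp only [hKt]; ring
    rw [heq]; exact hKuint.sub (intD1.const_mul (1 / 2 * c))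
  have intKt2 : Integrable (fun u => u ^ 2 * Kt u) := by
    have heq : (fun u => u ^ 2 * Kt u)
        = fun u => u ^ 2 * K u - 1 / 2 * c * (u ^ 2 * deriv (deriv K) u) := by
      funext u; simp only [hKt]; ring
    rw [heq]; exact intK2.sub (intD2.const_mul (1 / 2 * c))
  have intKt3 : Integrable (fun u => u ^ 3 * Kt u) := by
    have heq : (fun u => u ^ 3 * Kt u)
        = fun u => u ^ 3 * K u - 1 / 2 * c * (u ^ 3 * deriv (deriv K) u) := by
      funext u; simp only [hKt]; ring
    rw [heq]; exact intK3.sub (intD3.const_mul (1 / 2 * c))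
  -- moments of K''
  have mom0 : ∫ u, deriv (deriv K) u = 0 :=
    bk_mom0 hdK' intD0
      (bk_atBot (by simpa using hK'decay 0 (by norm_num)))
      (bk_atTop (by simpa using hK'decay 0 (by norm_num)))
  have mom1 : ∫ u, u * deriv (deriv K) u = 0 :=
    bk_mom1 hdK hdK' intD1
      (bk_atBot (by simpa using hK'decay 1 (by norm_num)))
      (bk_atTop (by simpa using hK'decay 1 (by norm_num)))
      (bk_atBot (by simpa using hKdecay 0 (by norm_num)))
      (bk_atTop (by simpa using hKdecay 0 (by norm_num)))
  have mom2 : ∫ u, u ^ 2 * deriv (deriv K) u = 2 * ∫ u, K u :=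
    bk_mom2 hdK hdK' intD2 hKint
      (bk_atBot (hK'decay 2 (by norm_num))) (bk_atTop (hK'decay 2 (by norm_num)))
      (bk_atBot (by simpa using hKdecay 1 (by norm_num)))
      (bk_atTop (by simpa using hKdecay 1 (by norm_num)))
  have mom3 : ∫ u, u ^ 3 * deriv (deriv K) u = 6 * ∫ u, u * K u :=
    bk_mom3 hdK hdK' intD3 hKuint
      (bk_atBot (hK'decay 3 le_rfl)) (bk_atTop (hK'decay 3 le_rfl))
      (bk_atBot (hKdecay 2 (by norm_num))) (bk_atTop (hKdecay 2 (by norm_num)))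
  -- moments of Kt
  have mt0 : ∫ u, Kt u = 1 := by
    simp only [hKt]
    rw [integral_sub hKint (intD0.const_mul (1 / 2 * c)), integral_const_mul, mom0, hKone]
    ring
  have mt1 : ∫ u, u * Kt u = 0 := by
    have heq : (fun u => u * Kt u)
        = fun u => u * K u - 1 / 2 * c * (u * deriv (deriv K) u) := by
      funext u; simp only [hKt]; ring
    rw [heq, integral_sub hKuint (intD1.const_mul (1 / 2 * c)), integral_const_mul, mom1,
      hKuzero]
    ring
  have mt2 : ∫ u, u ^ 2 * Kt u = 0 := by
    have heq : (fun u => u ^ 2 * Kt u)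
        = fun u => u ^ 2 * K u - 1 / 2 * c * (u ^ 2 * deriv (deriv K) u) := by
      funext u; simp only [hKt]; ring
    rw [heq, integral_sub intK2 (intD2.const_mul (1 / 2 * c)), integral_const_mul, mom2,
      hKone, ← hc]
    ring
  have mt3 : ∫ u, u ^ 3 * Kt u = ∫ u, u ^ 3 * K u := by
    have heq : (fun u => u ^ 3 * Kt u)
        = fun u => u ^ 3 * K u - 1 / 2 * c * (u ^ 3 * deriv (deriv K) u) := by
      funext u; simp only [hKt]; ring
    rw [heq, integral_sub intK3 (intD3.const_mul (1 / 2 * c)), integral_const_mul, mom3,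
      hKuzero]
    ring
  -- Taylor bounds for f near x
  obtain ⟨s, hsnhds, hs4⟩ := hfC4
  have htb := bk_taylor_bound hsnhds hs4
  obtain ⟨C₀, hC₀pos, hC₀⟩ := bk_taylor_global hfbdd (htb 1 one_pos)
  obtain ⟨Mf, hMf⟩ := hfbdd
  -- the remainder integral
  set R : ℝ → ℝ := fun h => ∫ u,
    (f (x + -(h * u)) - f x - -(h * u) * deriv f x - (-(h * u)) ^ 2 / 2 * deriv (deriv f) x
      - (-(h * u)) ^ 3 / 6 * deriv (deriv (deriv f)) x) * Kt u with hR
  -- integrability in h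
  have hint1 : ∀ h : ℝ, Integrable (fun u => f (x - h * u) * Kt u) := by
    intro h
    refine intKt0.bdd_mul ((hfmeas.comp (by fun_prop : Measurable fun u : ℝ =>
      x - h * u)).aestronglyMeasurable) (c := Mf) (ae_of_all _ fun u => ?_)
    rw [Real.norm_eq_abs]; exact hMf _
  have hpoly : ∀ h : ℝ, (fun u => (f x + -(h * u) * deriv f x
        + (-(h * u)) ^ 2 / 2 * deriv (deriv f) x
        + (-(h * u)) ^ 3 / 6 * deriv (deriv (deriv f)) x) * Kt u)
      = fun u => f x * Kt u + (-h * deriv f x) * (u * Kt u)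
        + (h ^ 2 * deriv (deriv f) x / 2) * (u ^ 2 * Kt u)
        + (-(h ^ 3) * deriv (deriv (deriv f)) x / 6) * (u ^ 3 * Kt u) := by
    intro h; funext u; ring
  have hint2 : ∀ h : ℝ, Integrable (fun u => (f x + -(h * u) * deriv f x
      + (-(h * u)) ^ 2 / 2 * deriv (deriv f) x
      + (-(h * u)) ^ 3 / 6 * deriv (deriv (deriv f)) x) * Kt u) := by
    intro h
    rw [hpoly h]
    exact (((intKt0.const_mul _).add (intKt1.const_mul _)).add
      (intKt2.const_mul _)).add (intKt3.const_mul _)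
  -- Step B : algebraic identity
  have stepB : ∀ h : ℝ, (∫ u, f (x - h * u) * Kt u) - f x
      + h ^ 3 / 6 * deriv (deriv (deriv f)) x * (∫ u, u ^ 3 * K u) = R h := by
    intro h
    have hsplit : R h = (∫ u, f (x - h * u) * Kt u)
        - ∫ u, (f x + -(h * u) * deriv f x + (-(h * u)) ^ 2 / 2 * deriv (deriv f) x
          + (-(h * u)) ^ 3 / 6 * deriv (deriv (deriv f)) x) * Kt u := by
      simp only [hR]
      rw [← integral_sub (hint1 h) (hint2 h)]
      congr 1; funext u
      rw [show x + -(h * u) = x - h * u by ring]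
      ring
    have i0 : Integrable (fun u => f x * Kt u) := intKt0.const_mul _
    have i1 : Integrable (fun u => (-h * deriv f x) * (u * Kt u)) := intKt1.const_mul _
    have i2 : Integrable (fun u => (h ^ 2 * deriv (deriv f) x / 2) * (u ^ 2 * Kt u)) :=
      intKt2.const_mul _
    have i3 : Integrable (fun u => (-(h ^ 3) * deriv (deriv (deriv f)) x / 6)
        * (u ^ 3 * Kt u)) := intKt3.const_mul _
    have i01 : Integrable (fun u => f x * Kt u + (-h * deriv f x) * (u * Kt u)) := i0.add i1
    have i012 : Integrable (fun u => f x * Kt u + (-h * deriv f x) * (u * Kt u)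
        + (h ^ 2 * deriv (deriv f) x / 2) * (u ^ 2 * Kt u)) := i01.add i2
    have hval : ∫ u, (f x + -(h * u) * deriv f x + (-(h * u)) ^ 2 / 2 * deriv (deriv f) x
        + (-(h * u)) ^ 3 / 6 * deriv (deriv (deriv f)) x) * Kt u
        = f x - h ^ 3 / 6 * deriv (deriv (deriv f)) x * (∫ u, u ^ 3 * K u) := by
      rw [hpoly h, integral_add i012 i3, integral_add i01 i2,
        integral_add i0 i1, integral_const_mul, integral_const_mul, integral_const_mul,
        integral_const_mul, mt0, mt1, mt2, mt3]
      ring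
    rw [hsplit, hval]
    ring
  -- R is o(h^3)
  have holittle : R =o[𝓝[>] (0 : ℝ)] (fun h : ℝ => h ^ 3) := by
    rw [isLittleO_iff_tendsto' ?hgf]
    case hgf =>
      filter_upwards [self_mem_nhdsWithin] with h hh hcontra
      exact absurd hcontra (pow_ne_zero 3 (ne_of_gt hh))
    have hdct := tendsto_integral_filter_of_dominated_convergence
      (μ := volume) (l := 𝓝[>] (0:ℝ))
      (F := fun (h : ℝ) (u : ℝ) => (f (x + -(h * u)) - f x - -(h * u) * deriv f x
        - (-(h * u)) ^ 2 / 2 * deriv (deriv f) x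
        - (-(h * u)) ^ 3 / 6 * deriv (deriv (deriv f)) x) * Kt u / h ^ 3)
      (f := fun _ => (0:ℝ))
      (fun u => C₀ * (|u| ^ 3 * |K u|) + C₀ * |1 / 2 * c| * (|u| ^ 3 * |deriv (deriv K) u|))
      (Eventually.of_forall fun h => by
        apply Measurable.aestronglyMeasurable
        fun_prop)
      (by
        filter_upwards [self_mem_nhdsWithin] with h hh
        refine Eventually.of_forall fun u => ?_
        have hh' : (0:ℝ) < h := hh
        have h3pos : (0:ℝ) < h ^ 3 := by positivity
        have habs1 : |(-(h * u))| = h * |u| := by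
          rw [abs_neg, abs_mul, abs_of_pos hh']
        have e4 : |f (x + -(h * u)) - f x - -(h * u) * deriv f x
            - (-(h * u)) ^ 2 / 2 * deriv (deriv f) x
            - (-(h * u)) ^ 3 / 6 * deriv (deriv (deriv f)) x|
            ≤ C₀ * (h ^ 3 * |u| ^ 3) := by
          have := hC₀ (-(h * u))
          rwa [habs1, mul_pow] at this
        rw [Real.norm_eq_abs, abs_div, abs_mul, abs_pow, abs_of_pos hh',
          div_le_iff₀ h3pos]
        calc |f (x + -(h * u)) - f x - -(h * u) * deriv f x
              - (-(h * u)) ^ 2 / 2 * deriv (deriv f) x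
              - (-(h * u)) ^ 3 / 6 * deriv (deriv (deriv f)) x| * |Kt u|
            ≤ (C₀ * (h ^ 3 * |u| ^ 3)) * (|K u| + |1 / 2 * c| * |deriv (deriv K) u|) :=
              mul_le_mul e4 (hKtabs u) (abs_nonneg _) (by positivity)
          _ = (C₀ * (|u| ^ 3 * |K u|)
              + C₀ * |1 / 2 * c| * (|u| ^ 3 * |deriv (deriv K) u|)) * h ^ 3 := by ring)
      (((hKu3int.const_mul C₀).add (hK''u3int.const_mul (C₀ * |1 / 2 * c|))).congr
        (by filter_upwards with u; simp only [Pi.add_apply]; try ring))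
      (Eventually.of_forall fun u => by
        rw [NormedAddCommGroup.tendsto_nhds_zero]
        intro ε hε
        set D : ℝ := (|u| ^ 3 + 1) * (|Kt u| + 1) with hD
        have hDpos : 0 < D := by positivity
        obtain ⟨δ, hδ, hTδ⟩ := htb (ε / (2 * D)) (by positivity)
        filter_upwards [Ioo_mem_nhdsGT_of_mem
          (show (0:ℝ) ∈ Ico 0 (δ / (|u| + 1)) from ⟨le_refl _, by positivity⟩)] with h hh
        obtain ⟨hh0, hhlt⟩ := hh
        have h3pos : (0:ℝ) < h ^ 3 := by positivity
        have habs1 : |(-(h * u))| = h * |u| := by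
          rw [abs_neg, abs_mul, abs_of_pos hh0]
        have hle : |(-(h * u))| ≤ δ := by
          rw [habs1]
          have h1 : h * (|u| + 1) < δ := (lt_div_iff₀ (by positivity)).1 hhlt
          nlinarith [abs_nonneg u]
        have e4 := hTδ (-(h * u)) hle
        rw [habs1, mul_pow] at e4
        rw [Real.norm_eq_abs, abs_div, abs_mul, abs_pow, abs_of_pos hh0,
          div_lt_iff₀ h3pos]
        have key1 : |f (x + -(h * u)) - f x - -(h * u) * deriv f x
            - (-(h * u)) ^ 2 / 2 * deriv (deriv f) x
            - (-(h * u)) ^ 3 / 6 * deriv (deriv (deriv f)) x| * |Kt u|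
            ≤ (ε / (2 * D) * (h ^ 3 * |u| ^ 3)) * |Kt u| :=
          mul_le_mul_of_nonneg_right e4 (abs_nonneg _)
        have hDle : |u| ^ 3 * |Kt u| ≤ D := by
          rw [hD]
          nlinarith [abs_nonneg (Kt u), pow_nonneg (abs_nonneg u) 3]
        have key2 : (ε / (2 * D) * (h ^ 3 * |u| ^ 3)) * |Kt u|
            ≤ ε / (2 * D) * h ^ 3 * D := by
          calc (ε / (2 * D) * (h ^ 3 * |u| ^ 3)) * |Kt u|
              = ε / (2 * D) * h ^ 3 * (|u| ^ 3 * |Kt u|) := by ring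
            _ ≤ ε / (2 * D) * h ^ 3 * D :=
              mul_le_mul_of_nonneg_left hDle (by positivity)
        have key3 : ε / (2 * D) * h ^ 3 * D = ε * h ^ 3 / 2 := by
          rw [div_mul_eq_mul_div, div_mul_eq_mul_div, div_eq_div_iff (by positivity)
            (by norm_num : (2:ℝ) ≠ 0)]
          ring
        have hεh : 0 < ε * h ^ 3 := mul_pos hε h3pos
        linarith)
    simp only [integral_zero] at hdct
    apply hdct.congr
    intro h
    simp only [hR]
    rw [integral_div]
  -- Step A : expectation computation for h > 0
  have stepA : ∀ᶠ h in 𝓝[>] (0:ℝ),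
      (∫ ω, kdeb K X n h x ω ∂P) = ∫ u, f (x - h * u) * Kt u := by
    filter_upwards [self_mem_nhdsWithin] with h hh
    have hh' : (0:ℝ) < h := hh
    have hh0 : h ≠ 0 := ne_of_gt hh'
    have hn0 : (n:ℝ) ≠ 0 := Nat.cast_ne_zero.2 (by omega)
    have hmω : ∀ i : ℕ, Measurable fun ω => Kt ((x - X i ω) / h) := fun i =>
      contKt.measurable.comp ((measurable_const.sub (hXmeas i)).div_const h)
    have hiω : ∀ i : ℕ, Integrable (fun ω => Kt ((x - X i ω) / h)) P := fun i =>
      Integrable.mono' (integrable_const (MK + |1 / 2 * c| * MK2))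
        (hmω i).aestronglyMeasurable
        (ae_of_all _ fun ω => by rw [Real.norm_eq_abs]; exact hKtbdd _)
    have key : ∀ i : ℕ, ∫ ω, Kt ((x - X i ω) / h) ∂P
        = h * ∫ u, f (x - h * u) * Kt u := by
      intro i
      have e0 : ∫ ω, Kt ((x - X i ω) / h) ∂P
          = ∫ y, Kt ((x - y) / h) ∂(Measure.map (X i) P) :=
        (integral_map (hXmeas i).aemeasurable
          ((contKt.comp ((continuous_const.sub continuous_id).div_const h)
            ).aestronglyMeasurable)).symm
      rw [e0, hXlaw i]
      have e1 : ∫ y, Kt ((x - y) / h)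
            ∂(volume.withDensity fun y => ENNReal.ofReal (f y))
          = ∫ y, f y * Kt ((x - y) / h) := by
        rw [show (fun y => ENNReal.ofReal (f y))
            = fun y => ((Real.toNNReal (f y) : ℝ≥0) : ℝ≥0∞) from rfl,
          integral_withDensity_eq_integral_smul hfmeas.real_toNNReal]
        congr 1; funext y
        rw [NNReal.smul_def, Real.coe_toNNReal _ (hfnonneg y), smul_eq_mul]
      rw [e1]
      have e2 := MeasureTheory.Measure.integral_comp_mul_left
        (fun t => f (x + t) * Kt ((x - (x + t)) / h)) (-h)
      have e3 : (∫ y, f (x + y) * Kt ((x - (x + y)) / h))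
          = ∫ y, f y * Kt ((x - y) / h) :=
        integral_add_left_eq_self (fun y => f y * Kt ((x - y) / h)) x
      have e4 : (fun u : ℝ => f (x + -h * u) * Kt ((x - (x + -h * u)) / h))
          = fun u : ℝ => f (x - h * u) * Kt u := by
        funext u
        rw [show x + -h * u = x - h * u by ring,
          show (x - (x - h * u)) / h = u by field_simp; ring]
      rw [e4, e3] at e2
      rw [e2, smul_eq_mul, abs_inv, abs_neg, abs_of_pos hh']
      field_simp
    have hkdeq : (fun ω => kdeb K X n h x ω)
        = fun ω => (1 / (n * h)) * ∑ i ∈ Finset.range n, Kt ((x - X i ω) / h) := by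
      funext ω
      simp only [kdeb, hktilde]
    rw [hkdeq]
    rw [integral_const_mul, integral_finset_sum _ (fun i _ => hiω i)]
    rw [Finset.sum_congr rfl fun i _ => key i, Finset.sum_const, Finset.card_range,
      nsmul_eq_mul]
    field_simp
  -- conclude
  have hEq : ∀ᶠ h in 𝓝[>] (0:ℝ), R h
      = (∫ ω, kdeb K X n h x ω ∂P) - f x
        + h ^ 3 / 6 * deriv (deriv (deriv f)) x * (∫ u, u ^ 3 * K u) := by
    filter_upwards [stepA] with h hA
    rw [hA]
    exact (stepB h).symm
  exact holittle.congr' hEq EventuallyEq.rfl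
end

section
/- Fix x ∈ ℝ. Assume f is bounded on ℝ and continuous at x, and ∫ K̃(u)² du < ∞. If (h_n) is a sequence of bandwidths with h_n → 0 and n h_n → ∞, then the variance of the bias-reduced kernel estimator satisfies Var(f̂ᵇ_{n,h_n}(x)) = (1/(n h_n)) f(x) ∫ K̃(u)² du + o(1/(n h_n)) as n → ∞. -/
open MeasureTheory ProbabilityTheory Filter Asymptotics Topology

private lemma amgm_aux {k s T : ℝ} (hs : 0 ≤ s) (hT : 0 < T) :
    k * s ≤ (T * (k ^ 2 * s) + T⁻¹ * s) / 2 := by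
  have h1 : T * T⁻¹ = 1 := mul_inv_cancel₀ hT.ne'
  nlinarith [mul_nonneg (mul_nonneg (inv_pos.2 hT).le hs) (sq_nonneg (T * k - 1))]

private lemma subst_aux (f φ : ℝ → ℝ) (x hn : ℝ) (hhn : 0 < hn) :
    (∫ u, φ u * f (x - hn * u)) = hn⁻¹ * ∫ y, φ ((x - y) / hn) * f y := by
  have h1 : (∫ u, φ u * f (x - hn * u))
      = ∫ u, (fun t => φ (t / hn) * f (x - t)) (hn * u) := by
    congr 1; funext u
    simp [mul_div_cancel_left₀ _ hhn.ne']
  rw [h1, MeasureTheory.Measure.integral_comp_mul_left (fun t => φ (t / hn) * f (x - t)) hn,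
    abs_of_pos (inv_pos.2 hhn), smul_eq_mul]
  congr 1
  rw [← integral_sub_left_eq_self (fun y => φ ((x - y) / hn) * f y) volume x]
  congr 1; funext t; simp

set_option maxHeartbeats 1000000 in
/-- if `h_n → 0` and `n h_n → ∞` then
`Var(f̂ᵇ_{n,h_n}(x)) = (1/(n h_n)) f(x) ∫ K̃(u)² du + o(1/(n h_n))` as `n → ∞`. -/
theorem variance_kdeb {Ω : Type*} [MeasurableSpace Ω] (P : Measure Ω) [IsProbabilityMeasure P]
    -- the i.i.d. sample with common density f
    (X : ℕ → Ω → ℝ) (hXmeas : ∀ i, Measurable (X i))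
    (hXindep : iIndepFun X P)
    (f : ℝ → ℝ) (hfmeas : Measurable f) (hfnonneg : ∀ y, 0 ≤ f y)
    (hXlaw : ∀ i, Measure.map (X i) P = volume.withDensity fun y => ENNReal.ofReal (f y))
    -- the kernel: twice continuously differentiable, K and K'' bounded and of
    -- bounded variation, ∫ K = 1, ∫ u K(u) du = 0, ∫ u² |K(u)| du < ∞
    (K : ℝ → ℝ) (hKC2 : ContDiff ℝ 2 K)
    (hKbdd : ∃ M, ∀ u, |K u| ≤ M) (hK''bdd : ∃ M, ∀ u, |deriv (deriv K) u| ≤ M)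
    (hKbv : BoundedVariationOn K Set.univ)
    (hK''bv : BoundedVariationOn (deriv (deriv K)) Set.univ)
    (hKint : Integrable K volume) (hKone : (∫ u, K u) = 1)
    (hKuint : Integrable (fun u => u * K u) volume) (hKuzero : (∫ u, u * K u) = 0)
    (hKu2int : Integrable (fun u => u ^ 2 * |K u|) volume)
    -- ∫ K̃(u)² du < ∞
    (hKtsqint : Integrable (fun u => (ktilde K u) ^ 2) volume)
    -- the point x, f bounded and continuous at x
    (x : ℝ) (hfbdd : ∃ M, ∀ y, |f y| ≤ M) (hfcont : ContinuousAt f x)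
    -- bandwidth sequence with h_n → 0 and n h_n → ∞
    (h : ℕ → ℝ) (hpos : ∀ n, 0 < h n)
    (hto0 : Tendsto h atTop (𝓝 0))
    (hnh : Tendsto (fun n : ℕ => (n : ℝ) * h n) atTop atTop) :
    (fun n : ℕ =>
        (∫ ω, (kdeb K X n (h n) x ω - ∫ ω', kdeb K X n (h n) x ω' ∂P) ^ 2 ∂P)
          - 1 / ((n : ℝ) * h n) * f x * (∫ u, (ktilde K u) ^ 2))
      =o[atTop] (fun n : ℕ => 1 / ((n : ℝ) * h n)) := by
  classical
  obtain ⟨MK, hMK⟩ := hKbdd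
  obtain ⟨MK2, hMK2⟩ := hK''bdd
  obtain ⟨Mf, hMf⟩ := hfbdd
  have hK''cont : Continuous (deriv (deriv K)) := by
    have h := ContDiff.iterate_deriv' 0 2 (f := K) (by exact_mod_cast hKC2)
    simp only [Function.iterate_succ, Function.iterate_zero, Function.comp] at h
    exact h.continuous
  have hktcont : Continuous (ktilde K) :=
    (hKC2.continuous).sub (continuous_const.mul hK''cont)
  set CT : ℝ := MK + |1 / 2 * (∫ v, v ^ 2 * K v)| * MK2 with hCTdef
  have hCT : ∀ u, |ktilde K u| ≤ CT := by
    intro u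
    have h1 : |ktilde K u| ≤ |K u| + |1 / 2 * (∫ v, v ^ 2 * K v)| * |deriv (deriv K) u| := by
      rw [ktilde, ← abs_mul]
      exact abs_sub _ _
    have hM2 : (0:ℝ) ≤ MK2 := le_trans (abs_nonneg _) (hMK2 0)
    refine h1.trans ?_
    have := mul_le_mul_of_nonneg_left (hMK2 u) (abs_nonneg (1 / 2 * (∫ v, v ^ 2 * K v)))
    exact add_le_add (hMK u) this
  have hCT0 : (0:ℝ) ≤ CT := le_trans (abs_nonneg _) (hCT 0)
  have hMf0 : (0:ℝ) ≤ Mf := le_trans (abs_nonneg _) (hMf 0)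
  have hfle : ∀ y, f y ≤ Mf := fun y => (le_abs_self _).trans (hMf y)
  -- f is an integrable probability density
  have hlf : (∫⁻ y, ENNReal.ofReal (f y)) = 1 := by
    have hPm : IsProbabilityMeasure (Measure.map (X 0) P) :=
      Measure.isProbabilityMeasure_map (hXmeas 0).aemeasurable
    rw [hXlaw 0] at hPm
    have h2 := hPm.measure_univ
    rwa [withDensity_apply _ MeasurableSet.univ, setLIntegral_univ] at h2
  have hf_int : Integrable f volume := by
    refine ⟨hfmeas.aestronglyMeasurable, ?_⟩
    rw [hasFiniteIntegral_iff_norm]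
    have : (∫⁻ y, ENNReal.ofReal ‖f y‖) = 1 := by
      rw [← hlf]; congr 1; funext y
      rw [Real.norm_eq_abs, abs_of_nonneg (hfnonneg y)]
    rw [this]; exact ENNReal.one_lt_top
  have hfone : (∫ y, f y) = 1 := by
    rw [integral_eq_lintegral_of_nonneg_ae (ae_of_all _ hfnonneg)
      hfmeas.aestronglyMeasurable, hlf]
    simp
  -- integrating a function of X i
  have law : ∀ (i : ℕ) (φ : ℝ → ℝ), Measurable φ →
      (∫ ω, φ (X i ω) ∂P) = ∫ y, f y * φ y := by
    intro i φ hφ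
    rw [← integral_map (hXmeas i).aemeasurable hφ.aestronglyMeasurable, hXlaw i]
    have hd : (fun y => ENNReal.ofReal (f y)) = fun y => ((f y).toNNReal : ENNReal) := rfl
    rw [hd, integral_withDensity_eq_integral_smul hfmeas.real_toNNReal φ]
    congr 1; funext y
    simp [NNReal.smul_def, Real.coe_toNNReal _ (hfnonneg y)]
  set I : ℝ := ∫ u, (ktilde K u) ^ 2 with hIdef
  set a : ℕ → ℝ := fun n => ∫ u, (ktilde K u) ^ 2 * f (x - h n * u) with hadef
  set b : ℕ → ℝ := fun n => ∫ u, ktilde K u * f (x - h n * u) with hbdef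
  set d : ℕ → ℝ := fun n => a n - h n * b n ^ 2 - f x * I with hddef
  -- integrabilities
  have hfcomp : ∀ n : ℕ, Integrable (fun u => f (x - h n * u)) volume := by
    intro n
    have h1 : Integrable (fun t => f (x - t)) volume := hf_int.comp_sub_left x
    have h2 := h1.comp_mul_left' (R := h n) (hpos n).ne'
    simpa using h2
  have hbint : ∀ n : ℕ, Integrable (fun u => ktilde K u * f (x - h n * u)) volume := by
    intro n
    refine ((hfcomp n).const_mul CT).mono'
      ((hktcont.measurable.mul ((hfmeas.comp
        (measurable_const.sub (measurable_id.const_mul (h n)))))).aestronglyMeasurable)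
      (ae_of_all _ fun u => ?_)
    rw [Real.norm_eq_abs, abs_mul, abs_of_nonneg (hfnonneg _)]
    exact mul_le_mul_of_nonneg_right (hCT u) (hfnonneg _)
  have hsqint : ∀ n : ℕ, Integrable (fun u => (ktilde K u) ^ 2 * f (x - h n * u)) volume := by
    intro n
    refine (hKtsqint.mul_const Mf).mono'
      (((hktcont.pow 2).measurable.mul ((hfmeas.comp
        (measurable_const.sub (measurable_id.const_mul (h n)))))).aestronglyMeasurable)
      (ae_of_all _ fun u => ?_)
    rw [Real.norm_eq_abs, abs_mul, abs_of_nonneg (hfnonneg _), abs_of_nonneg (sq_nonneg _)]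
    exact mul_le_mul_of_nonneg_left (hfle _) (sq_nonneg _)
  -- the exact variance identity
  have key : ∀ n : ℕ, 1 ≤ n →
      (∫ ω, (kdeb K X n (h n) x ω - ∫ ω', kdeb K X n (h n) x ω' ∂P) ^ 2 ∂P)
        = 1 / ((n : ℝ) * h n) * a n - 1 / (n : ℝ) * b n ^ 2 := by
    intro n hn1
    have hnpos : (0:ℝ) < n := by exact_mod_cast hn1
    have hhnpos : 0 < h n := hpos n
    set g : ℝ → ℝ := fun y => ktilde K ((x - y) / h n) with hgdef
    have hgmeas : Measurable g := by
      apply (hktcont.comp (by fun_prop)).measurable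
    have hgbdd : ∀ y, |g y| ≤ CT := fun y => hCT _
    have hYmeas : ∀ i : ℕ, Measurable (fun ω => g (X i ω)) := fun i => hgmeas.comp (hXmeas i)
    have hYmem : ∀ i : ℕ, MemLp (fun ω => g (X i ω)) 2 P := fun i =>
      MemLp.of_bound (hYmeas i).aestronglyMeasurable CT (ae_of_all _ fun ω => by
        simpa [Real.norm_eq_abs] using hgbdd (X i ω))
    have hkdeb_eq : kdeb K X n (h n) x
        = fun ω => (1 / ((n:ℝ) * h n)) * (∑ i ∈ Finset.range n, fun ω' => g (X i ω')) ω := by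
      funext ω; simp [kdeb, Finset.sum_apply, hgdef]
    have hSmem : MemLp (∑ i ∈ Finset.range n, fun ω' => g (X i ω')) 2 P :=
      memLp_finset_sum' _ fun i _ => hYmem i
    have hkmem : MemLp (kdeb K X n (h n) x) 2 P := by
      rw [hkdeb_eq]; exact hSmem.const_mul _
    have hvar : (∫ ω, (kdeb K X n (h n) x ω - ∫ ω', kdeb K X n (h n) x ω' ∂P) ^ 2 ∂P)
        = variance (kdeb K X n (h n) x) P := by
      rw [variance_eq_integral hkmem.aemeasurable]
    rw [hvar, hkdeb_eq, variance_const_mul,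
      IndepFun.variance_sum (fun i _ => hYmem i)
        (fun i _ j _ hij => (hXindep.indepFun hij).comp hgmeas hgmeas)]
    have hsub2 : (∫ y, f y * g y ^ 2) = h n * a n := by
      have hs := subst_aux f (fun u => (ktilde K u) ^ 2) x (h n) hhnpos
      have ha_n : a n = (h n)⁻¹ * ∫ y, (fun u => (ktilde K u) ^ 2) ((x - y) / h n) * f y := by
        simp only [hadef]; exact hs
      have h2 : (∫ y, f y * g y ^ 2) = ∫ y, (fun u => (ktilde K u) ^ 2) ((x - y) / h n) * f y := by
        congr 1; funext y; simp [hgdef, mul_comm]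
      rw [h2, ha_n, ← mul_assoc, mul_inv_cancel₀ hhnpos.ne', one_mul]
    have hsub1 : (∫ y, f y * g y) = h n * b n := by
      have hs := subst_aux f (ktilde K) x (h n) hhnpos
      have hb_n : b n = (h n)⁻¹ * ∫ y, ktilde K ((x - y) / h n) * f y := by
        simp only [hbdef]; exact hs
      have h2 : (∫ y, f y * g y) = ∫ y, ktilde K ((x - y) / h n) * f y := by
        congr 1; funext y; simp [hgdef, mul_comm]
      rw [h2, hb_n, ← mul_assoc, mul_inv_cancel₀ hhnpos.ne', one_mul]
    have hvi : ∀ i : ℕ, variance (fun ω => g (X i ω)) P = h n * a n - (h n * b n) ^ 2 := by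
      intro i
      rw [variance_eq_sub (hYmem i)]
      have h2 : (∫ ω, ((fun ω' => g (X i ω')) ^ 2) ω ∂P) = ∫ y, f y * g y ^ 2 := by
        have hl := law i (fun y => g y ^ 2) (hgmeas.pow_const 2)
        simpa using hl
      have h1 : (∫ ω, g (X i ω) ∂P) = ∫ y, f y * g y := law i g hgmeas
      rw [h2, h1, hsub2, hsub1]
    simp only [hvi, Finset.sum_const, Finset.card_range, nsmul_eq_mul]
    field_simp
  -- limits
  have ha_lim : Tendsto a atTop (𝓝 (f x * I)) := by
    have hfx : f x * I = ∫ u, (ktilde K u) ^ 2 * f x := by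
      rw [integral_mul_const, hIdef, mul_comm]
    rw [hfx, hadef]
    refine tendsto_integral_of_dominated_convergence (fun u => (ktilde K u) ^ 2 * Mf)
      (fun n => (((hktcont.pow 2).measurable.mul ((hfmeas.comp
        (measurable_const.sub (measurable_id.const_mul (h n)))))).aestronglyMeasurable))
      (hKtsqint.mul_const Mf)
      (fun n => ae_of_all _ fun u => ?_) (ae_of_all _ fun u => ?_)
    · rw [Real.norm_eq_abs, abs_mul, abs_of_nonneg (hfnonneg _), abs_of_nonneg (sq_nonneg _)]
      exact mul_le_mul_of_nonneg_left (hfle _) (sq_nonneg _)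
    · refine Tendsto.const_mul _ (hfcont.tendsto.comp ?_)
      have h1 : Tendsto (fun n : ℕ => h n * u) atTop (𝓝 0) := by
        simpa using hto0.mul_const u
      have h2 := tendsto_const_nhds (x := x) (f := atTop (α := ℕ)) |>.sub h1
      simpa using h2
  -- the tail of ∫ K̃² is small
  have hUnion : (⋃ R : ℕ, Set.Icc (-(R:ℝ)) (R:ℝ)) = Set.univ := by
    ext y
    simp only [Set.mem_iUnion, Set.mem_Icc, Set.mem_univ, iff_true]
    obtain ⟨R, hR⟩ := exists_nat_ge |y|
    exact ⟨R, neg_le_of_abs_le hR, le_of_abs_le hR⟩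
  have htail : Tendsto (fun R : ℕ => ∫ u in Set.Icc (-(R:ℝ)) (R:ℝ), (ktilde K u) ^ 2)
      atTop (𝓝 I) := by
    have hmono : Monotone fun R : ℕ => Set.Icc (-(R:ℝ)) (R:ℝ) := by
      intro R R' hRR'
      exact Set.Icc_subset_Icc (neg_le_neg (by exact_mod_cast hRR')) (by exact_mod_cast hRR')
    have := tendsto_setIntegral_of_monotone (fun R : ℕ => measurableSet_Icc) hmono
      (by rw [hUnion]; exact integrableOn_univ.2 hKtsqint)
    rwa [hUnion, setIntegral_univ] at this
  -- √h n * |b n| → 0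
  have hb2 : Tendsto (fun n => Real.sqrt (h n) * |b n|) atTop (𝓝 0) := by
    rw [NormedAddCommGroup.tendsto_nhds_zero]
    intro ε hε
    have hMf1 : (0:ℝ) < Mf + 1 := by linarith
    set δ : ℝ := (ε / (2 * (Mf + 1))) ^ 2 with hδdef
    have hδpos : 0 < δ := by positivity
    have hsqδ : Real.sqrt δ = ε / (2 * (Mf + 1)) := Real.sqrt_sq (by positivity)
    have hsqδpos : 0 < Real.sqrt δ := Real.sqrt_pos.2 hδpos
    -- choose R with small tail
    obtain ⟨R, hR⟩ : ∃ R : ℕ,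
        I - (∫ u in Set.Icc (-(R:ℝ)) (R:ℝ), (ktilde K u) ^ 2) ≤ δ := by
      have h1 : ∀ᶠ R : ℕ in atTop,
          I - δ < ∫ u in Set.Icc (-(R:ℝ)) (R:ℝ), (ktilde K u) ^ 2 := by
        refine htail.eventually (eventually_gt_nhds ?_)
        linarith
      obtain ⟨R, hR⟩ := h1.exists
      exact ⟨R, by linarith⟩
    have htail_le : (∫ u in (Set.Icc (-(R:ℝ)) (R:ℝ))ᶜ, (ktilde K u) ^ 2) ≤ δ := by
      have h1 := integral_add_compl (measurableSet_Icc (a := -(R:ℝ)) (b := (R:ℝ))) hKtsqint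
      have h2 : (∫ u in (Set.Icc (-(R:ℝ)) (R:ℝ))ᶜ, (ktilde K u) ^ 2)
          = I - ∫ u in Set.Icc (-(R:ℝ)) (R:ℝ), (ktilde K u) ^ 2 := by
        rw [hIdef, ← h1]; ring
      rw [h2]; exact hR
    -- eventual smallness of the Icc part
    have hsqrt0 : Tendsto (fun n => Real.sqrt (h n)) atTop (𝓝 0) := by
      have := (Real.continuous_sqrt.tendsto 0).comp hto0
      simpa [Function.comp_def] using this
    have hsmall : ∀ᶠ n in atTop,
        Real.sqrt (h n) * (CT * Mf * (2 * R)) < ε / 2 := by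
      rcases le_or_gt (CT * Mf * (2 * R)) 0 with hc | hc
      · refine Eventually.of_forall fun n => ?_
        have h1 : Real.sqrt (h n) * (CT * Mf * (2 * R)) ≤ 0 :=
          mul_nonpos_of_nonneg_of_nonpos (Real.sqrt_nonneg _) hc
        exact h1.trans_lt (by positivity)
      · have h1 : Tendsto (fun n => Real.sqrt (h n) * (CT * Mf * (2 * R))) atTop (𝓝 0) := by
          simpa using hsqrt0.mul_const (CT * Mf * (2 * R))
        refine h1.eventually (eventually_lt_nhds (by positivity))
    filter_upwards [hsmall] with n hns
    have hhnpos : 0 < h n := hpos n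
    have hshn : 0 < Real.sqrt (h n) := Real.sqrt_pos.2 hhnpos
    set T : ℝ := (Real.sqrt (h n) * Real.sqrt δ)⁻¹ with hTdef
    have hTpos : 0 < T := by positivity
    set s : Set ℝ := Set.Icc (-(R:ℝ)) (R:ℝ) with hsdef
    -- decompose b n
    have hbsplit : b n = (∫ u in s, ktilde K u * f (x - h n * u))
        + ∫ u in sᶜ, ktilde K u * f (x - h n * u) := by
      rw [hbdef]
      exact (integral_add_compl measurableSet_Icc (hbint n)).symm
    -- Icc part
    have hIccpart : |∫ u in s, ktilde K u * f (x - h n * u)| ≤ CT * Mf * (2 * R) := by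
      have hvol : volume s < ⊤ := by
        rw [hsdef, Real.volume_Icc]; exact ENNReal.ofReal_lt_top
      have h1 : ‖∫ u in s, ktilde K u * f (x - h n * u)‖ ≤ (CT * Mf) * (volume s).toReal :=
        norm_setIntegral_le_of_norm_le_const hvol
          (fun u _ => by
            rw [Real.norm_eq_abs, abs_mul, abs_of_nonneg (hfnonneg _)]
            exact mul_le_mul (hCT u) (hfle _) (hfnonneg _) hCT0)
      rw [Real.norm_eq_abs] at h1
      refine h1.trans (le_of_eq ?_)
      have hvol2 : (volume s).toReal = 2 * R := by
        rw [hsdef, Real.volume_Icc,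
          ENNReal.toReal_ofReal (by linarith [Nat.cast_nonneg (α := ℝ) R])]
        ring
      rw [hvol2]
    -- complement part
    have hc1 : (∫ u in sᶜ, (ktilde K u) ^ 2 * f (x - h n * u)) ≤ Mf * δ := by
      have h1 : (∫ u in sᶜ, (ktilde K u) ^ 2 * f (x - h n * u))
          ≤ ∫ u in sᶜ, (ktilde K u) ^ 2 * Mf := by
        refine setIntegral_mono_on (hsqint n).integrableOn
          (hKtsqint.mul_const Mf).integrableOn measurableSet_Icc.compl fun u _ => ?_
        exact mul_le_mul_of_nonneg_left (hfle _) (sq_nonneg _)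
      refine h1.trans ?_
      rw [integral_mul_const, mul_comm]
      exact mul_le_mul_of_nonneg_left htail_le hMf0
    have hc0 : (∫ u in sᶜ, f (x - h n * u)) ≤ (h n)⁻¹ := by
      have h1 : (∫ u in sᶜ, f (x - h n * u)) ≤ ∫ u, f (x - h n * u) :=
        setIntegral_le_integral (hfcomp n) (ae_of_all _ fun u => hfnonneg _)
      refine h1.trans ?_
      have h0 := subst_aux f (fun _ => (1:ℝ)) x (h n) hhnpos
      simp only [one_mul] at h0
      rw [h0, hfone, mul_one]
    have hcompart : |∫ u in sᶜ, ktilde K u * f (x - h n * u)|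
        ≤ (T * (Mf * δ) + T⁻¹ * (h n)⁻¹) / 2 := by
      have h1 : |∫ u in sᶜ, ktilde K u * f (x - h n * u)|
          ≤ ∫ u in sᶜ, |ktilde K u * f (x - h n * u)| := by
        rw [← Real.norm_eq_abs]
        exact (norm_integral_le_integral_norm _).trans (le_of_eq (by
          congr 1))
      refine h1.trans ?_
      have h2 : (∫ u in sᶜ, |ktilde K u * f (x - h n * u)|)
          ≤ ∫ u in sᶜ, (T * ((ktilde K u) ^ 2 * f (x - h n * u))
              + T⁻¹ * f (x - h n * u)) / 2 := by
        refine setIntegral_mono_on (hbint n).abs.integrableOn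
          ((((hsqint n).const_mul T).add ((hfcomp n).const_mul T⁻¹)).div_const 2).integrableOn
          measurableSet_Icc.compl fun u _ => ?_
        rw [abs_mul, abs_of_nonneg (hfnonneg _)]
        have := amgm_aux (k := |ktilde K u|) (s := f (x - h n * u)) (hfnonneg _) hTpos
        rwa [sq_abs] at this
      refine h2.trans ?_
      rw [integral_div, integral_add (((hsqint n).const_mul T).integrableOn)
        (((hfcomp n).const_mul T⁻¹).integrableOn), integral_const_mul, integral_const_mul]
      have h3 : T * (∫ u in sᶜ, (ktilde K u) ^ 2 * f (x - h n * u)) ≤ T * (Mf * δ) :=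
        mul_le_mul_of_nonneg_left hc1 hTpos.le
      have h4 : T⁻¹ * (∫ u in sᶜ, f (x - h n * u)) ≤ T⁻¹ * (h n)⁻¹ :=
        mul_le_mul_of_nonneg_left hc0 (inv_pos.2 hTpos).le
      linarith
    -- combine
    have hbnd : Real.sqrt (h n) * |b n|
        ≤ Real.sqrt (h n) * (CT * Mf * (2 * R))
          + Real.sqrt (h n) * ((T * (Mf * δ) + T⁻¹ * (h n)⁻¹) / 2) := by
      have h1 : |b n| ≤ CT * Mf * (2 * R) + (T * (Mf * δ) + T⁻¹ * (h n)⁻¹) / 2 := by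
        rw [hbsplit]
        exact (abs_add_le _ _).trans (add_le_add hIccpart hcompart)
      calc Real.sqrt (h n) * |b n|
          ≤ Real.sqrt (h n) * (CT * Mf * (2 * R) + (T * (Mf * δ) + T⁻¹ * (h n)⁻¹) / 2) :=
            mul_le_mul_of_nonneg_left h1 (Real.sqrt_nonneg _)
        _ = _ := by ring
    have hT1 : Real.sqrt (h n) * T = (Real.sqrt δ)⁻¹ := by
      rw [hTdef, mul_inv, ← mul_assoc, mul_inv_cancel₀ hshn.ne', one_mul]
    have hT2 : Real.sqrt (h n) * (T⁻¹ * (h n)⁻¹) = Real.sqrt δ := by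
      have hss : Real.sqrt (h n) * Real.sqrt (h n) = h n := Real.mul_self_sqrt hhnpos.le
      rw [hTdef, inv_inv]
      calc Real.sqrt (h n) * (Real.sqrt (h n) * Real.sqrt δ * (h n)⁻¹)
          = (Real.sqrt (h n) * Real.sqrt (h n)) * Real.sqrt δ * (h n)⁻¹ := by ring
        _ = h n * Real.sqrt δ * (h n)⁻¹ := by rw [hss]
        _ = Real.sqrt δ := by field_simp
    have hmain : Real.sqrt (h n) * ((T * (Mf * δ) + T⁻¹ * (h n)⁻¹) / 2)
        = (Mf * δ * (Real.sqrt δ)⁻¹ + Real.sqrt δ) / 2 := by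
      have e1 : Real.sqrt (h n) * (T * (Mf * δ)) = Mf * δ * (Real.sqrt δ)⁻¹ := by
        rw [← mul_assoc, hT1]; ring
      calc Real.sqrt (h n) * ((T * (Mf * δ) + T⁻¹ * (h n)⁻¹) / 2)
          = (Real.sqrt (h n) * (T * (Mf * δ)) + Real.sqrt (h n) * (T⁻¹ * (h n)⁻¹)) / 2 := by
            ring
        _ = (Mf * δ * (Real.sqrt δ)⁻¹ + Real.sqrt δ) / 2 := by rw [e1, hT2]
    have hδsqrt : δ * (Real.sqrt δ)⁻¹ = Real.sqrt δ := by
      nth_rewrite 1 [← Real.mul_self_sqrt hδpos.le]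
      rw [mul_inv_cancel_right₀ hsqδpos.ne']
    have hsecond : (Mf * δ * (Real.sqrt δ)⁻¹ + Real.sqrt δ) / 2 ≤ ε / 4 := by
      have h1 : Mf * δ * (Real.sqrt δ)⁻¹ = Mf * Real.sqrt δ := by
        rw [mul_assoc, hδsqrt]
      rw [h1, hsqδ]
      have h2 : Mf * (ε / (2 * (Mf + 1))) + ε / (2 * (Mf + 1)) = ε / 2 := by
        field_simp
      rw [h2]
      linarith
    have hfinal : Real.sqrt (h n) * |b n| < ε := by
      have := hbnd
      rw [hmain] at this
      have h2 : Real.sqrt (h n) * |b n| < ε / 2 + ε / 4 := by linarith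
      linarith
    rw [Real.norm_eq_abs, abs_of_nonneg (mul_nonneg (Real.sqrt_nonneg _) (abs_nonneg _))]
    exact hfinal
  have hhb2 : Tendsto (fun n => h n * b n ^ 2) atTop (𝓝 0) := by
    have h1 := hb2.mul hb2
    rw [mul_zero] at h1
    refine h1.congr fun n => ?_
    have hss : Real.sqrt (h n) * Real.sqrt (h n) = h n := Real.mul_self_sqrt (hpos n).le
    calc Real.sqrt (h n) * |b n| * (Real.sqrt (h n) * |b n|)
        = (Real.sqrt (h n) * Real.sqrt (h n)) * (|b n| * |b n|) := by ring
      _ = h n * b n ^ 2 := by rw [hss, abs_mul_abs_self]; ring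
  have hd0 : Tendsto d atTop (𝓝 0) := by
    have h1 := (ha_lim.sub hhb2).sub_const (f x * I)
    simpa [hddef] using h1
  -- conclusion
  have heq : (fun n : ℕ =>
      (∫ ω, (kdeb K X n (h n) x ω - ∫ ω', kdeb K X n (h n) x ω' ∂P) ^ 2 ∂P)
        - 1 / ((n : ℝ) * h n) * f x * I)
      =ᶠ[atTop] fun n : ℕ => 1 / ((n : ℝ) * h n) * d n := by
    filter_upwards [eventually_ge_atTop 1] with n hn1
    rw [key n hn1, hddef]
    have hnpos : (0:ℝ) < n := by exact_mod_cast hn1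
    have hhnpos : 0 < h n := hpos n
    field_simp
  refine heq.trans_isLittleO ?_
  rw [isLittleO_iff]
  intro c hc
  have hev : ∀ᶠ n in atTop, |d n| ≤ c := by
    have := hd0.eventually (Metric.ball_mem_nhds (0:ℝ) hc)
    filter_upwards [this] with n hn
    rw [Real.dist_eq, sub_zero] at hn
    exact hn.le
  filter_upwards [hev] with n hn
  rw [Real.norm_eq_abs, Real.norm_eq_abs, abs_mul]
  calc |1 / ((n:ℝ) * h n)| * |d n| ≤ |1 / ((n:ℝ) * h n)| * c :=
      mul_le_mul_of_nonneg_left hn (abs_nonneg _)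
    _ = c * |1 / ((n:ℝ) * h n)| := mul_comm _ _
end

section
/- Fix x ∈ ℝ. Assume ∫ |u|³ |K(u)| du < ∞, ∫ |u|³ |K''(u)| du < ∞, ∫ K̃(u)² du < ∞; that u^j K(u) → 0 and u^j K'(u) → 0 as |u| → ∞ for j = 0, 1, 2, 3; and that f is bounded on ℝ and four times continuously differentiable in a neighborhood of x. If h_n = c n^{−1/7} for some constant c > 0, then the mean squared error of the bias-reduced kernel estimator satisfies E[(f̂ᵇ_{n,h_n}(x) − f(x))²] = O(n^{−6/7}) as n → ∞. -/
set_option maxHeartbeats 1000000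


open MeasureTheory ProbabilityTheory Filter Asymptotics Topology
open scoped ENNReal NNReal

section helpers
open Set

lemma int_trick {φ : ℝ → ℝ} (hφ : Continuous φ) {M : ℝ} (hM : ∀ u, |φ u| ≤ M)
    (h3 : Integrable (fun u => |u| ^ 3 * |φ u|) volume) {j : ℕ} (hj : j ≤ 3) :
    Integrable (fun u => u ^ j * φ u) volume := by
  have hMnn : 0 ≤ M := le_trans (abs_nonneg _) (hM 0)
  have hind : Integrable ((Icc (-1:ℝ) 1).indicator fun _ => M) volume := by
    rw [integrable_indicator_iff measurableSet_Icc]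
    exact integrableOn_const measure_Icc_lt_top.ne enorm_ne_top
  refine Integrable.mono' (hind.add h3) ?_ (ae_of_all _ fun u => ?_)
  · exact ((continuous_pow j).mul hφ).aestronglyMeasurable
  · rw [Real.norm_eq_abs, abs_mul, abs_pow]
    rcases le_or_gt |u| 1 with hu | hu
    · have h1 : |u| ^ j * |φ u| ≤ M := by
        calc |u| ^ j * |φ u| ≤ 1 * M :=
          mul_le_mul (pow_le_one₀ (abs_nonneg u) hu) (hM u) (abs_nonneg _) zero_le_one
        _ = M := one_mul M
      have h2 : (Icc (-1:ℝ) 1).indicator (fun _ => M) u = M := by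
        rw [indicator_of_mem]; exact abs_le.mp hu
      rw [Pi.add_apply, h2]
      exact le_add_of_le_of_nonneg h1 (mul_nonneg (pow_nonneg (abs_nonneg _) _) (abs_nonneg _))
    · have h1 : |u| ^ j ≤ |u| ^ 3 := pow_le_pow_right₀ hu.le hj
      have : |u| ^ j * |φ u| ≤ |u| ^ 3 * |φ u| := mul_le_mul_of_nonneg_right h1 (abs_nonneg _)
      rw [Pi.add_apply]
      refine le_trans this (le_add_of_nonneg_of_le ?_ le_rfl)
      exact indicator_nonneg (fun _ _ => hMnn) u

lemma ftc_line {F F' : ℝ → ℝ} (hF : ∀ t, HasDerivAt F (F' t) t)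
    (hint : Integrable F' volume) {a b : ℝ} (ha : Tendsto F atBot (𝓝 a))
    (hb : Tendsto F atTop (𝓝 b)) : ∫ t, F' t = b - a := by
  have h1 : ∫ t in Iic (0:ℝ), F' t = F 0 - a :=
    integral_Iic_of_hasDerivAt_of_tendsto' (fun x _ => hF x) hint.integrableOn ha
  have h2 : ∫ t in Ioi (0:ℝ), F' t = b - F 0 :=
    integral_Ioi_of_hasDerivAt_of_tendsto' (fun x _ => hF x) hint.integrableOn hb
  rw [← intervalIntegral.integral_Iic_add_Ioi hint.integrableOn hint.integrableOn, h1, h2]; ring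

lemma taylor_bound3 {f : ℝ → ℝ} {x : ℝ} (hfC4 : ∃ s ∈ 𝓝 x, ContDiffOn ℝ 4 f s) :
    ∃ r > 0, ∃ C₃ ≥ 0, ∀ y, |y - x| ≤ r →
      |f y - f x - deriv f x * (y - x) - deriv (deriv f) x / 2 * (y - x) ^ 2|
        ≤ C₃ * |y - x| ^ 3 := by
  obtain ⟨s, hs, hC4⟩ := hfC4
  obtain ⟨ε, hε, hball⟩ := Metric.mem_nhds_iff.mp hs
  have hC : ContDiffOn ℝ 4 f (Metric.ball x ε) := hC4.mono hball
  have hopen : IsOpen (Metric.ball x ε) := Metric.isOpen_ball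
  set f1 := deriv f
  set f2 := deriv f1
  set f3 := deriv f2
  have h1 : ContDiffOn ℝ 3 f1 (Metric.ball x ε) :=
    hC.deriv_of_isOpen hopen (by norm_num)
  have h2 : ContDiffOn ℝ 2 f2 (Metric.ball x ε) :=
    h1.deriv_of_isOpen hopen (by norm_num)
  have h3 : ContDiffOn ℝ 1 f3 (Metric.ball x ε) :=
    h2.deriv_of_isOpen hopen (by norm_num)
  -- derivative facts on the ball
  have hdf : ∀ z ∈ Metric.ball x ε, HasDerivAt f (f1 z) z := fun z hz =>
    ((hC.contDiffAt (hopen.mem_nhds hz)).differentiableAt (by norm_num)).hasDerivAt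
  have hdf1 : ∀ z ∈ Metric.ball x ε, HasDerivAt f1 (f2 z) z := fun z hz =>
    ((h1.contDiffAt (hopen.mem_nhds hz)).differentiableAt (by norm_num)).hasDerivAt
  have hdf2 : ∀ z ∈ Metric.ball x ε, HasDerivAt f2 (f3 z) z := fun z hz =>
    ((h2.contDiffAt (hopen.mem_nhds hz)).differentiableAt (by norm_num)).hasDerivAt
  set r := ε / 2 with hr
  have hrpos : 0 < r := by positivity
  have hsub : Metric.closedBall x r ⊆ Metric.ball x ε := by
    apply Metric.closedBall_subset_ball; linarith
  -- bound on f3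
  have hcont3 : ContinuousOn f3 (Metric.closedBall x r) :=
    (h3.continuousOn).mono hsub
  obtain ⟨C₃, hC₃⟩ := (isCompact_closedBall x r).exists_bound_of_continuousOn hcont3
  have hC₃0 : 0 ≤ C₃ := le_trans (norm_nonneg _) (hC₃ x (Metric.mem_closedBall_self hrpos.le))
  refine ⟨r, hrpos, C₃, hC₃0, fun y hy => ?_⟩
  have hymem : y ∈ Metric.closedBall x r := by
    rw [Metric.mem_closedBall, Real.dist_eq]; exact hy
  have hconv : Convex ℝ (Metric.closedBall x r) := convex_closedBall x r
  -- step 1 : |f2 z - f2 x| ≤ C₃ * |z - x| on closedBall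
  have step1 : ∀ z ∈ Metric.closedBall x r, |f2 z - f2 x| ≤ C₃ * |z - x| := by
    intro z hz
    have := hconv.norm_image_sub_le_of_norm_hasDerivWithin_le
      (f' := f3) (fun w hw => (hdf2 w (hsub hw)).hasDerivWithinAt)
      (fun w hw => hC₃ w hw) (Metric.mem_closedBall_self hrpos.le) hz
    simpa [Real.norm_eq_abs] using this
  -- step 2 : |f1 z - f1 x - f2 x * (z-x)| ≤ C₃ * |z - x|^2 on closedBall
  have step2 : ∀ z ∈ Metric.closedBall x r,
      |f1 z - f1 x - f2 x * (z - x)| ≤ C₃ * |z - x| ^ 2 := by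
    intro z hz
    set g1 : ℝ → ℝ := fun w => f1 w - f1 x - f2 x * (w - x) with hg1
    have hsub2 : Metric.closedBall x (|z - x|) ⊆ Metric.closedBall x r :=
      Metric.closedBall_subset_closedBall (by
        rw [Metric.mem_closedBall, Real.dist_eq] at hz; exact hz)
    have hd : ∀ w ∈ Metric.closedBall x (|z - x|),
        HasDerivWithinAt g1 (f2 w - f2 x) (Metric.closedBall x (|z - x|)) w := by
      intro w hw
      have : HasDerivAt g1 (f2 w - f2 x) w := by
        have h := ((hdf1 w (hsub (hsub2 hw))).sub_const (f1 x)).sub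
          (((hasDerivAt_id w).sub_const x).const_mul (f2 x))
        refine (h.congr_deriv (by simp)).congr_of_eventuallyEq
          (Filter.Eventually.of_forall fun v => ?_)
        simp [hg1]
      exact this.hasDerivWithinAt
    have hb : ∀ w ∈ Metric.closedBall x (|z - x|), ‖f2 w - f2 x‖ ≤ C₃ * |z - x| := by
      intro w hw
      rw [Real.norm_eq_abs]
      refine le_trans (step1 w (hsub2 hw)) ?_
      have : |w - x| ≤ |z - x| := by
        rw [Metric.mem_closedBall, Real.dist_eq] at hw; exact hw
      exact mul_le_mul_of_nonneg_left this hC₃0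
    have := (convex_closedBall x (|z - x|)).norm_image_sub_le_of_norm_hasDerivWithin_le
      hd hb (Metric.mem_closedBall_self (abs_nonneg _))
      (by rw [Metric.mem_closedBall, Real.dist_eq])
    have hg1x : g1 x = 0 := by simp [hg1]
    rw [hg1x, sub_zero, Real.norm_eq_abs, Real.norm_eq_abs] at this
    calc |g1 z| ≤ C₃ * |z - x| * |z - x| := this
    _ = C₃ * |z - x| ^ 2 := by ring
  -- step 3
  set g0 : ℝ → ℝ := fun w => f w - f x - f1 x * (w - x) - f2 x / 2 * (w - x) ^ 2 with hg0
  have hsub2 : Metric.closedBall x (|y - x|) ⊆ Metric.closedBall x r :=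
    Metric.closedBall_subset_closedBall (by
      rw [Metric.mem_closedBall, Real.dist_eq] at hymem; exact hymem)
  have hd : ∀ w ∈ Metric.closedBall x (|y - x|),
      HasDerivWithinAt g0 (f1 w - f1 x - f2 x * (w - x)) (Metric.closedBall x (|y - x|)) w := by
    intro w hw
    have h := (((hdf w (hsub (hsub2 hw))).sub_const (f x)).sub
      (((hasDerivAt_id w).sub_const x).const_mul (f1 x))).sub
      ((((hasDerivAt_id w).sub_const x).pow 2).const_mul (f2 x / 2))
    have : HasDerivAt g0 (f1 w - f1 x - f2 x * (w - x)) w := by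
      refine (h.congr_deriv ?_).congr_of_eventuallyEq (Filter.Eventually.of_forall fun v => ?_)
      · simp only [id, mul_one, Nat.cast_ofNat, pow_one, Nat.add_one_sub_one]; ring
      · simp [hg0]
    exact this.hasDerivWithinAt
  have hb : ∀ w ∈ Metric.closedBall x (|y - x|),
      ‖f1 w - f1 x - f2 x * (w - x)‖ ≤ C₃ * |y - x| ^ 2 := by
    intro w hw
    rw [Real.norm_eq_abs]
    refine le_trans (step2 w (hsub2 hw)) ?_
    have hwx : |w - x| ≤ |y - x| := by
      rw [Metric.mem_closedBall, Real.dist_eq] at hw; exact hw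
    exact mul_le_mul_of_nonneg_left (pow_le_pow_left₀ (abs_nonneg _) hwx 2) hC₃0
  have hfin := (convex_closedBall x (|y - x|)).norm_image_sub_le_of_norm_hasDerivWithin_le
    hd hb (Metric.mem_closedBall_self (abs_nonneg _))
    (by rw [Metric.mem_closedBall, Real.dist_eq])
  have hg0x : g0 x = 0 := by simp [hg0]
  rw [hg0x, sub_zero, Real.norm_eq_abs, Real.norm_eq_abs] at hfin
  calc |g0 y| ≤ C₃ * |y - x| ^ 2 * |y - x| := hfin
  _ = C₃ * |y - x| ^ 3 := by ring

lemma cov_shift (x : ℝ) {h : ℝ} (hh : 0 < h) (Ψ : ℝ → ℝ) :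
    ∫ y, Ψ y = h * ∫ u, Ψ (x - h * u) := by
  have e2 : (∫ u, Ψ (x - h * u)) = |h⁻¹| • ∫ t, Ψ (x - t) :=
    MeasureTheory.Measure.integral_comp_mul_left (fun t => Ψ (x - t)) h
  have e1 : (∫ t, Ψ (x - t)) = ∫ y, Ψ y := by
    simp_rw [sub_eq_add_neg]
    have e0 : (∫ t, Ψ (x + -t)) = ∫ t, Ψ (x + t) :=
      integral_neg_eq_self (fun t => Ψ (x + t)) volume
    rw [e0]
    exact integral_add_left_eq_self (μ := volume) Ψ x
  rw [e2, e1, abs_of_pos (inv_pos.mpr hh), smul_eq_mul]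
  field_simp

lemma cov_integrable (x : ℝ) {h : ℝ} (hh : 0 < h) {Ψ : ℝ → ℝ} (hi : Integrable Ψ volume) :
    Integrable (fun u => Ψ (x - h * u)) volume := by
  have h1 : Integrable (fun t => Ψ (x - t)) volume := by
    simp_rw [sub_eq_add_neg]
    exact (hi.comp_add_left x).comp_neg
  exact h1.comp_mul_left' hh.ne'

lemma k2_facts {K : ℝ → ℝ} (hKC2 : ContDiff ℝ 2 K) (hKint : Integrable K volume)
    {M : ℝ} (hK2bdd : ∀ u, |deriv (deriv K) u| ≤ M)
    (hK''u3int : Integrable (fun u => |u| ^ 3 * |deriv (deriv K) u|) volume)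
    (hKdecay : ∀ j : ℕ, j ≤ 3 → Tendsto (fun u => u ^ j * K u) (cocompact ℝ) (𝓝 0))
    (hK'decay : ∀ j : ℕ, j ≤ 3 → Tendsto (fun u => u ^ j * deriv K u) (cocompact ℝ) (𝓝 0)) :
    (Integrable (deriv (deriv K)) volume ∧ (∫ u, deriv (deriv K) u) = 0) ∧
    (Integrable (fun u => u * deriv (deriv K) u) volume ∧
      (∫ u, u * deriv (deriv K) u) = 0) ∧
    (Integrable (fun u => u ^ 2 * deriv (deriv K) u) volume ∧
      (∫ u, u ^ 2 * deriv (deriv K) u) = 2 * ∫ u, K u) := by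
  set K1 := deriv K with hK1
  set K2 := deriv K1 with hK2
  have hKC2' : ContDiff ℝ ((1 : ℕ∞) + 1) K := by
    convert hKC2 using 2; rfl
  have hK1C1 : ContDiff ℝ 1 K1 := (contDiff_succ_iff_deriv.mp hKC2').2.2
  have hd1 : ∀ t, HasDerivAt K (K1 t) t := fun t =>
    ((hKC2.differentiable (by norm_num)) t).hasDerivAt
  have hd2 : ∀ t, HasDerivAt K1 (K2 t) t := fun t =>
    ((hK1C1.differentiable (by norm_num)) t).hasDerivAt
  have hK2cont : Continuous K2 := (contDiff_one_iff_deriv.mp hK1C1).2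
  have hsplit : ∀ {g : ℝ → ℝ}, Tendsto g (cocompact ℝ) (𝓝 0) →
      Tendsto g atBot (𝓝 (0:ℝ)) ∧ Tendsto g atTop (𝓝 (0:ℝ)) := by
    intro g hg
    rw [cocompact_eq_atBot_atTop] at hg
    exact ⟨hg.mono_left le_sup_left, hg.mono_left le_sup_right⟩
  have dec_K0 := hsplit (by simpa using hKdecay 0 (by norm_num))
  have dec_K1 := hsplit (by simpa [pow_one] using hKdecay 1 (by norm_num))
  have dec_K'0 := hsplit (by simpa using hK'decay 0 (by norm_num))
  have dec_K'1 := hsplit (by simpa [pow_one] using hK'decay 1 (by norm_num))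
  have dec_K'2 := hsplit (hK'decay 2 (by norm_num))
  -- integrabilities
  have I0 : Integrable K2 volume := by
    simpa using int_trick hK2cont hK2bdd hK''u3int (j := 0) (by norm_num)
  have I1 : Integrable (fun u => u * K2 u) volume := by
    simpa [pow_one] using int_trick hK2cont hK2bdd hK''u3int (j := 1) (by norm_num)
  have I2 : Integrable (fun u => u ^ 2 * K2 u) volume := by
    exact int_trick hK2cont hK2bdd hK''u3int (j := 2) (by norm_num)
  refine ⟨⟨I0, ?_⟩, ⟨I1, ?_⟩, ⟨I2, ?_⟩⟩
  · have := ftc_line hd2 I0 dec_K'0.1 dec_K'0.2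
    simpa using this
  · -- F t = t * K1 t - K t
    have hF : ∀ t, HasDerivAt (fun t => t * K1 t - K t) (t * K2 t) t := by
      intro t
      have h := ((hasDerivAt_id t).mul (hd2 t)).sub (hd1 t)
      refine (h.congr_deriv ?_).congr_of_eventuallyEq (Filter.Eventually.of_forall fun v => ?_)
      · simp only [id_eq, one_mul]
        ring
      · simp
    have hbot : Tendsto (fun t => t * K1 t - K t) atBot (𝓝 0) := by
      simpa using dec_K'1.1.sub dec_K0.1
    have htop : Tendsto (fun t => t * K1 t - K t) atTop (𝓝 0) := by
      simpa using dec_K'1.2.sub dec_K0.2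
    have := ftc_line hF I1 hbot htop
    simpa using this
  · -- F t = t^2 * K1 t - 2*(t * K t) + 2 * ∫ in 0..t K
    set G : ℝ → ℝ := fun t => ∫ x in (0:ℝ)..t, K x with hG
    have hdG : ∀ t, HasDerivAt G (K t) t := fun t =>
      (hKC2.continuous.integral_hasStrictDerivAt 0 t).hasDerivAt
    have hF : ∀ t, HasDerivAt (fun t => t ^ 2 * K1 t - 2 * (t * K t) + 2 * G t)
        (t ^ 2 * K2 t) t := by
      intro t
      have h := (((hasDerivAt_pow 2 t).mul (hd2 t)).sub
          (((hasDerivAt_id t).mul (hd1 t)).const_mul 2)).add ((hdG t).const_mul 2)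
      refine (h.congr_deriv ?_).congr_of_eventuallyEq (Filter.Eventually.of_forall fun v => ?_)
      · simp only [id_eq]
        push_cast
        ring
      · simp
    have hIic := intervalIntegral_tendsto_integral_Iic (0:ℝ) hKint.integrableOn tendsto_id
    have hIoi := intervalIntegral_tendsto_integral_Ioi (0:ℝ) hKint.integrableOn tendsto_id
    have hGbot : Tendsto G atBot (𝓝 (-∫ x in Iic (0:ℝ), K x)) := by
      have := hIic.neg
      refine this.congr fun t => ?_
      simp only [id_eq]
      rw [hG, intervalIntegral.integral_symm 0 t, neg_neg]
    have hGtop : Tendsto G atTop (𝓝 (∫ x in Ioi (0:ℝ), K x)) := hIoi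
    have hbot : Tendsto (fun t => t ^ 2 * K1 t - 2 * (t * K t) + 2 * G t) atBot
        (𝓝 (0 - 2 * 0 + 2 * (-∫ x in Iic (0:ℝ), K x))) :=
      (dec_K'2.1.sub (dec_K1.1.const_mul 2)).add (hGbot.const_mul 2)
    have htop : Tendsto (fun t => t ^ 2 * K1 t - 2 * (t * K t) + 2 * G t) atTop
        (𝓝 (0 - 2 * 0 + 2 * (∫ x in Ioi (0:ℝ), K x))) :=
      (dec_K'2.2.sub (dec_K1.2.const_mul 2)).add (hGtop.const_mul 2)
    have hkey := ftc_line hF I2 hbot htop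
    have hsum : (∫ x in Iic (0:ℝ), K x) + (∫ x in Ioi (0:ℝ), K x) = ∫ x, K x :=
      intervalIntegral.integral_Iic_add_Ioi hKint.integrableOn hKint.integrableOn
    rw [hkey]
    linarith

lemma bias_bound {g f : ℝ → ℝ} {x : ℝ} (hgc : Continuous g) (hfmeas : Measurable f)
    {Mf : ℝ} (hf : ∀ y, |f y| ≤ Mf)
    (hg0 : Integrable g volume) (hg1 : Integrable (fun u => u * g u) volume)
    (hg2 : Integrable (fun u => u ^ 2 * g u) volume)
    (hg3 : Integrable (fun u => |u| ^ 3 * |g u|) volume)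
    (hm0 : (∫ u, g u) = 1) (hm1 : (∫ u, u * g u) = 0) (hm2 : (∫ u, u ^ 2 * g u) = 0)
    (hfC4 : ∃ s ∈ 𝓝 x, ContDiffOn ℝ 4 f s) :
    ∃ C ≥ 0, ∀ h : ℝ, 0 < h →
      |(∫ u, g u * f (x - h * u)) - f x| ≤ C * h ^ 3 := by
  obtain ⟨r, hr, C₃, hC₃0, htay⟩ := taylor_bound3 hfC4
  have hMf : 0 ≤ Mf := le_trans (abs_nonneg _) (hf x)
  set a1 := |deriv f x| with ha1
  set a2 := |deriv (deriv f) x| with ha2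
  set D := C₃ + 2 * Mf / r ^ 3 + a1 / r ^ 2 + a2 / (2 * r) with hD
  have hD0 : 0 ≤ D := by
    have : (0:ℝ) ≤ 2 * Mf / r ^ 3 := by positivity
    have : (0:ℝ) ≤ a1 / r ^ 2 := by positivity
    have : (0:ℝ) ≤ a2 / (2 * r) := by positivity
    positivity
  -- pointwise Taylor-type bound, valid for ALL u
  have key : ∀ (h : ℝ), 0 < h → ∀ u,
      |f (x - h * u) - f x + deriv f x * (h * u) - deriv (deriv f) x / 2 * (h * u) ^ 2|
        ≤ D * h ^ 3 * |u| ^ 3 := by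
    intro h hh u
    set y := x - h * u with hy
    have hyx : y - x = -(h * u) := by rw [hy]; ring
    have habs : |y - x| = h * |u| := by
      rw [hyx, abs_neg, abs_mul, abs_of_pos hh]
    have hT : f (x - h * u) - f x + deriv f x * (h * u) - deriv (deriv f) x / 2 * (h * u) ^ 2
        = f y - f x - deriv f x * (y - x) - deriv (deriv f) x / 2 * (y - x) ^ 2 := by
      rw [hyx]; ring
    rw [hT]
    have hcube : |y - x| ^ 3 = h ^ 3 * |u| ^ 3 := by rw [habs]; ring
    rcases le_or_gt (|y - x|) r with hle | hgt
    · calc |f y - f x - deriv f x * (y - x) - deriv (deriv f) x / 2 * (y - x) ^ 2|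
          ≤ C₃ * |y - x| ^ 3 := htay y hle
      _ ≤ D * |y - x| ^ 3 := by
          apply mul_le_mul_of_nonneg_right _ (by positivity)
          rw [hD]
          have h1 : (0:ℝ) ≤ 2 * Mf / r ^ 3 := by positivity
          have h2 : (0:ℝ) ≤ a1 / r ^ 2 := by positivity
          have h3 : (0:ℝ) ≤ a2 / (2 * r) := by positivity
          linarith
      _ = D * (h ^ 3 * |u| ^ 3) := by rw [hcube]
      _ = D * h ^ 3 * |u| ^ 3 := by ring
    · set s := |y - x| with hs
      have hs0 : 0 < s := lt_trans hr hgt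
      have e1 : |f y - f x| ≤ 2 * Mf := by
        calc |f y - f x| ≤ |f y| + |f x| := abs_sub _ _
        _ ≤ Mf + Mf := add_le_add (hf y) (hf x)
        _ = 2 * Mf := by ring
      have e2 : |deriv f x * (y - x)| = a1 * s := by rw [abs_mul, ha1, hs]
      have e3 : |deriv (deriv f) x / 2 * (y - x) ^ 2| = a2 / 2 * s ^ 2 := by
        rw [abs_mul, abs_div, abs_pow, ha2, hs]; simp
      have big : |f y - f x - deriv f x * (y - x) - deriv (deriv f) x / 2 * (y - x) ^ 2|
          ≤ 2 * Mf + a1 * s + a2 / 2 * s ^ 2 := by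
        calc _ ≤ |f y - f x - deriv f x * (y - x)| + |deriv (deriv f) x / 2 * (y - x) ^ 2| :=
            abs_sub _ _
        _ ≤ (|f y - f x| + |deriv f x * (y - x)|) + |deriv (deriv f) x / 2 * (y - x) ^ 2| :=
            add_le_add_left (abs_sub _ _) _
        _ ≤ 2 * Mf + a1 * s + a2 / 2 * s ^ 2 := by
            rw [e2, e3]; exact add_le_add_left (add_le_add_left e1 _) _
      have b1 : 2 * Mf ≤ 2 * Mf / r ^ 3 * s ^ 3 := by
        rw [div_mul_eq_mul_div, le_div_iff₀ (by positivity)]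
        have : r ^ 3 ≤ s ^ 3 := pow_le_pow_left₀ hr.le hgt.le 3
        nlinarith
      have b2 : a1 * s ≤ a1 / r ^ 2 * s ^ 3 := by
        rw [div_mul_eq_mul_div, le_div_iff₀ (by positivity)]
        have h1 : r ^ 2 ≤ s ^ 2 := pow_le_pow_left₀ hr.le hgt.le 2
        have h2 : a1 * s * r ^ 2 ≤ a1 * s * s ^ 2 :=
          mul_le_mul_of_nonneg_left h1 (mul_nonneg (abs_nonneg _) hs0.le)
        calc a1 * s * r ^ 2 ≤ a1 * s * s ^ 2 := h2
        _ = a1 * s ^ 3 := by ring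
      have b3 : a2 / 2 * s ^ 2 ≤ a2 / (2 * r) * s ^ 3 := by
        have ha20 : (0:ℝ) ≤ a2 := abs_nonneg _
        have key2 : a2 * s ^ 2 * r ≤ a2 * s ^ 2 * s :=
          mul_le_mul_of_nonneg_left hgt.le (mul_nonneg ha20 (pow_nonneg hs0.le 2))
        rw [div_mul_eq_mul_div, div_mul_eq_mul_div,
          div_le_div_iff₀ two_pos (by positivity)]
        nlinarith
      have hexp : D * s ^ 3 = C₃ * s ^ 3 + 2 * Mf / r ^ 3 * s ^ 3
          + a1 / r ^ 2 * s ^ 3 + a2 / (2 * r) * s ^ 3 := by rw [hD]; ring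
      have hC3s : (0:ℝ) ≤ C₃ * s ^ 3 := mul_nonneg hC₃0 (pow_nonneg hs0.le 3)
      have : |f y - f x - deriv f x * (y - x) - deriv (deriv f) x / 2 * (y - x) ^ 2|
          ≤ D * s ^ 3 := by
        rw [hexp]; linarith [big, b1, b2, b3]
      calc _ ≤ D * s ^ 3 := this
      _ = D * (|y - x| ^ 3) := by rw [hs]
      _ = D * h ^ 3 * |u| ^ 3 := by rw [hcube]; ring
  -- now the integral estimate
  set I₃ := ∫ u, |u| ^ 3 * |g u| with hI₃
  have hI₃0 : 0 ≤ I₃ := integral_nonneg fun u => by positivity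
  refine ⟨D * I₃, mul_nonneg hD0 hI₃0, fun h hh => ?_⟩
  have hmeasaff : Measurable fun u : ℝ => f (x - h * u) :=
    hfmeas.comp ((measurable_const.sub (measurable_const.mul measurable_id)))
  have t0 : Integrable (fun u => g u * f (x - h * u)) volume := by
    refine Integrable.mono' (hg0.abs.const_mul Mf)
      ((hgc.measurable.mul hmeasaff).aestronglyMeasurable) (ae_of_all _ fun u => ?_)
    rw [Real.norm_eq_abs, abs_mul]
    calc |g u| * |f (x - h * u)| ≤ |g u| * Mf := by
          apply mul_le_mul_of_nonneg_left (hf _) (abs_nonneg _)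
    _ = Mf * |g u| := by ring
  have hsplit : ∀ u, g u * (f (x - h * u) - f x + deriv f x * (h * u)
        - deriv (deriv f) x / 2 * (h * u) ^ 2)
      = g u * f (x - h * u) - f x * g u + (deriv f x * h) * (u * g u)
        - (deriv (deriv f) x * h ^ 2 / 2) * (u ^ 2 * g u) := fun u => by ring
  have tint : Integrable (fun u => g u * (f (x - h * u) - f x + deriv f x * (h * u)
      - deriv (deriv f) x / 2 * (h * u) ^ 2)) volume := by
    simp_rw [hsplit]
    exact ((t0.sub (hg0.const_mul (f x))).add (hg1.const_mul (deriv f x * h))).sub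
      (hg2.const_mul (deriv (deriv f) x * h ^ 2 / 2))
  have hEeq : (∫ u, g u * (f (x - h * u) - f x + deriv f x * (h * u)
      - deriv (deriv f) x / 2 * (h * u) ^ 2))
      = (∫ u, g u * f (x - h * u)) - f x := by
    have i1 : Integrable (fun u => g u * f (x - h * u) - f x * g u) volume :=
      t0.sub (hg0.const_mul (f x))
    have i2 : Integrable (fun u => g u * f (x - h * u) - f x * g u
        + deriv f x * h * (u * g u)) volume := i1.add (hg1.const_mul (deriv f x * h))
    have e3 : (∫ u, (g u * f (x - h * u) - f x * g u + deriv f x * h * (u * g u)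
          - deriv (deriv f) x * h ^ 2 / 2 * (u ^ 2 * g u)))
        = (∫ u, (g u * f (x - h * u) - f x * g u + deriv f x * h * (u * g u)))
          - ∫ u, deriv (deriv f) x * h ^ 2 / 2 * (u ^ 2 * g u) :=
      integral_sub i2 (hg2.const_mul (deriv (deriv f) x * h ^ 2 / 2))
    have e2 : (∫ u, (g u * f (x - h * u) - f x * g u + deriv f x * h * (u * g u)))
        = (∫ u, (g u * f (x - h * u) - f x * g u))
          + ∫ u, deriv f x * h * (u * g u) :=
      integral_add i1 (hg1.const_mul (deriv f x * h))
    have e1 : (∫ u, (g u * f (x - h * u) - f x * g u))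
        = (∫ u, g u * f (x - h * u)) - ∫ u, f x * g u :=
      integral_sub t0 (hg0.const_mul (f x))
    have c0 : (∫ u, f x * g u) = f x * ∫ u, g u := integral_const_mul _ _
    have c1 : (∫ u, deriv f x * h * (u * g u)) = deriv f x * h * ∫ u, u * g u :=
      integral_const_mul _ _
    have c2 : (∫ u, deriv (deriv f) x * h ^ 2 / 2 * (u ^ 2 * g u))
        = deriv (deriv f) x * h ^ 2 / 2 * ∫ u, u ^ 2 * g u := integral_const_mul _ _
    simp_rw [hsplit]
    rw [e3, e2, e1, c0, c1, c2, hm0, hm1, hm2]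
    ring
  rw [← hEeq]
  have habs1 : |∫ u, g u * (f (x - h * u) - f x + deriv f x * (h * u)
        - deriv (deriv f) x / 2 * (h * u) ^ 2)|
      ≤ ∫ u, |g u * (f (x - h * u) - f x + deriv f x * (h * u)
        - deriv (deriv f) x / 2 * (h * u) ^ 2)| := by
    exact abs_integral_le_integral_abs
  refine le_trans habs1 ?_
  have habs2 : (∫ u, |g u * (f (x - h * u) - f x + deriv f x * (h * u)
        - deriv (deriv f) x / 2 * (h * u) ^ 2)|)
      ≤ ∫ u, D * h ^ 3 * (|u| ^ 3 * |g u|) := by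
    refine integral_mono_of_nonneg (ae_of_all _ fun u => abs_nonneg _)
      ((hg3.const_mul (D * h ^ 3))) (ae_of_all _ fun u => ?_)
    dsimp only
    rw [abs_mul]
    calc |g u| * |f (x - h * u) - f x + deriv f x * (h * u)
          - deriv (deriv f) x / 2 * (h * u) ^ 2|
        ≤ |g u| * (D * h ^ 3 * |u| ^ 3) :=
          mul_le_mul_of_nonneg_left (key h hh u) (abs_nonneg _)
    _ = D * h ^ 3 * (|u| ^ 3 * |g u|) := by ring
  refine le_trans habs2 ?_
  rw [integral_const_mul, ← hI₃]
  have : D * h ^ 3 * I₃ = D * I₃ * h ^ 3 := by ring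
  rw [this]

end helpers

/-- with `h_n = c n^{-1/7}`,
`E[(f̂ᵇ_{n,h_n}(x) − f(x))²] = O(n^{-6/7})` as `n → ∞`. -/
theorem mse_kdeb {Ω : Type*} [MeasurableSpace Ω] (P : Measure Ω) [IsProbabilityMeasure P]
    -- the i.i.d. sample with common density f
    (X : ℕ → Ω → ℝ) (hXmeas : ∀ i, Measurable (X i))
    (hXindep : iIndepFun X P)
    (f : ℝ → ℝ) (hfmeas : Measurable f) (hfnonneg : ∀ y, 0 ≤ f y)
    (hXlaw : ∀ i, Measure.map (X i) P = volume.withDensity fun y => ENNReal.ofReal (f y))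
    -- the kernel: twice continuously differentiable, K and K'' bounded and of
    -- bounded variation, ∫ K = 1, ∫ u K(u) du = 0, ∫ u² |K(u)| du < ∞
    (K : ℝ → ℝ) (hKC2 : ContDiff ℝ 2 K)
    (hKbdd : ∃ M, ∀ u, |K u| ≤ M) (hK''bdd : ∃ M, ∀ u, |deriv (deriv K) u| ≤ M)
    (hKbv : BoundedVariationOn K Set.univ)
    (hK''bv : BoundedVariationOn (deriv (deriv K)) Set.univ)
    (hKint : Integrable K volume) (hKone : (∫ u, K u) = 1)
    (hKuint : Integrable (fun u => u * K u) volume) (hKuzero : (∫ u, u * K u) = 0)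
    (hKu2int : Integrable (fun u => u ^ 2 * |K u|) volume)
    -- moment and square-integrability conditions:
    -- ∫ |u|³ |K(u)| du < ∞, ∫ |u|³ |K''(u)| du < ∞, ∫ K̃(u)² du < ∞
    (hKu3int : Integrable (fun u => |u| ^ 3 * |K u|) volume)
    (hK''u3int : Integrable (fun u => |u| ^ 3 * |deriv (deriv K) u|) volume)
    (hKtsqint : Integrable (fun u => (ktilde K u) ^ 2) volume)
    -- decay: uʲ K(u) → 0 and uʲ K'(u) → 0 as |u| → ∞ for j = 0,1,2,3
    (hKdecay : ∀ j : ℕ, j ≤ 3 → Tendsto (fun u => u ^ j * K u) (cocompact ℝ) (𝓝 0))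
    (hK'decay : ∀ j : ℕ, j ≤ 3 →
      Tendsto (fun u => u ^ j * deriv K u) (cocompact ℝ) (𝓝 0))
    -- the point x, f bounded and four times continuously differentiable near x
    (x : ℝ) (hfbdd : ∃ M, ∀ y, |f y| ≤ M)
    (hfC4 : ∃ s ∈ 𝓝 x, ContDiffOn ℝ 4 f s)
    -- bandwidth h_n = c n^{-1/7}
    (c : ℝ) (hc : 0 < c)
    (h : ℕ → ℝ) (hdef : ∀ n, h n = c * (n : ℝ) ^ (-(1 : ℝ) / 7)) :
    (fun n : ℕ => ∫ ω, (kdeb K X n (h n) x ω - f x) ^ 2 ∂P)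
      =O[atTop] (fun n : ℕ => (n : ℝ) ^ (-(6 : ℝ) / 7)) := by
  classical
  -- notation
  obtain ⟨MK, hMK⟩ := hKbdd
  obtain ⟨MK2, hMK2⟩ := hK''bdd
  obtain ⟨Mf, hMf⟩ := hfbdd
  have hMf0 : 0 ≤ Mf := le_trans (abs_nonneg _) (hMf 0)
  set K2 : ℝ → ℝ := deriv (deriv K) with hK2def
  -- smoothness facts
  have hKC2' : ContDiff ℝ ((1 : ℕ∞) + 1) K := by convert hKC2 using 2; rfl
  have hK1C1 : ContDiff ℝ 1 (deriv K) := (contDiff_succ_iff_deriv.mp hKC2').2.2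
  have hK2cont : Continuous K2 := (contDiff_one_iff_deriv.mp hK1C1).2
  set κ : ℝ := ∫ v, v ^ 2 * K v with hκdef
  have hgc : Continuous (ktilde K) := by
    unfold ktilde
    exact hKC2.continuous.sub (continuous_const.mul hK2cont)
  -- kernel second-derivative moments
  obtain ⟨⟨I0, m0⟩, ⟨I1, m1⟩, ⟨I2, m2⟩⟩ :=
    k2_facts hKC2 hKint hMK2 hK''u3int hKdecay hK'decay
  -- integrability of u^2 K
  have hKu2int' : Integrable (fun u => u ^ 2 * K u) volume := by
    refine hKu2int.mono' ((continuous_pow 2).mul hKC2.continuous).aestronglyMeasurable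
      (ae_of_all _ fun u => ?_)
    rw [Real.norm_eq_abs, abs_mul, abs_of_nonneg (sq_nonneg u)]
  -- integrability of the modified kernel and its moments
  have hg0 : Integrable (ktilde K) volume := by
    unfold ktilde
    exact hKint.sub (I0.const_mul (1 / 2 * κ))
  have hg1 : Integrable (fun u => u * ktilde K u) volume := by
    have e : (fun u => u * ktilde K u)
        = fun u => u * K u - 1 / 2 * κ * (u * K2 u) := by
      funext u; unfold ktilde; ring
    rw [e]
    exact hKuint.sub (I1.const_mul (1 / 2 * κ))
  have hg2 : Integrable (fun u => u ^ 2 * ktilde K u) volume := by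
    have e : (fun u => u ^ 2 * ktilde K u)
        = fun u => u ^ 2 * K u - 1 / 2 * κ * (u ^ 2 * K2 u) := by
      funext u; unfold ktilde; ring
    rw [e]
    exact hKu2int'.sub (I2.const_mul (1 / 2 * κ))
  have hg3 : Integrable (fun u => |u| ^ 3 * |ktilde K u|) volume := by
    refine Integrable.mono' (hKu3int.add (hK''u3int.const_mul |1 / 2 * κ|))
      (((continuous_abs.pow 3).mul hgc.abs).aestronglyMeasurable)
      (ae_of_all _ fun u => ?_)
    have h1 : |ktilde K u| ≤ |K u| + |1 / 2 * κ| * |K2 u| := by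
      unfold ktilde
      calc |K u - 1 / 2 * κ * K2 u| ≤ |K u| + |1 / 2 * κ * K2 u| := abs_sub _ _
      _ = |K u| + |1 / 2 * κ| * |K2 u| := by rw [abs_mul]
    rw [Real.norm_eq_abs, abs_mul, abs_abs, abs_pow, abs_abs, Pi.add_apply]
    calc |u| ^ 3 * |ktilde K u| ≤ |u| ^ 3 * (|K u| + |1 / 2 * κ| * |K2 u|) :=
        mul_le_mul_of_nonneg_left h1 (by positivity)
    _ = |u| ^ 3 * |K u| + |1 / 2 * κ| * (|u| ^ 3 * |K2 u|) := by ring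
  -- moments of the modified kernel
  have hm0 : (∫ u, ktilde K u) = 1 := by
    unfold ktilde
    rw [integral_sub hKint (I0.const_mul (1 / 2 * κ)), integral_const_mul, m0, hKone]
    ring
  have hm1 : (∫ u, u * ktilde K u) = 0 := by
    have e : (fun u => u * ktilde K u)
        = fun u => u * K u - 1 / 2 * κ * (u * K2 u) := by
      funext u; unfold ktilde; ring
    rw [e, integral_sub hKuint (I1.const_mul (1 / 2 * κ)), integral_const_mul, m1, hKuzero]
    ring
  have hm2 : (∫ u, u ^ 2 * ktilde K u) = 0 := by
    have e : (fun u => u ^ 2 * ktilde K u)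
        = fun u => u ^ 2 * K u - 1 / 2 * κ * (u ^ 2 * K2 u) := by
      funext u; unfold ktilde; ring
    rw [e, integral_sub hKu2int' (I2.const_mul (1 / 2 * κ)), integral_const_mul, m2, hKone,
      ← hκdef]
    ring
  -- bias bound
  obtain ⟨Cb, hCb0, hbias⟩ :=
    bias_bound hgc hfmeas hMf hg0 hg1 hg2 hg3 hm0 hm1 hm2 hfC4
  -- boundedness of the modified kernel
  set Mg : ℝ := MK + |1 / 2 * κ| * MK2 with hMgdef
  have hMg : ∀ u, |ktilde K u| ≤ Mg := by
    intro u
    unfold ktilde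
    calc |K u - 1 / 2 * κ * K2 u| ≤ |K u| + |1 / 2 * κ * K2 u| := abs_sub _ _
    _ = |K u| + |1 / 2 * κ| * |K2 u| := by rw [abs_mul]
    _ ≤ MK + |1 / 2 * κ| * MK2 :=
        add_le_add (hMK u) (mul_le_mul_of_nonneg_left (hMK2 u) (abs_nonneg _))
  -- transfer of expectations to integrals against the density
  have law_int : ∀ (φ : ℝ → ℝ), Continuous φ → ∀ (i : ℕ) (b : ℝ), 0 < b →
      (∫ ω, φ ((x - X i ω) / b) ∂P) = b * ∫ u, φ u * f (x - b * u) := by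
    intro φ hφ i b hb
    have mψ : Measurable fun y => φ ((x - y) / b) :=
      hφ.measurable.comp ((measurable_const.sub measurable_id).div_const b)
    have step1 : (∫ ω, φ ((x - X i ω) / b) ∂P)
        = ∫ y, φ ((x - y) / b) ∂(Measure.map (X i) P) :=
      (integral_map (hXmeas i).aemeasurable mψ.aestronglyMeasurable).symm
    rw [step1, hXlaw i]
    have hdens : (volume.withDensity fun y => ENNReal.ofReal (f y))
        = volume.withDensity fun y => ((f y).toNNReal : ℝ≥0∞) := rfl
    rw [hdens, integral_withDensity_eq_integral_smul hfmeas.real_toNNReal]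
    have step2 : (∫ y, (f y).toNNReal • φ ((x - y) / b))
        = ∫ y, f y * φ ((x - y) / b) := by
      congr 1
      funext y
      rw [NNReal.smul_def, Real.coe_toNNReal _ (hfnonneg y)]
      rfl
    rw [step2]
    have step3 := cov_shift x hb (fun y => f y * φ ((x - y) / b))
    rw [step3]
    congr 1
    refine integral_congr_ae (Filter.EventuallyEq.of_eq (funext fun u => ?_))
    have harg : (x - (x - b * u)) / b = u := by field_simp; ring
    rw [harg]
    ring
  -- the L² constant
  set J : ℝ := ∫ u, (ktilde K u) ^ 2 with hJdef
  have hJ0 : 0 ≤ J := integral_nonneg fun u => sq_nonneg _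
  -- the final constant
  set Ct : ℝ := Mf * J / c + Cb ^ 2 * c ^ 6 with hCt
  rw [Asymptotics.isBigO_iff]
  refine ⟨Ct, ?_⟩
  filter_upwards [Filter.eventually_ge_atTop 1] with n hn1
  have hnpos : (0:ℝ) < n := by exact_mod_cast Nat.lt_of_lt_of_le Nat.zero_lt_one hn1
  have hnne : (n:ℝ) ≠ 0 := hnpos.ne'
  have hrpos : (0:ℝ) < (n:ℝ) ^ (-(1:ℝ) / 7) := Real.rpow_pos_of_pos hnpos _
  have hhn : 0 < h n := by rw [hdef n]; positivity
  -- the sample variables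
  set Y : ℕ → Ω → ℝ := fun i ω => ktilde K ((x - X i ω) / h n) with hYdef
  have mφ : Measurable fun y => ktilde K ((x - y) / h n) :=
    hgc.measurable.comp ((measurable_const.sub measurable_id).div_const _)
  have hYmeas : ∀ i, Measurable (Y i) := fun i => mφ.comp (hXmeas i)
  have hYmem : ∀ i, MemLp (Y i) 2 P := fun i =>
    MemLp.of_bound (hYmeas i).aestronglyMeasurable Mg
      (ae_of_all _ fun ω => by rw [Real.norm_eq_abs]; exact hMg _)
  have hYint : ∀ i, Integrable (Y i) P := fun i => (hYmem i).integrable one_le_two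
  -- expectations
  set A : ℝ := ∫ u, ktilde K u * f (x - h n * u) with hAdef
  have EY : ∀ i, (∫ ω, Y i ω ∂P) = h n * A := fun i => law_int (ktilde K) hgc i (h n) hhn
  set B : ℝ := ∫ u, (ktilde K u) ^ 2 * f (x - h n * u) with hBdef
  have EY2 : ∀ i, (∫ ω, Y i ω ^ 2 ∂P) = h n * B := fun i =>
    law_int (fun u => (ktilde K u) ^ 2) (hgc.pow 2) i (h n) hhn
  have hBle : B ≤ Mf * J := by
    rw [hBdef, hJdef, ← integral_const_mul]
    refine integral_mono_of_nonneg (ae_of_all _ fun u => ?_)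
      (hKtsqint.const_mul Mf) (ae_of_all _ fun u => ?_)
    · exact mul_nonneg (sq_nonneg _) (hfnonneg _)
    · have : f (x - h n * u) ≤ Mf := le_trans (le_abs_self _) (hMf _)
      calc (ktilde K u) ^ 2 * f (x - h n * u) ≤ (ktilde K u) ^ 2 * Mf :=
          mul_le_mul_of_nonneg_left this (sq_nonneg _)
      _ = Mf * (ktilde K u) ^ 2 := by ring
  -- the estimator as a scaled sum
  set S : Ω → ℝ := ∑ i ∈ Finset.range n, Y i with hSdef
  have hWeq : (fun ω => kdeb K X n (h n) x ω)
      = fun ω => (1 / (n * h n)) * S ω := by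
    funext ω
    rw [hSdef]
    simp only [kdeb, Finset.sum_apply]
    rfl
  have hSmem : MemLp S 2 P := memLp_finset_sum' _ fun i _ => hYmem i
  have hWmem : MemLp (fun ω => kdeb K X n (h n) x ω) 2 P := by
    rw [hWeq]; exact hSmem.const_mul _
  have hWint : Integrable (fun ω => kdeb K X n (h n) x ω) P :=
    hWmem.integrable one_le_two
  have hW2int : Integrable (fun ω => (kdeb K X n (h n) x ω) ^ 2) P :=
    hWmem.integrable_sq
  -- independence and variance of the sum
  have hpair : Set.Pairwise ↑(Finset.range n) fun i j => IndepFun (Y i) (Y j) P := by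
    intro i _ j _ hij
    exact (hXindep.indepFun hij).comp mφ mφ
  have hvarS : variance S P = ∑ i ∈ Finset.range n, variance (Y i) P := by
    rw [hSdef]
    exact IndepFun.variance_sum (fun i _ => hYmem i) hpair
  have hvarY : ∀ i, variance (Y i) P ≤ h n * (Mf * J) := by
    intro i
    have h1 : variance (Y i) P ≤ ∫ ω, Y i ω ^ 2 ∂P := by
      have h2 := variance_eq_sub (hYmem i)
      have h3 : P[(Y i) ^ 2] = ∫ ω, Y i ω ^ 2 ∂P := rfl
      rw [h2, h3]
      exact sub_le_self _ (sq_nonneg _)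
    calc variance (Y i) P ≤ ∫ ω, Y i ω ^ 2 ∂P := h1
    _ = h n * B := EY2 i
    _ ≤ h n * (Mf * J) := mul_le_mul_of_nonneg_left hBle hhn.le
  have hvarSle : variance S P ≤ n * (h n * (Mf * J)) := by
    calc variance S P = ∑ i ∈ Finset.range n, variance (Y i) P := hvarS
    _ ≤ ∑ _i ∈ Finset.range n, h n * (Mf * J) :=
        Finset.sum_le_sum fun i _ => hvarY i
    _ = n * (h n * (Mf * J)) := by
        rw [Finset.sum_const, Finset.card_range, nsmul_eq_mul]
  have hvarW : variance (fun ω => kdeb K X n (h n) x ω) P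
      = (1 / (n * h n)) ^ 2 * variance S P := by
    rw [hWeq]
    exact variance_const_mul _ S P
  -- expectation of the estimator
  have hES : (∫ ω, S ω ∂P) = n * (h n * A) := by
    rw [hSdef]
    simp only [Finset.sum_apply]
    rw [integral_finset_sum _ fun i _ => hYint i]
    have : ∀ i ∈ Finset.range n, (∫ ω, Y i ω ∂P) = h n * A := fun i _ => EY i
    rw [Finset.sum_congr rfl this, Finset.sum_const, Finset.card_range, nsmul_eq_mul]
  have hEW : (∫ ω, kdeb K X n (h n) x ω ∂P) = A := by
    have e1 : (∫ ω, kdeb K X n (h n) x ω ∂P) = (1 / (n * h n)) * ∫ ω, S ω ∂P := by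
      have := congrArg (fun g => ∫ ω, g ω ∂P) hWeq
      simpa [integral_const_mul] using this
    rw [e1, hES]
    field_simp
  -- MSE decomposition
  have hmse : (∫ ω, (kdeb K X n (h n) x ω - f x) ^ 2 ∂P)
      = variance (fun ω => kdeb K X n (h n) x ω) P + (A - f x) ^ 2 := by
    have e0 : ∀ ω, (kdeb K X n (h n) x ω - f x) ^ 2
        = (kdeb K X n (h n) x ω) ^ 2 - (2 * f x) * kdeb K X n (h n) x ω + (f x) ^ 2 :=
      fun ω => by ring
    have e1 : (∫ ω, (kdeb K X n (h n) x ω - f x) ^ 2 ∂P)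
        = (∫ ω, (kdeb K X n (h n) x ω) ^ 2 ∂P)
          - (2 * f x) * (∫ ω, kdeb K X n (h n) x ω ∂P) + (f x) ^ 2 := by
      simp_rw [e0]
      have q1 : (∫ ω, ((kdeb K X n (h n) x ω) ^ 2 - (2 * f x) * kdeb K X n (h n) x ω
            + (f x) ^ 2) ∂P)
          = (∫ ω, ((kdeb K X n (h n) x ω) ^ 2 - (2 * f x) * kdeb K X n (h n) x ω) ∂P)
            + ∫ _ω, (f x) ^ 2 ∂P :=
        integral_add (hW2int.sub (hWint.const_mul (2 * f x))) (integrable_const _)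
      have q2 : (∫ ω, ((kdeb K X n (h n) x ω) ^ 2 - (2 * f x) * kdeb K X n (h n) x ω) ∂P)
          = (∫ ω, (kdeb K X n (h n) x ω) ^ 2 ∂P)
            - ∫ ω, (2 * f x) * kdeb K X n (h n) x ω ∂P :=
        integral_sub hW2int (hWint.const_mul (2 * f x))
      have q3 : (∫ ω, (2 * f x) * kdeb K X n (h n) x ω ∂P)
          = (2 * f x) * ∫ ω, kdeb K X n (h n) x ω ∂P := integral_const_mul _ _
      rw [q1, q2, q3, integral_const]
      simp [measure_univ]
    have e2 := variance_eq_sub hWmem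
    have e3 : P[(fun ω => kdeb K X n (h n) x ω) ^ 2]
        = ∫ ω, (kdeb K X n (h n) x ω) ^ 2 ∂P := rfl
    have e4 : P[fun ω => kdeb K X n (h n) x ω] = A := hEW
    rw [e3, e4] at e2
    rw [e1, hEW]
    have : (∫ ω, (kdeb K X n (h n) x ω) ^ 2 ∂P)
        = variance (fun ω => kdeb K X n (h n) x ω) P + A ^ 2 := by linarith
    rw [this]
    ring
  -- numerical computation with the bandwidth
  have hnh : (n:ℝ) * h n = c * (n:ℝ) ^ ((6:ℝ)/7) := by
    rw [hdef n]
    have e : (n:ℝ) * (n:ℝ) ^ (-(1:ℝ)/7) = (n:ℝ) ^ ((6:ℝ)/7) := by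
      calc (n:ℝ) * (n:ℝ) ^ (-(1:ℝ)/7)
          = (n:ℝ) ^ (1:ℝ) * (n:ℝ) ^ (-(1:ℝ)/7) := by rw [Real.rpow_one]
      _ = (n:ℝ) ^ ((1:ℝ) + -(1:ℝ)/7) := (Real.rpow_add hnpos _ _).symm
      _ = (n:ℝ) ^ ((6:ℝ)/7) := by norm_num
    rw [← e]; ring
  have hr67 : (0:ℝ) < (n:ℝ) ^ ((6:ℝ)/7) := Real.rpow_pos_of_pos hnpos _
  have hrneg : (n:ℝ) ^ (-(6:ℝ)/7) = ((n:ℝ) ^ ((6:ℝ)/7))⁻¹ := by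
    rw [show (-(6:ℝ)/7) = -((6:ℝ)/7) by norm_num, Real.rpow_neg hnpos.le]
  -- variance term bound
  have hvar_bound : variance (fun ω => kdeb K X n (h n) x ω) P
      ≤ Mf * J / c * (n:ℝ) ^ (-(6:ℝ)/7) := by
    have b1 : variance (fun ω => kdeb K X n (h n) x ω) P
        ≤ (1 / (n * h n)) ^ 2 * (n * (h n * (Mf * J))) := by
      rw [hvarW]
      exact mul_le_mul_of_nonneg_left hvarSle (by positivity)
    have hnhne : (n:ℝ) * h n ≠ 0 := by positivity
    have b2 : (1 / ((n:ℝ) * h n)) ^ 2 * (n * (h n * (Mf * J)))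
        = Mf * J / ((n:ℝ) * h n) := by
      field_simp
    have b3 : Mf * J / ((n:ℝ) * h n) = Mf * J / c * (n:ℝ) ^ (-(6:ℝ)/7) := by
      rw [hnh, hrneg]
      field_simp
    rw [b2, b3] at b1
    exact b1
  -- bias term bound
  have hbias_bound : (A - f x) ^ 2 ≤ Cb ^ 2 * c ^ 6 * (n:ℝ) ^ (-(6:ℝ)/7) := by
    have b1 : |A - f x| ≤ Cb * (h n) ^ 3 := hbias (h n) hhn
    have b2 : (A - f x) ^ 2 ≤ (Cb * (h n) ^ 3) ^ 2 := by
      rw [← sq_abs]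
      exact pow_le_pow_left₀ (abs_nonneg _) b1 2
    have b3 : (Cb * (h n) ^ 3) ^ 2 = Cb ^ 2 * ((h n) ^ 2) ^ 3 := by ring
    have b4 : ((n:ℝ) ^ (-(1:ℝ)/7)) ^ (6:ℕ) = (n:ℝ) ^ (-(6:ℝ)/7) := by
      rw [← Real.rpow_natCast ((n:ℝ) ^ (-(1:ℝ)/7)) 6, ← Real.rpow_mul hnpos.le]
      norm_num
    have b5 : (Cb * (h n) ^ 3) ^ 2 = Cb ^ 2 * c ^ 6 * (n:ℝ) ^ (-(6:ℝ)/7) := by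
      rw [hdef n]
      rw [show (Cb * (c * (n:ℝ) ^ (-(1:ℝ)/7)) ^ 3) ^ 2
        = Cb ^ 2 * c ^ 6 * ((n:ℝ) ^ (-(1:ℝ)/7)) ^ (6:ℕ) by ring, b4]
    rw [b5] at b2
    exact b2
  -- put everything together
  have hfinal : (∫ ω, (kdeb K X n (h n) x ω - f x) ^ 2 ∂P)
      ≤ Ct * (n:ℝ) ^ (-(6:ℝ)/7) := by
    rw [hmse, hCt]
    calc variance (fun ω => kdeb K X n (h n) x ω) P + (A - f x) ^ 2
        ≤ Mf * J / c * (n:ℝ) ^ (-(6:ℝ)/7) + Cb ^ 2 * c ^ 6 * (n:ℝ) ^ (-(6:ℝ)/7) :=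
          add_le_add hvar_bound hbias_bound
    _ = (Mf * J / c + Cb ^ 2 * c ^ 6) * (n:ℝ) ^ (-(6:ℝ)/7) := by ring
  have hnn : 0 ≤ ∫ ω, (kdeb K X n (h n) x ω - f x) ^ 2 ∂P :=
    integral_nonneg fun ω => sq_nonneg _
  rw [Real.norm_eq_abs, Real.norm_eq_abs, abs_of_nonneg hnn,
    abs_of_nonneg (Real.rpow_nonneg hnpos.le _)]
  exact hfinal
end

section
/- (Liese–Vajda homogeneity characterization, degree 2.) If the Bregman divergence is homogeneous of degree 2, i.e. D_φ(kp, kq) = k² D_φ(p, q) for all p, q, k > 0, then there exist constants c > 0 and a, b ∈ ℝ such that φ(t) = c t² + a t + b for all t > 0. -/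
/-- Liese–Vajda, degree 2: if the pointwise Bregman divergence
`D_φ(p,q) = φ(p) − φ(q) − (p − q) φ'(q)` of a continuously differentiable,
strictly convex `φ : (0,∞) → ℝ` satisfies `D_φ(kp, kq) = k² D_φ(p,q)` for all
`p, q, k > 0`, then `φ(t) = c t² + a t + b` on `(0,∞)` for some `c > 0`, `a, b ∈ ℝ`. -/
theorem liese_vajda_degree_two (φ φ' : ℝ → ℝ)
    (hderiv : ∀ t ∈ Set.Ioi (0 : ℝ), HasDerivAt φ (φ' t) t)
    (hderivcont : ContinuousOn φ' (Set.Ioi (0 : ℝ)))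
    (hconv : StrictConvexOn ℝ (Set.Ioi (0 : ℝ)) φ)
    (hhom : ∀ p q k : ℝ, 0 < p → 0 < q → 0 < k →
      φ (k * p) - φ (k * q) - (k * p - k * q) * φ' (k * q)
        = k ^ 2 * (φ p - φ q - (p - q) * φ' q)) :
    ∃ c a b : ℝ, 0 < c ∧ ∀ t : ℝ, 0 < t → φ t = c * t ^ 2 + a * t + b := by
  -- Step 1: differentiate the homogeneity relation in `p` at `q = 1`.
  have key : ∀ p k : ℝ, 0 < p → 0 < k →
      φ' (k * p) - φ' k = k * (φ' p - φ' 1) := by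
    intro p k hp hk
    have hkp : (0:ℝ) < k * p := mul_pos hk hp
    -- derivative of the left-hand side (as a function of p)
    have h1 : HasDerivAt (fun x => φ (k * x) - φ (k * 1) - (k * x - k * 1) * φ' (k * 1))
        (φ' (k * p) * k - (k * φ' (k * 1))) p := by
      have hmul : HasDerivAt (fun x : ℝ => k * x) k p := by
        simpa using (hasDerivAt_id p).const_mul k
      have hA : HasDerivAt (fun x => φ (k * x)) (φ' (k * p) * k) p :=
        (hderiv (k * p) hkp).comp p hmul
      have hB : HasDerivAt (fun x : ℝ => (k * x - k * 1) * φ' (k * 1))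
          (k * φ' (k * 1)) p := by
        have hmul2 : HasDerivAt (fun x : ℝ => k * x - k * 1) k p :=
          hmul.sub_const (k * 1)
        simpa using hmul2.mul_const (φ' (k * 1))
      simpa using (hA.sub_const (φ (k * 1))).fun_sub hB
    -- derivative of the right-hand side
    have h2 : HasDerivAt (fun x => k ^ 2 * (φ x - φ 1 - (x - 1) * φ' 1))
        (k ^ 2 * (φ' p - φ' 1)) p := by
      have hC : HasDerivAt (fun x => φ x - φ 1 - (x - 1) * φ' 1) (φ' p - φ' 1) p := by
        have : HasDerivAt (fun x : ℝ => (x - 1) * φ' 1) (φ' 1) p := by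
          simpa using ((hasDerivAt_id p).sub_const 1).mul_const (φ' 1)
        simpa using ((hderiv p hp).sub_const (φ 1)).fun_sub this
      simpa using hC.const_mul (k ^ 2)
    -- the two functions agree near p
    have heq : (fun x => φ (k * x) - φ (k * 1) - (k * x - k * 1) * φ' (k * 1))
        =ᶠ[nhds p] (fun x => k ^ 2 * (φ x - φ 1 - (x - 1) * φ' 1)) := by
      filter_upwards [Ioi_mem_nhds hp] with x hx
      exact hhom x 1 k hx one_pos hk
    have h1' := h1.congr_of_eventuallyEq heq.symm
    have huniq := h2.unique h1'
    have hk' : k ≠ 0 := ne_of_gt hk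
    rw [mul_one] at huniq
    have hgoal : k * (φ' (k * p) - φ' k) = k * (k * (φ' p - φ' 1)) := by
      linear_combination -huniq
    exact mul_left_cancel₀ hk' hgoal
  -- Step 2: φ' is affine
  set c' : ℝ := φ' 2 - φ' 1 with hc'
  have haffine : ∀ t : ℝ, 0 < t → φ' t = c' * t + (φ' 1 - c') := by
    intro t ht
    have e1 := key t 2 ht two_pos
    have e2 := key 2 t two_pos ht
    rw [show t * 2 = 2 * t by ring] at e2
    simp only [hc']
    linarith
  -- Step 3: integrate to get φ quadratic
  set ψ : ℝ → ℝ := fun x => φ x - (c' / 2 * x ^ 2 + (φ' 1 - c') * x) with hψdef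
  have hψ : ∀ x ∈ Set.Ioi (0:ℝ), HasDerivAt ψ 0 x := by
    intro x hx
    have hq : HasDerivAt (fun x : ℝ => c' / 2 * x ^ 2 + (φ' 1 - c') * x)
        (c' / 2 * (2 * x) + (φ' 1 - c')) x := by
      have h1 : HasDerivAt (fun x : ℝ => c' / 2 * x ^ 2) (c' / 2 * (2 * x)) x := by
        simpa using ((hasDerivAt_pow 2 x).const_mul (c' / 2))
      have h2 : HasDerivAt (fun x : ℝ => (φ' 1 - c') * x) (φ' 1 - c') x := by
        simpa using (hasDerivAt_id x).const_mul (φ' 1 - c')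
      exact h1.add h2
    have := (hderiv x hx).fun_sub hq
    have hφ'x := haffine x hx
    refine this.congr_deriv ?_
    rw [hφ'x]; ring
  have hconst : ∀ t ∈ Set.Ioi (0:ℝ), ψ t = ψ 1 := by
    intro t ht
    refine (convex_Ioi (0:ℝ)).is_const_of_fderivWithin_eq_zero
      (fun x hx => (hψ x hx).differentiableAt.differentiableWithinAt) ?_ ht
      (by norm_num : (1:ℝ) ∈ Set.Ioi (0:ℝ))
    intro x hx
    have : fderivWithin ℝ ψ (Set.Ioi (0:ℝ)) x = fderiv ℝ ψ x :=
      fderivWithin_of_isOpen isOpen_Ioi hx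
    rw [this, (hψ x hx).hasFDerivAt.fderiv]
    ext
    simp
  have hform : ∀ t : ℝ, 0 < t →
      φ t = c' / 2 * t ^ 2 + (φ' 1 - c') * t + ψ 1 := by
    intro t ht
    have h0 := hconst t ht
    simp only [hψdef] at h0 ⊢
    norm_num at h0 ⊢
    linarith
  -- Step 4: c' > 0 from strict convexity
  have hcpos : 0 < c' / 2 := by
    have h13 : (1:ℝ) ≠ 3 := by norm_num
    have := hconv.2 (show (1:ℝ) ∈ Set.Ioi 0 by norm_num)
      (show (3:ℝ) ∈ Set.Ioi 0 by norm_num) h13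
      (by norm_num : (0:ℝ) < 1/2) (by norm_num : (0:ℝ) < 1/2) (by norm_num)
    simp only [smul_eq_mul] at this
    have e2 : (1:ℝ)/2 * 1 + 1/2 * 3 = 2 := by norm_num
    rw [e2] at this
    have f1 := hform 1 one_pos
    have f2 := hform 2 two_pos
    have f3 := hform 3 (by norm_num)
    nlinarith [this]
  exact ⟨c' / 2, φ' 1 - c', ψ 1, hcpos, hform⟩
end

section
/- (Liese–Vajda homogeneity characterization, degree 1.) If the Bregman divergence is homogeneous of degree 1, i.e. D_φ(kp, kq) = k D_φ(p, q) for all p, q, k > 0, then there exist constants c > 0 and a, b ∈ ℝ such that φ(t) = c t log t + a t + b for all t > 0. -/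
open Real Set

/-- Liese–Vajda, degree 1: if the pointwise Bregman divergence
`D_φ(p,q) = φ(p) − φ(q) − (p − q) φ'(q)` of a continuously differentiable,
strictly convex `φ : (0,∞) → ℝ` satisfies `D_φ(kp, kq) = k D_φ(p,q)` for all
`p, q, k > 0`, then `φ(t) = c t log t + a t + b` on `(0,∞)` for some `c > 0`,
`a, b ∈ ℝ`. -/
theorem liese_vajda_degree_one (φ φ' : ℝ → ℝ)
    (hderiv : ∀ t ∈ Set.Ioi (0 : ℝ), HasDerivAt φ (φ' t) t)
    (hderivcont : ContinuousOn φ' (Set.Ioi (0 : ℝ)))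
    (hconv : StrictConvexOn ℝ (Set.Ioi (0 : ℝ)) φ)
    (hhom : ∀ p q k : ℝ, 0 < p → 0 < q → 0 < k →
      φ (k * p) - φ (k * q) - (k * p - k * q) * φ' (k * q)
        = k * (φ p - φ q - (p - q) * φ' q)) :
    ∃ c a b : ℝ, 0 < c ∧ ∀ t : ℝ, 0 < t → φ t = c * t * Real.log t + a * t + b := by
  -- Step 1: functional equation for φ'
  have key : ∀ k t : ℝ, 0 < k → 0 < t → φ' (k * t) = φ' k + φ' t - φ' 1 := by
    intro k t hk ht
    set f : ℝ → ℝ := fun p => φ (k * p) - φ k - (k * p - k) * φ' k with hf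
    set g : ℝ → ℝ := fun p => k * (φ p - φ 1 - (p - 1) * φ' 1) with hg
    have heq : ∀ p ∈ Ioi (0:ℝ), f p = g p := by
      intro p hp
      have := hhom p 1 k hp one_pos hk
      simpa [mul_one] using this
    have hdf : HasDerivAt f (k * φ' (k * t) - k * φ' k) t := by
      have h1 : HasDerivAt (fun p : ℝ => φ (k * p)) (φ' (k * t) * k) t := by
        have := (hderiv (k * t) (mem_Ioi.2 (by positivity))).comp t
          ((hasDerivAt_id t).const_mul k)
        exact this.congr_deriv (by simp)
      have h2 : HasDerivAt (fun p : ℝ => (k * p - k) * φ' k) (k * φ' k) t := by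
        have : HasDerivAt (fun p : ℝ => (k * p - k)) k t := by
          simpa using ((hasDerivAt_id t).const_mul k).sub_const k
        simpa using this.mul_const (φ' k)
      have := (h1.sub_const (φ k)).sub h2
      exact this.congr_deriv (by ring)
    have hdg : HasDerivAt g (k * (φ' t - φ' 1)) t := by
      have h1 : HasDerivAt (fun p : ℝ => φ p - φ 1 - (p - 1) * φ' 1) (φ' t - φ' 1) t := by
        have h2 : HasDerivAt (fun p : ℝ => (p - 1) * φ' 1) (φ' 1) t := by
          simpa using ((hasDerivAt_id t).sub_const 1).mul_const (φ' 1)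
        exact ((hderiv t ht).sub_const (φ 1)).sub h2
      simpa using h1.const_mul k
    -- f = g near t, so derivatives agree
    have hev : f =ᶠ[nhds t] g :=
      Filter.eventuallyEq_of_mem (isOpen_Ioi.mem_nhds ht) heq
    have hdf' : HasDerivAt g (k * φ' (k * t) - k * φ' k) t := hdf.congr_of_eventuallyEq hev.symm
    have := hdf'.unique hdg
    have hk' : k ≠ 0 := ne_of_gt hk
    field_simp at this
    nlinarith [this]
  -- Step 2: Cauchy functional equation via exp
  have Gdef : ∀ x y : ℝ, (φ' (Real.exp (x + y)) - φ' 1)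
      = (φ' (Real.exp x) - φ' 1) + (φ' (Real.exp y) - φ' 1) := by
    intro x y
    have := key (Real.exp x) (Real.exp y) (Real.exp_pos x) (Real.exp_pos y)
    rw [← Real.exp_add] at this
    linarith
  set G : ℝ →+ ℝ :=
    { toFun := fun x => φ' (Real.exp x) - φ' 1
      map_zero' := by simp
      map_add' := Gdef }
  have hGcont : Continuous G := by
    have : Continuous fun x : ℝ => φ' (Real.exp x) :=
      hderivcont.comp_continuous Real.continuous_exp fun x => Real.exp_pos x
    exact this.sub continuous_const
  have hGlin : ∀ x : ℝ, G x = x * G 1 := by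
    intro x
    have := map_real_smul G hGcont x 1
    simpa [smul_eq_mul] using this
  set c : ℝ := φ' (Real.exp 1) - φ' 1 with hc
  have hφ' : ∀ t : ℝ, 0 < t → φ' t = c * Real.log t + φ' 1 := by
    intro t ht
    have h1 : G (Real.log t) = Real.log t * G 1 := hGlin (Real.log t)
    have h2 : G (Real.log t) = φ' t - φ' 1 := by
      show φ' (Real.exp (Real.log t)) - φ' 1 = φ' t - φ' 1
      rw [Real.exp_log ht]
    have h3 : G 1 = c := by show φ' (Real.exp 1) - φ' 1 = c; rfl
    rw [h3, h2] at h1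
    linarith [h1]
  -- Step 3: c > 0
  have hcpos : 0 < c := by
    have h1 : (1 : ℝ) < Real.exp 1 := by
      have := Real.exp_one_gt_d9; linarith
    have he : Real.exp 1 ∈ Ioi (0:ℝ) := Real.exp_pos 1
    have h2 := hconv.lt_slope_of_hasDerivAt (mem_Ioi.2 one_pos) he h1
      (hderiv 1 (mem_Ioi.2 one_pos))
    have h3 := hconv.slope_lt_of_hasDerivAt (mem_Ioi.2 one_pos) he h1
      (hderiv (Real.exp 1) he)
    have : φ' 1 < φ' (Real.exp 1) := h2.trans h3
    linarith
  -- Step 4: integrate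
  refine ⟨c, φ' 1 - c, φ 1 - (φ' 1 - c), hcpos, ?_⟩
  set a : ℝ := φ' 1 - c
  set ψ : ℝ → ℝ := fun t => φ t - (c * t * Real.log t + a * t) with hψ
  have hψd : ∀ t : ℝ, 0 < t → HasDerivAt ψ 0 t := by
    intro t ht
    have h1 : HasDerivAt (fun t : ℝ => c * t * Real.log t)
        (c * Real.log t + c) t := by
      have hl : HasDerivAt Real.log t⁻¹ t := Real.hasDerivAt_log (ne_of_gt ht)
      have := ((hasDerivAt_id t).const_mul c).mul hl
      exact this.congr_deriv (by simp [ht.ne'])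
    have h2 : HasDerivAt (fun t : ℝ => c * t * Real.log t + a * t)
        (c * Real.log t + c + a) t := by
      exact (h1.add (((hasDerivAt_id t).const_mul a))).congr_deriv (by simp)
    have := (hderiv t ht).sub h2
    have heq : φ' t - (c * Real.log t + c + a) = 0 := by
      have ha : a = φ' 1 - c := rfl
      rw [hφ' t ht, ha]; ring
    rw [heq] at this
    exact this
  -- ψ is constant on Ioi 0
  have hconst : ∀ t : ℝ, 0 < t → ψ t = ψ 1 := by
    intro t ht
    have hcvx : Convex ℝ (Ioi (0:ℝ)) := convex_Ioi 0
    refine hcvx.is_const_of_fderivWithin_eq_zero (𝕜 := ℝ) (f := ψ) ?_ ?_ (mem_Ioi.2 ht) (mem_Ioi.2 one_pos)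
    · intro x hx
      exact ((hψd x hx).differentiableAt).differentiableWithinAt
    · intro x hx
      rw [fderivWithin_of_isOpen isOpen_Ioi hx, (hψd x hx).hasFDerivAt.fderiv]
      ext; simp
  intro t ht
  have := hconst t ht
  have hψ1 : ψ 1 = φ 1 - a := by simp [hψ]
  have : φ t - (c * t * Real.log t + a * t) = φ 1 - a := by rw [← hψ1]; exact this
  have : φ t = c * t * Real.log t + a * t + (φ 1 - a) := by linarith
  simpa [a] using this
end

section
/- (Liese–Vajda homogeneity characterization, degree 0.) If the Bregman divergence is homogeneous of degree 0, i.e. D_φ(kp, kq) = D_φ(p, q) for all p, q, k > 0, then there exist constants c > 0 and a, b ∈ ℝ such that φ(t) = −c log t + a t + b for all t > 0. -/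
/-- Liese–Vajda, degree 0: if the pointwise Bregman divergence
`D_φ(p,q) = φ(p) − φ(q) − (p − q) φ'(q)` of a continuously differentiable,
strictly convex `φ : (0,∞) → ℝ` satisfies `D_φ(kp, kq) = D_φ(p,q)` for all
`p, q, k > 0`, then `φ(t) = −c log t + a t + b` on `(0,∞)` for some `c > 0`,
`a, b ∈ ℝ`. -/
theorem liese_vajda_degree_zero (φ φ' : ℝ → ℝ)
    (hderiv : ∀ t ∈ Set.Ioi (0 : ℝ), HasDerivAt φ (φ' t) t)
    (hderivcont : ContinuousOn φ' (Set.Ioi (0 : ℝ)))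
    (hconv : StrictConvexOn ℝ (Set.Ioi (0 : ℝ)) φ)
    (hhom : ∀ p q k : ℝ, 0 < p → 0 < q → 0 < k →
      φ (k * p) - φ (k * q) - (k * p - k * q) * φ' (k * q)
        = φ p - φ q - (p - q) * φ' q) :
    ∃ c a b : ℝ, 0 < c ∧ ∀ t : ℝ, 0 < t → φ t = -c * Real.log t + a * t + b := by
  -- Step 1: differentiate the homogeneity relation in p
  have key : ∀ p q k : ℝ, 0 < p → 0 < q → 0 < k →
      k * φ' (k * p) - k * φ' (k * q) = φ' p - φ' q := by
    intro p q k hp hq hk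
    set f : ℝ → ℝ := fun x => φ (k * x) - φ (k * q) - (k * x - k * q) * φ' (k * q)
      - (φ x - φ q - (x - q) * φ' q) with hf
    have hfz : ∀ x ∈ Set.Ioi (0:ℝ), f x = 0 := by
      intro x hx
      simp only [hf]
      rw [hhom x q k hx hq hk]; ring
    have hd : HasDerivAt f
        ((k * φ' (k * p) - k * φ' (k * q)) - (φ' p - φ' q)) p := by
      have hkx : HasDerivAt (fun x : ℝ => k * x) k p := by
        simpa using (hasDerivAt_id p).const_mul k
      have h1 : HasDerivAt (fun x => φ (k * x)) (φ' (k * p) * k) p :=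
        (hderiv (k * p) (Set.mem_Ioi.mpr (mul_pos hk hp))).comp p hkx
      have h2 : HasDerivAt (fun x => (k * x - k * q) * φ' (k * q)) (k * φ' (k * q)) p := by
        have : HasDerivAt (fun x => (k * x - k * q)) k p := by
          simpa using ((hasDerivAt_id p).const_mul k).sub_const (k * q)
        simpa using this.mul_const (φ' (k * q))
      have h3 : HasDerivAt (fun x => (x - q) * φ' q) (φ' q) p := by
        simpa using ((hasDerivAt_id p).sub_const q).mul_const (φ' q)
      have := ((h1.sub_const (φ (k*q))).sub h2).sub (((hderiv p hp).sub_const (φ q)).sub h3)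
      convert this using 1
      · rfl
      · rfl
      · rfl
      ring
    have hzero : HasDerivAt f 0 p := by
      have : f =ᶠ[nhds p] (fun _ => (0:ℝ)) :=
        Filter.eventuallyEq_of_mem (isOpen_Ioi.mem_nhds hp) hfz
      exact (hasDerivAt_const p 0).congr_of_eventuallyEq this
    have := hd.unique hzero
    linarith
  -- Step 2: functional equation for G(t) = t φ'(t) - t φ'(1)
  set G : ℝ → ℝ := fun t => t * φ' t - t * φ' 1 with hG
  have hGmul : ∀ p k : ℝ, 0 < p → 0 < k → G (k * p) = p * G k + G p := by
    intro p k hp hk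
    have h := key p 1 k hp one_pos hk
    rw [mul_one] at h
    have hk' := key k 1 p hk one_pos hp
    rw [mul_one] at hk'
    -- k φ'(kp) - k φ'(k) = φ' p - φ' 1
    simp only [hG]
    nlinarith [h]
  have hGsym : ∀ p k : ℝ, 0 < p → 0 < k → p * G k + G p = k * G p + G k := by
    intro p k hp hk
    have h1 := hGmul p k hp hk
    have h2 := hGmul k p hk hp
    rw [mul_comm k p] at h1
    linarith
  set lam : ℝ := G 2 with hlam
  have hGform : ∀ t : ℝ, 0 < t → G t = lam * (t - 1) := by
    intro t ht
    have := hGsym t 2 ht two_pos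
    simp only [hlam]
    linarith
  -- so φ' t = (φ' 1 + lam) - lam / t
  have hphi' : ∀ t : ℝ, 0 < t → φ' t = (φ' 1 + lam) - lam / t := by
    intro t ht
    have h := hGform t ht
    simp only [hG] at h
    field_simp
    nlinarith
  -- Step 3: lam > 0
  have hmono := hconv.strictMonoOn_deriv (fun x hx => (hderiv x hx).differentiableAt)
  have hderiveq : ∀ t ∈ Set.Ioi (0:ℝ), deriv φ t = φ' t := fun t ht => (hderiv t ht).deriv
  have hlampos : 0 < lam := by
    have h12 : deriv φ 1 < deriv φ 2 := hmono (by norm_num) (by norm_num) one_lt_two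
    rw [hderiveq 1 (by norm_num), hderiveq 2 (by norm_num)] at h12
    rw [hphi' 1 one_pos, hphi' 2 two_pos] at h12
    norm_num at h12
    clear_value G lam
    linarith
  -- Step 4: identify φ
  refine ⟨lam, φ' 1 + lam, φ 1 - (φ' 1 + lam), hlampos, ?_⟩
  intro t ht
  set a : ℝ := φ' 1 + lam
  set h : ℝ → ℝ := fun x => φ x - (-lam * Real.log x + a * x) with hh
  have hhderiv : ∀ x ∈ Set.Ioi (0:ℝ), HasDerivAt h 0 x := by
    intro x hx
    have hx0 : (0:ℝ) < x := hx
    have hlog : HasDerivAt (fun y => -lam * Real.log y + a * y) (-lam * x⁻¹ + a) x := by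
      exact ((Real.hasDerivAt_log hx0.ne').const_mul (-lam)).add
        (by simpa using (hasDerivAt_id x).const_mul a)
    have := (hderiv x hx).sub hlog
    convert this using 1
    · rfl
    · rfl
    · rfl
    rw [hphi' x hx0, div_eq_mul_inv]
    ring
  have hconst : h t = h 1 := by
    rcases lt_trichotomy t 1 with hlt | heq | hgt
    · obtain ⟨c, hc, hc0⟩ := exists_hasDerivAt_eq_slope h (fun _ => 0) hlt
        (fun x hx => (hhderiv x (Set.mem_Ioi.mpr (lt_of_lt_of_le ht hx.1))).continuousAt.continuousWithinAt)
        (fun x hx => hhderiv x (Set.mem_Ioi.mpr (lt_trans ht hx.1)))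
      have hne : (1:ℝ) - t ≠ 0 := by linarith
      have h2 := hc0.symm
      rw [div_eq_iff hne] at h2
      linarith
    · rw [heq]
    · obtain ⟨c, hc, hc0⟩ := exists_hasDerivAt_eq_slope h (fun _ => 0) hgt
        (fun x hx => (hhderiv x (Set.mem_Ioi.mpr (lt_of_lt_of_le one_pos hx.1))).continuousAt.continuousWithinAt)
        (fun x hx => hhderiv x (Set.mem_Ioi.mpr (lt_trans one_pos hx.1)))
      have hne : t - (1:ℝ) ≠ 0 := by linarith
      have h2 := hc0.symm
      rw [div_eq_iff hne] at h2
      linarith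
  simp only [hh] at hconst
  rw [Real.log_one] at hconst
  linarith
end
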